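/- arXiv:1905.05302 — 4 statements merged into one kernel-verified Lean document; each statement's English description precedes it below -/
import Mathlib

section
/- Let (W,S) be a Coxeter system. There exists a unique associative binary operation ⋆ on W such that w ⋆ 1 = w and w ⋆ s = w ∨ ws for all w ∈ W and s ∈ S (where 1 is the identity of W). Explicitly, w ⋆ x is the unique maximal element in the Bruhat order of the set I(w)I(x) = { a b : a ≤ w, b ≤ x }, and moreover I(w)I(x) = I(w ⋆ x) for all w, x ∈ W. -/
variable {B W : Type*} [Group W] {M : CoxeterMatrix B}

/-- The (strong) Bruhat order on the Coxeter group `W`: `u ≤ v` if and only if some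
reduced word for `v` admits a sublist whose product is `u`. -/
def BruhatLE (cs : CoxeterSystem M W) (u v : W) : Prop :=
  ∃ ω : List B, cs.IsReduced ω ∧ cs.wordProd ω = v ∧
    ∃ ω' : List B, ω'.Sublist ω ∧ cs.wordProd ω' = u

/-- The strict Bruhat order. -/
def BruhatLT (cs : CoxeterSystem M W) (u v : W) : Prop :=
  BruhatLE cs u v ∧ u ≠ v

/-- `m` is the unique minimal element of `K` in the Bruhat order, i.e. `m ∈ K` and
`m` is Bruhat-below every element of `K`. -/
def IsBrMin (cs : CoxeterSystem M W) (K : Set W) (m : W) : Prop :=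
  m ∈ K ∧ ∀ x ∈ K, BruhatLE cs m x

/-- `m` is the unique maximal element of `K` in the Bruhat order, i.e. `m ∈ K` and
`m` is Bruhat-above every element of `K`. -/
def IsBrMax (cs : CoxeterSystem M W) (K : Set W) (m : W) : Prop :=
  m ∈ K ∧ ∀ x ∈ K, BruhatLE cs x m

/-- A standard parabolic subgroup: a subgroup generated by a subset of the simple
reflections. -/
def IsStdParabolic (cs : CoxeterSystem M W) (P : Subgroup W) : Prop :=
  ∃ X : Set B, P = Subgroup.closure (cs.simple '' X)

/-- The left coset `u•W₁ = {u * b : b ∈ W₁}`. -/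
def lCoset (W₁ : Subgroup W) (u : W) : Set W := {x | ∃ b ∈ W₁, x = u * b}

/-- The double coset `W₁ u W₂ = {a * u * b : a ∈ W₁, b ∈ W₂}`. -/
def dblCoset (W₁ W₂ : Subgroup W) (u : W) : Set W :=
  {x | ∃ a ∈ W₁, ∃ b ∈ W₂, x = a * u * b}


open List

noncomputable local instance (priority := low) {α : Type*} : DecidableEq α := Classical.decEq α

lemma zmod2_cases (a : ZMod 2) : a = 0 ∨ a = 1 := by revert a; decide

lemma zmod2_add_self (a : ZMod 2) : a + a = 0 := by
  rw [← two_mul, show (2 : ZMod 2) = 0 from rfl, zero_mul]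

lemma zmod2_eq_of_add_eq_zero (a b : ZMod 2) (h : a + b = 0) : a = b := by
  have h2 : a + b + b = b := by rw [h, zero_add]
  rwa [add_assoc, zmod2_add_self, add_zero] at h2

lemma sublist_concat_cases {α : Type*} {l l₂ : List α} {a : α} (h : l <+ l₂ ++ [a]) :
    l <+ l₂ ∨ ∃ l', l = l' ++ [a] ∧ l' <+ l₂ := by
  rw [← List.reverse_sublist] at h
  simp only [List.reverse_append, List.reverse_singleton, List.singleton_append] at h
  rcases List.sublist_cons_iff.mp h with h | ⟨r, hl, hr⟩
  · left; rw [← List.reverse_sublist]; simpa using h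
  · right
    refine ⟨r.reverse, ?_, by rw [← List.reverse_sublist]; simpa using hr⟩
    rw [← List.reverse_reverse l, hl]; simp


section GenericGroup
variable {G : Type*} [Group G]

lemma generic_zpow_semiconj {c b : G} (hcb : b * c = c⁻¹ * b) (m : ℤ) :
    b * c ^ m = c ^ (-m) * b := by
  have h : SemiconjBy b c c⁻¹ := hcb
  have := (h.zpow_right m).eq
  rwa [inv_zpow, ← zpow_neg] at this

lemma generic_semi_iff {c b : G} (hcb : b * c = c⁻¹ * b) (t : G) (n : ℕ) :
    (c * t * c⁻¹ = c ^ (-(n : ℤ)) * b) ↔ (t = c ^ (-((n + 1 + 1 : ℕ) : ℤ)) * b) := by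
  have hcast : (-(n : ℤ) - 1 + -1) = (-((n + 1 + 1 : ℕ) : ℤ)) := by push_cast; ring
  constructor
  · intro h
    have h1 : t = c⁻¹ * (c ^ (-(n : ℤ)) * b) * c := by rw [← h]; group
    have h2 : t = c ^ (-(n : ℤ) - 1) * (b * c ^ (1 : ℤ)) := by rw [h1]; group
    rw [generic_zpow_semiconj hcb 1] at h2
    have h3 : t = c ^ (-(n : ℤ) - 1 + -1) * b := by rw [h2]; group
    rwa [hcast] at h3
  · intro h
    rw [h, ← hcast]
    have h2 : c * (c ^ (-(n : ℤ) - 1 + -1) * b) * c⁻¹ = c ^ (-(n : ℤ) - 1) * (b * c ^ (-1 : ℤ)) := by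
      group
    rw [h2, generic_zpow_semiconj hcb (-1), neg_neg]
    group

end GenericGroup

namespace DemazureAux

variable (cs : CoxeterSystem M W)
local prefix:100 "s" => cs.simple
local prefix:100 "π" => cs.wordProd
local prefix:100 "ℓ" => cs.length
local prefix:100 "ris" => cs.rightInvSeq

lemma conj_simple_eq_iff (i : B) (x y : W) :
    s i * x * s i = y ↔ x = s i * y * s i := by
  constructor
  · intro h
    rw [← h, mul_assoc, mul_assoc, cs.simple_mul_simple_self, mul_one, ← mul_assoc,
      cs.simple_mul_simple_self, one_mul]
  · intro h
    rw [h, mul_assoc, mul_assoc, cs.simple_mul_simple_self, mul_one, ← mul_assoc,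
      cs.simple_mul_simple_self, one_mul]

/-- The basic involution on `W × ZMod 2` attached to a simple reflection. -/
noncomputable def epermFun (i : B) : W × ZMod 2 → W × ZMod 2 :=
  fun p => (s i * p.1 * s i, p.2 + if p.1 = s i then 1 else 0)

lemma epermFun_involutive (i : B) : Function.Involutive (epermFun cs i) := by
  intro ⟨t, ε⟩
  simp only [epermFun, Prod.mk.injEq]
  constructor
  · rw [mul_assoc, mul_assoc, cs.simple_mul_simple_self, mul_one, ← mul_assoc,
      cs.simple_mul_simple_self, one_mul]
  · have e1 : s i * s i * s i = s i := by
      rw [cs.simple_mul_simple_self, one_mul]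
    by_cases h : t = s i
    · subst h
      rw [if_pos rfl]
      show (ε + 1 + if s i * s i * s i = s i then (1 : ZMod 2) else 0) = ε
      rw [if_pos e1, add_assoc, zmod2_add_self, add_zero]
    · have h2 : ¬ (s i * t * s i = s i) := by
        intro hc
        rw [conj_simple_eq_iff, e1] at hc
        exact h hc
      rw [if_neg h]
      show (ε + 0 + if s i * t * s i = s i then (1 : ZMod 2) else 0) = ε
      rw [if_neg h2, add_zero, add_zero]

/-- The permutation of `W × ZMod 2` attached to a simple reflection. -/
noncomputable def eperm (i : B) : Equiv.Perm (W × ZMod 2) := (epermFun_involutive cs i).toPerm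

@[simp] lemma eperm_apply (i : B) (t : W) (ε : ZMod 2) :
    eperm cs i (t, ε) = (s i * t * s i, ε + if t = s i then 1 else 0) := rfl

lemma hsc (i j : B) : s j * (s i * s j) = (s i * s j)⁻¹ * s j := by
  rw [mul_inv_rev, cs.inv_simple, cs.inv_simple, mul_assoc]

lemma hsc' (i j : B) : s j * (s i * s j)⁻¹ = (s i * s j) * s j := by
  rw [mul_inv_rev, cs.inv_simple, cs.inv_simple, cs.simple_mul_simple_cancel_left,
    cs.simple_mul_simple_cancel_right]

lemma eperm_mul_apply (i j : B) (t : W) (ε : ZMod 2) :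
    (eperm cs i * eperm cs j) (t, ε) =
      ((s i * s j) * t * ((s i * s j))⁻¹,
        ε + ((if t = s j then 1 else 0) + if t = (s i * s j)⁻¹ * s j then 1 else 0)) := by
  rw [Equiv.Perm.mul_apply, eperm_apply, eperm_apply]
  have hinv : (s i * s j)⁻¹ = s j * s i := by
    rw [mul_inv_rev, cs.inv_simple, cs.inv_simple]
  simp only [Prod.mk.injEq]
  constructor
  · rw [hinv]; group
  · have hiff : (s j * t * s j = s i) ↔ (t = (s i * s j)⁻¹ * s j) :=
      (conj_simple_eq_iff cs j t (s i)).trans (by rw [hinv])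
    rw [if_congr hiff rfl rfl, add_assoc]

lemma eperm_mul_pow_apply (i j : B) (k : ℕ) (t : W) (ε : ZMod 2) :
    ((eperm cs i * eperm cs j) ^ k) (t, ε) =
      ((s i * s j) ^ k * t * ((s i * s j) ^ k)⁻¹,
        ε + ∑ n ∈ Finset.range (2 * k),
          if t = (s i * s j) ^ (-(n : ℤ)) * s j then 1 else 0) := by
  have hz : ∀ m : ℤ, s j * (s i * s j) ^ m = (s i * s j) ^ (-m) * s j := by
    have h : SemiconjBy (s j) (s i * s j) (s i * s j)⁻¹ := by
      show s j * (s i * s j) = (s i * s j)⁻¹ * s j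
      rw [mul_inv_rev, cs.inv_simple, cs.inv_simple, mul_assoc]
    intro m
    have := (h.zpow_right m).eq
    rwa [inv_zpow, ← zpow_neg] at this
  induction k generalizing t ε with
  | zero => simp
  | succ k ih =>
    rw [pow_succ, Equiv.Perm.mul_apply, eperm_mul_apply, ih]
    have hcb : s j * (s i * s j) = (s i * s j)⁻¹ * s j := by
      rw [mul_inv_rev, cs.inv_simple, cs.inv_simple, mul_assoc]
    have hsemi : ∀ n : ℕ,
        ((s i * s j) * t * (s i * s j)⁻¹ = (s i * s j) ^ (-(n : ℤ)) * s j)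
          ↔ (t = (s i * s j) ^ (-((n + 1 + 1 : ℕ) : ℤ)) * s j) :=
      fun n => generic_semi_iff hcb t n
    simp only [Prod.mk.injEq]
    constructor
    · rw [pow_succ]; group
    · rw [Finset.sum_congr rfl (fun n _ => if_congr (hsemi n) rfl rfl)]
      have hsplit : 2 * (k + 1) = 2 * k + 1 + 1 := by ring
      rw [hsplit, Finset.sum_range_succ', Finset.sum_range_succ']
      simp only [Nat.cast_zero, neg_zero, zpow_zero, one_mul, Nat.cast_one, zpow_neg,
        zpow_natCast, pow_one, zpow_one]
      norm_num
      ring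

lemma eperm_liftable :
    CoxeterMatrix.IsLiftable M (fun i => (eperm cs i : Equiv.Perm (W × ZMod 2))) := by
  intro i j
  ext ⟨t, ε⟩ : 1
  rw [eperm_mul_pow_apply, Equiv.Perm.one_apply]
  have h1 : (s i * s j) ^ (M i j) = 1 := cs.simple_mul_simple_pow i j
  simp only [Prod.mk.injEq]
  constructor
  · rw [h1]; group
  · have h2 : ∀ n : ℕ, (if t = (s i * s j) ^ (-((M i j + n : ℕ) : ℤ)) * s j then (1 : ZMod 2) else 0)
        = if t = (s i * s j) ^ (-(n : ℤ)) * s j then 1 else 0 := by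
      intro n
      have : (s i * s j) ^ (-((M i j + n : ℕ) : ℤ)) = (s i * s j) ^ (-(n : ℤ)) := by
        rw [zpow_neg, zpow_neg, zpow_natCast, zpow_natCast, pow_add, h1, one_mul]
      rw [this]
    rw [two_mul, Finset.sum_range_add]
    rw [Finset.sum_congr rfl (fun n _ => h2 n)]
    rw [zmod2_add_self, add_zero]

/-- The reflection-parity representation of `W` on `W × ZMod 2`. -/
noncomputable def phi : W →* Equiv.Perm (W × ZMod 2) :=
  cs.lift ⟨fun i => eperm cs i, eperm_liftable cs⟩

@[simp] lemma phi_simple (i : B) : phi cs (s i) = eperm cs i :=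
  cs.lift_apply_simple (eperm_liftable cs) i

lemma phi_wordProd (ω : List B) (t : W) (ε : ZMod 2) :
    phi cs (π ω) (t, ε) =
      ((π ω) * t * (π ω)⁻¹, ε + ((ris ω).count t : ZMod 2)) := by
  induction ω generalizing ε with
  | nil => simp
  | cons i ω ih =>
    rw [cs.wordProd_cons, map_mul, Equiv.Perm.mul_apply, ih, phi_simple, eperm_apply]
    have hris : ris (i :: ω) = ((π ω)⁻¹ * s i * (π ω)) :: ris ω := rfl
    simp only [Prod.mk.injEq]
    constructor
    · rw [mul_inv_rev, cs.inv_simple]; group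
    · rw [hris]
      simp only [List.count_cons, beq_iff_eq]
      have hcond : ((π ω) * t * (π ω)⁻¹ = s i) ↔ ((π ω)⁻¹ * s i * π ω = t) := by
        constructor
        · intro h; rw [← h]; group
        · intro h; rw [← h]; group
      by_cases h : (π ω)⁻¹ * s i * π ω = t
      · rw [if_pos (hcond.mpr h), if_pos h]; push_cast; ring
      · rw [if_neg (fun hc => h (hcond.mp hc)), if_neg h]; push_cast; ring

/-- The parity of the number of times `t` occurs in the right inversion sequence
of any word for `w`. -/
noncomputable def eta (w t : W) : ZMod 2 := (phi cs w (t, 0)).2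

lemma phi_apply (w t : W) (ε : ZMod 2) :
    phi cs w (t, ε) = (w * t * w⁻¹, ε + eta cs w t) := by
  obtain ⟨ω, rfl⟩ := cs.wordProd_surjective w
  rw [phi_wordProd, eta, phi_wordProd]
  simp

lemma eta_eq_count (ω : List B) (t : W) : eta cs (π ω) t = ((ris ω).count t : ZMod 2) := by
  rw [eta, phi_wordProd, zero_add]

lemma eta_inv_conj (w r : W) : eta cs w⁻¹ (w * r * w⁻¹) = eta cs w r := by
  have h : phi cs w (phi cs w⁻¹ (w * r * w⁻¹, 0)) = (w * r * w⁻¹, 0) := by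
    rw [← Equiv.Perm.mul_apply, ← map_mul, mul_inv_cancel, map_one, Equiv.Perm.one_apply]
  rw [phi_apply, phi_apply] at h
  have h1 : w⁻¹ * (w * r * w⁻¹) * w⁻¹⁻¹ = r := by group
  rw [h1] at h
  have h3 := ((Prod.mk.injEq _ _ _ _).mp h).2
  rw [zero_add] at h3
  exact zmod2_eq_of_add_eq_zero _ _ h3

lemma eta_self (t : W) (ht : cs.IsReflection t) : eta cs t t = 1 := by
  obtain ⟨u, i, rfl⟩ := ht
  have e1 : s i * s i * s i = s i := by rw [cs.simple_mul_simple_self, one_mul]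
  have h2 : u⁻¹ * (u * s i * u⁻¹) * u⁻¹⁻¹ = s i := by group
  have key : phi cs (u * s i * u⁻¹) (u * s i * u⁻¹, 0)
      = (u * s i * u⁻¹, 0 + eta cs u (s i) + 1 + eta cs u (s i)) := by
    have h1 : phi cs (u * s i * u⁻¹) (u * s i * u⁻¹, 0)
        = phi cs u (phi cs (s i) (phi cs u⁻¹ (u * s i * u⁻¹, 0))) := by
      rw [← Equiv.Perm.mul_apply, ← Equiv.Perm.mul_apply, ← map_mul, ← map_mul]
    rw [h1, phi_apply cs u⁻¹, h2, eta_inv_conj, phi_simple, eperm_apply, if_pos rfl, e1,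
      phi_apply]
  rw [eta, key]
  show (0 : ZMod 2) + eta cs u (s i) + 1 + eta cs u (s i) = 1
  rw [zero_add, add_right_comm, zmod2_add_self, zero_add]

lemma eta_mul_reflection (w t : W) (ht : cs.IsReflection t) :
    eta cs (w * t) t = eta cs w t + 1 := by
  have h1 : phi cs (w * t) (t, 0) = phi cs w (phi cs t (t, 0)) := by
    rw [← Equiv.Perm.mul_apply, ← map_mul]
  have h2 : phi cs t (t, 0) = (t, 1) := by
    rw [phi_apply]
    congr 1
    · rw [ht.inv, mul_assoc, ht.mul_self, mul_one]
    · rw [zero_add, eta_self cs t ht]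
  rw [eta, h1, h2, phi_apply]
  show (1 : ZMod 2) + eta cs w t = eta cs w t + 1
  rw [add_comm]

lemma eta_eq_one_of_descent (w t : W) (ht : cs.IsReflection t)
    (hlt : ℓ (w * t) < ℓ w) : eta cs w t = 1 := by
  by_contra h
  rcases zmod2_cases (eta cs w t) with h0 | h1
  · -- then eta (w*t) t = 1, so length goes down from w*t, contradiction
    have h2 : eta cs (w * t) t = 1 := by rw [eta_mul_reflection cs w t ht, h0, zero_add]
    -- from eta = 1, for reduced word of w*t we get a deletion, so ℓ(w*t*t) < ℓ(w*t)
    obtain ⟨ω, hlen, hprod⟩ := cs.exists_reduced_word (w * t)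
    have hcount : ((ris ω).count t : ZMod 2) = 1 := by
      rw [← eta_eq_count, ← hprod, h2]
    have hmem : t ∈ ris ω := by
      by_contra hmem
      rw [List.count_eq_zero_of_not_mem hmem] at hcount
      simp at hcount
    obtain ⟨n, hn, hget⟩ := List.getElem_of_mem hmem
    rw [cs.length_rightInvSeq] at hn
    have hgetD : (ris ω).getD n 1 = t := by
      rw [List.getD_eq_getElem _ _ (by rw [cs.length_rightInvSeq]; exact hn)]
      exact hget
    have h3 : π ω * t = π (ω.eraseIdx n) := by
      rw [← hgetD]
      exact cs.wordProd_mul_getD_rightInvSeq ω n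
    have h4 : w * t * t = π (ω.eraseIdx n) := by rw [← hprod] at h3; exact h3
    have h5 : w = π (ω.eraseIdx n) := by
      rw [← h4, mul_assoc, ht.mul_self, mul_one]
    have h6 : ℓ w ≤ (ω.eraseIdx n).length := h5 ▸ cs.length_wordProd_le _
    have h7 : (ω.eraseIdx n).length = ω.length - 1 := by
      rw [List.length_eraseIdx]
      simp [hn]
    have hl2 : ℓ (w * t) = ω.length := by rw [hprod]; exact hlen
    have hl3 := cs.length_rightInvSeq ω
    omega
  · exact h h1

/-- Strong exchange property. -/
lemma strong_exchange (w t : W) (ht : cs.IsReflection t) (hlt : ℓ (w * t) < ℓ w)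
    (ω : List B) (hω : π ω = w) :
    ∃ n < ω.length, π (ω.eraseIdx n) = w * t := by
  have h1 : eta cs w t = 1 := eta_eq_one_of_descent cs w t ht hlt
  have hcount : ((ris ω).count t : ZMod 2) = 1 := by rw [← eta_eq_count, hω, h1]
  have hmem : t ∈ ris ω := by
    by_contra hmem
    rw [List.count_eq_zero_of_not_mem hmem] at hcount
    simp at hcount
  obtain ⟨n, hn, hget⟩ := List.getElem_of_mem hmem
  rw [cs.length_rightInvSeq] at hn
  refine ⟨n, hn, ?_⟩
  have hgetD : (ris ω).getD n 1 = t := by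
    rw [List.getD_eq_getElem _ _ (by rw [cs.length_rightInvSeq]; exact hn)]
    exact hget
  rw [← hω, ← hgetD]
  exact (cs.wordProd_mul_getD_rightInvSeq ω n).symm

end DemazureAux

namespace DemazureAux2
open DemazureAux
variable {B W : Type*} [Group W] {M : CoxeterMatrix B} (cs : CoxeterSystem M W)
local prefix:100 "s" => cs.simple
local prefix:100 "π" => cs.wordProd
local prefix:100 "ℓ" => cs.length

lemma isReduced_nil : cs.IsReduced ([] : List B) := by
  simp [CoxeterSystem.IsReduced]

/-- Deletion property: every word has a reduced sublist with the same product. -/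
lemma deletion_aux : ∀ n, ∀ ω : List B, ω.length ≤ n →
    ∃ ω', ω' <+ ω ∧ cs.IsReduced ω' ∧ π ω' = π ω := by
  intro n
  induction n with
  | zero =>
    intro ω hω
    have h0 : ω = [] := List.eq_nil_of_length_eq_zero (by omega)
    subst h0
    exact ⟨[], List.Sublist.refl _, isReduced_nil cs, rfl⟩
  | succ n ih =>
    intro ω hω
    by_cases hred : cs.IsReduced ω
    · exact ⟨ω, List.Sublist.refl _, hred, rfl⟩
    · have hex : ∃ k, ¬ cs.IsReduced (ω.take k) := ⟨ω.length, by rwa [List.take_length]⟩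
      have dp : DecidablePred (fun k => ¬ cs.IsReduced (ω.take k)) := fun _ => Classical.dec _
      obtain ⟨k₀, hk₀, hmin⟩ : ∃ k₀, ¬cs.IsReduced (ω.take k₀) ∧
          ∀ m, m < k₀ → cs.IsReduced (ω.take m) :=
        ⟨@Nat.find _ dp hex, @Nat.find_spec _ dp hex,
          fun m hm => not_not.mp (@Nat.find_min _ dp hex m hm)⟩
      have hk₀pos : k₀ ≠ 0 := by
        intro h0
        rw [h0, List.take_zero] at hk₀
        exact hk₀ (isReduced_nil cs)
      obtain ⟨k, rfl⟩ : ∃ k, k₀ = k + 1 := ⟨k₀ - 1, by omega⟩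
      have hk : cs.IsReduced (ω.take k) := hmin k (by omega)
      have hkl : k < ω.length := by
        by_contra h
        push_neg at h
        rw [List.take_of_length_le h] at hk
        exact hred hk
      have e : ω.take (k + 1) = ω.take k ++ [ω[k]] := by
        rw [List.take_succ, List.getElem?_eq_getElem hkl]
        rfl
      have hxlen : ℓ (π (ω.take k)) = k := by
        have := hk
        rw [CoxeterSystem.IsReduced] at this
        rw [this, List.length_take]
        omega
      have hdesc : ℓ (π (ω.take k) * s (ω[k])) < ℓ (π (ω.take k)) := by
        rcases cs.length_mul_simple (π (ω.take k)) (ω[k]) with hup | hdown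
        · exfalso
          apply hk₀
          rw [CoxeterSystem.IsReduced, e, cs.wordProd_append, cs.wordProd_singleton, hup,
            hxlen, List.length_append, List.length_take]
          simp
          omega
        · omega
      obtain ⟨m, hm, hprod⟩ := strong_exchange cs (π (ω.take k)) (s (ω[k]))
        (cs.isReflection_simple _) hdesc (ω.take k) rfl
      set ρ := (ω.take k).eraseIdx m ++ ω.drop (k + 1) with hρdef
      have hρπ : π ρ = π ω := by
        rw [hρdef, cs.wordProd_append, hprod]
        conv_rhs => rw [← List.take_append_drop (k + 1) ω]
        rw [cs.wordProd_append, e, cs.wordProd_append, cs.wordProd_singleton]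
      have hρsub : ρ <+ ω := by
        rw [hρdef]
        conv_rhs => rw [← List.take_append_drop (k + 1) ω]
        apply List.Sublist.append _ (List.Sublist.refl _)
        calc (ω.take k).eraseIdx m <+ ω.take k := List.eraseIdx_sublist _ _
          _ <+ ω.take (k + 1) := by rw [e]; exact List.sublist_append_left _ _
      have hρlen : ρ.length ≤ n := by
        rw [hρdef, List.length_append, List.length_eraseIdx]
        have h1 : m < (ω.take k).length := by
          rw [List.length_take] at hm ⊢
          omega
        rw [if_pos h1, List.length_take, List.length_drop]
        omega
      obtain ⟨ω', h1, h2, h3⟩ := ih ρ hρlen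
      exact ⟨ω', h1.trans hρsub, h2, by rw [h3, hρπ]⟩

lemma deletion (ω : List B) : ∃ ω', ω' <+ ω ∧ cs.IsReduced ω' ∧ π ω' = π ω :=
  deletion_aux cs ω.length ω le_rfl

/-- The chain ("reflection subword") order. -/
def chle (u w : W) : Prop :=
  Relation.ReflTransGen (fun x y => (∃ t, cs.IsReflection t ∧ x = y * t) ∧ ℓ x < ℓ y) u w

lemma chle_refl (w : W) : chle cs w w := Relation.ReflTransGen.refl

lemma chle_trans {u v w : W} (h1 : chle cs u v) (h2 : chle cs v w) : chle cs u w :=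
  Relation.ReflTransGen.trans h1 h2

lemma chle_step {u w : W} (t : W) (ht : cs.IsReflection t) (hu : u = w * t)
    (hlen : ℓ u < ℓ w) : chle cs u w :=
  Relation.ReflTransGen.single ⟨⟨t, ht, hu⟩, hlen⟩

lemma chle_simple_step {w : W} (i : B) (hlen : ℓ (w * s i) < ℓ w) : chle cs (w * s i) w :=
  chle_step cs (s i) (cs.isReflection_simple i) rfl hlen

lemma chle_simple_step' {w : W} (i : B) (hlen : ℓ w < ℓ (w * s i)) : chle cs w (w * s i) := by
  apply chle_step cs (s i) (cs.isReflection_simple i) _ hlen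
  rw [mul_assoc, cs.simple_mul_simple_self, mul_one]

/-- Any chain-below element is a reduced subword of every reduced word. -/
lemma chle_subword {v w : W} (h : chle cs v w) :
    ∀ τ : List B, cs.IsReduced τ → π τ = w →
      ∃ τ', τ' <+ τ ∧ cs.IsReduced τ' ∧ π τ' = v := by
  induction h with
  | refl => exact fun τ hτ hπ => ⟨τ, List.Sublist.refl _, hτ, hπ⟩
  | @tail b c hsub hstep ih =>
    intro τ hτ hπ
    obtain ⟨⟨t, ht, hbt⟩, hlen⟩ := hstep
    rw [hbt] at hlen
    obtain ⟨m, hm, hprod⟩ := strong_exchange cs c t ht hlen τ hπ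
    obtain ⟨ρ, hρsub, hρred, hρπ⟩ := deletion cs (τ.eraseIdx m)
    obtain ⟨τ', h1, h2, h3⟩ := ih ρ hρred (by rw [hρπ, hprod, ← hbt])
    exact ⟨τ', h1.trans (hρsub.trans (List.eraseIdx_sublist _ _)), h2, h3⟩

end DemazureAux2

namespace DemazureAux3
open DemazureAux DemazureAux2
variable {B W : Type*} [Group W] {M : CoxeterMatrix B} (cs : CoxeterSystem M W)
local prefix:100 "s" => cs.simple
local prefix:100 "π" => cs.wordProd
local prefix:100 "ℓ" => cs.length

lemma grand : ∀ n : ℕ,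
    (∀ ω : List B, cs.IsReduced ω → ω.length ≤ n → ∀ ω', ω' <+ ω →
      chle cs (π ω') (π ω))
    ∧ (∀ z : W, ℓ z ≤ n → ∀ i : B, ℓ z < ℓ (z * s i) → ∀ v, chle cs v z →
        chle cs (v * s i) (z * s i))
    ∧ (∀ z : W, ℓ z ≤ n → ∀ i : B, ℓ z < ℓ (z * s i) → ∀ v, chle cs v (z * s i) →
        chle cs v z ∨ chle cs (v * s i) z) := by
  intro n
  induction n using Nat.strong_induction_on with
  | _ n ih =>
  have hE : ∀ ω : List B, cs.IsReduced ω → ω.length ≤ n → ∀ ω', ω' <+ ω →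
      chle cs (π ω') (π ω) := by
    intro ω hred hlen ω' hsub
    rcases List.eq_nil_or_concat ω with rfl | ⟨κ, i, rfl⟩
    · rw [List.sublist_nil.mp hsub]
      exact chle_refl cs _
    · rw [List.concat_eq_append] at hsub hred hlen ⊢
      have hκred : cs.IsReduced κ := by
        have h := hred.take κ.length
        rwa [List.take_left] at h
      have hlenκ : κ.length + 1 ≤ n := by
        rw [List.length_append, List.length_singleton] at hlen
        omega
      have hzlen : ℓ (π κ) = κ.length := hκred
      have heq : π (κ ++ [i]) = π κ * s i := by
        rw [cs.wordProd_append, cs.wordProd_singleton]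
      have hplen : ℓ (π κ * s i) = κ.length + 1 := by
        rw [← heq]
        have := hred
        rw [CoxeterSystem.IsReduced] at this
        rw [this, List.length_append, List.length_singleton]
      have hasc : ℓ (π κ) < ℓ (π κ * s i) := by omega
      obtain ⟨ihE, iha, ihb⟩ := ih (n - 1) (by omega)
      rcases sublist_concat_cases hsub with h | ⟨κ', rfl, hκ'⟩
      · have h1 := ihE κ hκred (by omega) ω' h
        rw [heq]
        exact chle_trans cs h1 (chle_simple_step' cs i hasc)
      · have h1 := ihE κ hκred (by omega) κ' hκ'
        have h2 := iha (π κ) (by omega) i hasc (π κ') h1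
        rw [heq, cs.wordProd_append, cs.wordProd_singleton]
        exact h2
  have ha : ∀ z : W, ℓ z ≤ n → ∀ i : B, ℓ z < ℓ (z * s i) → ∀ v, chle cs v z →
      chle cs (v * s i) (z * s i) := by
    intro z hz i hasc v hv
    rcases Relation.ReflTransGen.cases_tail hv with hvz | ⟨x, hvx, hstep⟩
    · subst hvz
      exact chle_refl cs _
    · obtain ⟨⟨t, ht, hxz⟩, hxlen⟩ := hstep
      obtain ⟨ihE, iha, ihb⟩ := ih (n - 1) (by omega)
      have hxx : (x * s i) * s i = x := cs.simple_mul_simple_cancel_right i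
      have hupper : chle cs z (z * s i) := chle_simple_step' cs i hasc
      have hxz' : chle cs x z := chle_step cs t ht hxz hxlen
      by_cases hxi : ℓ x < ℓ (x * s i)
      · have h1 := iha x (by omega) i hxi v hvx
        refine chle_trans cs h1 (chle_step cs (s i * t * s i) ?_ ?_ ?_)
        · have := ht.conj (s i)
          rwa [cs.inv_simple] at this
        · symm
          calc z * s i * (s i * t * s i) = z * (s i * (s i * (t * s i))) := by group
            _ = z * (t * s i) := by rw [cs.simple_mul_simple_cancel_left]
            _ = x * s i := by rw [hxz]; group
        · calc ℓ (x * s i) ≤ ℓ x + ℓ (s i) := cs.length_mul_le x (s i)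
            _ = ℓ x + 1 := by rw [cs.length_simple]
            _ ≤ ℓ z := by omega
            _ < ℓ (z * s i) := hasc
      · have hxid : ℓ (x * s i) < ℓ x := by
          have := cs.length_mul_simple_ne x i
          omega
        have hxiasc : ℓ (x * s i) < ℓ ((x * s i) * s i) := by rw [hxx]; exact hxid
        have hchain : chle cs (x * s i) (z * s i) :=
          chle_trans cs (chle_simple_step cs i hxid) (chle_trans cs hxz' hupper)
        have hbres := ihb (x * s i) (by omega) i hxiasc v (by rw [hxx]; exact hvx)
        rcases hbres with hb1 | hb1
        · by_cases hvi : ℓ (v * s i) < ℓ v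
          · exact chle_trans cs (chle_simple_step cs i hvi)
              (chle_trans cs hb1 hchain)
          · have hvasc : ℓ v < ℓ (v * s i) := by
              have := cs.length_mul_simple_ne v i
              omega
            have h2 := iha (x * s i) (by omega) i hxiasc v hb1
            rw [hxx] at h2
            exact chle_trans cs h2 (chle_trans cs hxz' hupper)
        · exact chle_trans cs hb1 hchain
  have hbmain : ∀ z : W, ℓ z ≤ n → ∀ i : B, ℓ z < ℓ (z * s i) → ∀ v, chle cs v (z * s i) →
      chle cs v z ∨ chle cs (v * s i) z := by
    intro z hz i hasc v hv
    obtain ⟨κ, hκred, hκπ⟩ := cs.exists_reduced_word' z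
    have hκlen : κ.length = ℓ z := by
      have := hκred
      rw [CoxeterSystem.IsReduced] at this
      rw [← this, ← hκπ]
    have hτπ : π (κ ++ [i]) = z * s i := by
      rw [cs.wordProd_append, cs.wordProd_singleton, ← hκπ]
    have hτred : cs.IsReduced (κ ++ [i]) := by
      rw [CoxeterSystem.IsReduced, hτπ, List.length_append, List.length_singleton]
      have := cs.length_mul_simple z i
      omega
    obtain ⟨τ', hτ'sub, hτ'red, hτ'π⟩ := chle_subword cs hv (κ ++ [i]) hτred hτπ
    rcases sublist_concat_cases hτ'sub with h | ⟨κ', rfl, hκ'⟩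
    · left
      have h1 := hE κ hκred (by omega) τ' h
      rw [hτ'π, ← hκπ] at h1
      exact h1
    · right
      have h1 := hE κ hκred (by omega) κ' hκ'
      have h2 : v * s i = π κ' := by
        rw [← hτ'π, cs.wordProd_append, cs.wordProd_singleton,
          cs.simple_mul_simple_cancel_right]
      rw [← hκπ] at h1
      rw [h2]
      exact h1
  exact ⟨hE, ha, hbmain⟩

end DemazureAux3

namespace DemazureAux4
open DemazureAux DemazureAux2 DemazureAux3
variable {B W : Type*} [Group W] {M : CoxeterMatrix B} (cs : CoxeterSystem M W)
local prefix:100 "s" => cs.simple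
local prefix:100 "π" => cs.wordProd
local prefix:100 "ℓ" => cs.length

lemma brle_iff_chle (u w : W) : BruhatLE cs u w ↔ chle cs u w := by
  constructor
  · rintro ⟨ω, hred, hπ, ω', hsub, hπ'⟩
    have h := (grand cs ω.length).1 ω hred le_rfl ω' hsub
    rwa [hπ, hπ'] at h
  · intro h
    obtain ⟨τ, hτred, hτπ⟩ := cs.exists_reduced_word' w
    obtain ⟨τ', hsub, hred', hπ'⟩ := chle_subword cs h τ hτred hτπ.symm
    exact ⟨τ, hτred, hτπ.symm, τ', hsub, hπ'⟩

lemma brle_refl (w : W) : BruhatLE cs w w := by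
  obtain ⟨τ, hτred, hτπ⟩ := cs.exists_reduced_word' w
  exact ⟨τ, hτred, hτπ.symm, τ, List.Sublist.refl _, hτπ.symm⟩

lemma brle_one (w : W) : BruhatLE cs 1 w := by
  obtain ⟨τ, hτred, hτπ⟩ := cs.exists_reduced_word' w
  exact ⟨τ, hτred, hτπ.symm, [], List.nil_sublist _, cs.wordProd_nil⟩

lemma brle_trans {u v w : W} (h1 : BruhatLE cs u v) (h2 : BruhatLE cs v w) :
    BruhatLE cs u w := by
  rw [brle_iff_chle] at h1 h2 ⊢
  exact chle_trans cs h1 h2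

lemma brle_length_le {u w : W} (h : BruhatLE cs u w) : ℓ u ≤ ℓ w := by
  obtain ⟨ω, hred, hπ, ω', hsub, hπ'⟩ := h
  calc ℓ u = ℓ (π ω') := by rw [hπ']
    _ ≤ ω'.length := cs.length_wordProd_le ω'
    _ ≤ ω.length := hsub.length_le
    _ = ℓ w := by rw [CoxeterSystem.IsReduced] at hred; rw [← hred, hπ]

lemma brle_antisymm {u w : W} (h1 : BruhatLE cs u w) (h2 : BruhatLE cs w u) : u = w := by
  obtain ⟨ω, hred, hπ, ω', hsub, hπ'⟩ := h1
  have hlen : ω'.length = ω.length := by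
    have e1 : ℓ u ≤ ω'.length := by rw [← hπ']; exact cs.length_wordProd_le ω'
    have e2 : ω.length = ℓ w := by rw [CoxeterSystem.IsReduced] at hred; rw [← hred, hπ]
    have e3 := brle_length_le cs h2
    have e4 := hsub.length_le
    omega
  rw [← hπ', ← hπ, hsub.eq_of_length hlen]

lemma brle_up {u w : W} {i : B} (hasc : ℓ w < ℓ (w * s i)) (h : BruhatLE cs u w) :
    BruhatLE cs u (w * s i) := by
  rw [brle_iff_chle] at h ⊢
  exact chle_trans cs h (chle_simple_step' cs i hasc)

lemma brle_lift {u w : W} {i : B} (hasc : ℓ w < ℓ (w * s i)) (h : BruhatLE cs u w) :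
    BruhatLE cs (u * s i) (w * s i) := by
  rw [brle_iff_chle] at h ⊢
  exact (grand cs (ℓ w)).2.1 w le_rfl i hasc u h

lemma brle_propZ {v w : W} {i : B} (hasc : ℓ w < ℓ (w * s i))
    (h : BruhatLE cs v (w * s i)) : BruhatLE cs v w ∨ BruhatLE cs (v * s i) w := by
  rw [brle_iff_chle] at h
  rcases (grand cs (ℓ w)).2.2 w le_rfl i hasc v h with h1 | h1
  · left; rwa [brle_iff_chle]
  · right; rwa [brle_iff_chle]

lemma brle_desc_step {v : W} {i : B} (hdesc : ℓ (v * s i) < ℓ v) :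
    BruhatLE cs (v * s i) v := by
  rw [brle_iff_chle]
  exact chle_simple_step cs i hdesc

lemma brle_le_one {b : W} (h : BruhatLE cs b 1) : b = 1 := by
  obtain ⟨ω, hred, hπ, ω', hsub, hπ'⟩ := h
  have h0 : ω.length = 0 := by
    rw [CoxeterSystem.IsReduced] at hred
    rw [← hred, hπ, cs.length_one]
  have : ω = [] := List.eq_nil_of_length_eq_zero h0
  subst this
  rw [← hπ', List.sublist_nil.mp hsub, cs.wordProd_nil]

lemma brle_le_simple {b : W} {i : B} (h : BruhatLE cs b (s i)) : b = 1 ∨ b = s i := by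
  obtain ⟨ω, hred, hπ, ω', hsub, hπ'⟩ := h
  have h1 : ω.length = 1 := by
    rw [CoxeterSystem.IsReduced] at hred
    rw [← hred, hπ, cs.length_simple]
  obtain ⟨j, rfl⟩ := List.length_eq_one_iff.mp h1
  rcases List.sublist_singleton.mp hsub with rfl | rfl
  · left; rw [← hπ', cs.wordProd_nil]
  · right; rw [← hπ', hπ]

/-- The one-step Demazure product: `w ∨ ws`. -/
noncomputable def dsimple (g : W) (i : B) : W :=
  if ℓ (g * s i) ≤ ℓ g then g else g * s i

lemma dsimple_cases (g : W) (i : B) : dsimple cs g i = g ∨ dsimple cs g i = g * s i := by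
  rw [dsimple]
  split <;> simp

lemma Astar (g : W) (i : B) (y : W) :
    BruhatLE cs y (dsimple cs g i) ↔
      (BruhatLE cs y g ∨ ∃ u, BruhatLE cs u g ∧ y = u * s i) := by
  by_cases hd : ℓ (g * s i) ≤ ℓ g
  · have hdesc : ℓ (g * s i) < ℓ g := by
      have := cs.length_mul_simple_ne g i
      omega
    rw [dsimple, if_pos hd]
    constructor
    · exact fun h => Or.inl h
    · rintro (h | ⟨u, hu, rfl⟩)
      · exact h
      · have hg' : (g * s i) * s i = g := cs.simple_mul_simple_cancel_right i
        have hasc' : ℓ (g * s i) < ℓ ((g * s i) * s i) := by rw [hg']; exact hdesc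
        have h2 : BruhatLE cs u ((g * s i) * s i) := by rw [hg']; exact hu
        have hup : BruhatLE cs (g * s i) g := brle_desc_step cs hdesc
        rcases brle_propZ cs hasc' h2 with h3 | h3
        · by_cases hui : ℓ (u * s i) < ℓ u
          · exact brle_trans cs (brle_desc_step cs hui) (brle_trans cs h3 hup)
          · have huasc : ℓ u < ℓ (u * s i) := by
              have := cs.length_mul_simple_ne u i
              omega
            have h4 := brle_lift cs hasc' h3
            rw [hg'] at h4
            exact h4
        · exact brle_trans cs h3 hup
  · have hasc : ℓ g < ℓ (g * s i) := by omega
    rw [dsimple, if_neg hd]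
    constructor
    · intro h
      rcases brle_propZ cs hasc h with h1 | h1
      · exact Or.inl h1
      · right
        refine ⟨y * s i, h1, ?_⟩
        rw [cs.simple_mul_simple_cancel_right]
    · rintro (h | ⟨u, hu, rfl⟩)
      · exact brle_up cs hasc h
      · exact brle_lift cs hasc hu

/-- The product set `I(w)I(x)`. -/
def Kset (w x : W) : Set W :=
  {y | ∃ a, BruhatLE cs a w ∧ ∃ b, BruhatLE cs b x ∧ y = a * b}

/-- Fold of one-step Demazure products along a word. -/
noncomputable def dem (w : W) (ω : List B) : W := ω.foldl (fun g i => dsimple cs g i) w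

lemma dem_nil (w : W) : dem cs w [] = w := rfl

lemma dem_concat (w : W) (κ : List B) (i : B) :
    dem cs w (κ ++ [i]) = dsimple cs (dem cs w κ) i := by
  rw [dem, List.foldl_append]
  rfl

lemma demazure_main : ∀ ω : List B, cs.IsReduced ω → ∀ w : W,
    Kset cs w (π ω) = {y | BruhatLE cs y (dem cs w ω)} := by
  intro ω
  induction ω using List.reverseRecOn with
  | nil =>
    intro _ w
    rw [dem_nil, cs.wordProd_nil]
    ext y
    constructor
    · rintro ⟨a, ha, b, hb, rfl⟩
      rw [brle_le_one cs hb, mul_one]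
      exact ha
    · intro h
      exact ⟨y, h, 1, brle_refl cs 1, (mul_one y).symm⟩
  | append_singleton κ i ihκ =>
    intro hred w
    have hκred : cs.IsReduced κ := by
      have h := hred.take κ.length
      rwa [List.take_left] at h
    have hzlen : ℓ (π κ) = κ.length := hκred
    have heq : π (κ ++ [i]) = π κ * s i := by
      rw [cs.wordProd_append, cs.wordProd_singleton]
    have hplen : ℓ (π κ * s i) = κ.length + 1 := by
      rw [← heq]
      have h2 := hred
      rw [CoxeterSystem.IsReduced] at h2
      rw [h2, List.length_append, List.length_singleton]
    have hasc : ℓ (π κ) < ℓ (π κ * s i) := by omega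
    have ih := ihκ hκred w
    rw [dem_concat, heq]
    ext y
    constructor
    · rintro ⟨a, ha, b, hb, rfl⟩
      rcases brle_propZ cs hasc hb with h1 | h1
      · have hmem : a * b ∈ Kset cs w (π κ) := ⟨a, ha, b, h1, rfl⟩
        rw [ih] at hmem
        exact (Astar cs _ i _).mpr (Or.inl hmem)
      · have hmem : a * (b * s i) ∈ Kset cs w (π κ) := ⟨a, ha, b * s i, h1, rfl⟩
        rw [ih] at hmem
        refine (Astar cs _ i _).mpr (Or.inr ⟨a * (b * s i), hmem, ?_⟩)
        symm
        rw [mul_assoc a (b * s i) (s i), cs.simple_mul_simple_cancel_right]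
    · intro h
      rcases (Astar cs _ i _).mp h with h1 | ⟨p, hp, rfl⟩
      · have hmem : y ∈ Kset cs w (π κ) := by rw [ih]; exact h1
        obtain ⟨a, ha, b, hb, rfl⟩ := hmem
        exact ⟨a, ha, b, brle_up cs hasc hb, rfl⟩
      · have hmem : p ∈ Kset cs w (π κ) := by rw [ih]; exact hp
        obtain ⟨a, ha, b, hb, rfl⟩ := hmem
        exact ⟨a, ha, b * s i, brle_lift cs hasc hb, mul_assoc a b (s i)⟩

/-- The Demazure product. -/
noncomputable def star (w x : W) : W :=
  dem cs w (Classical.choose (cs.exists_reduced_word' x))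

lemma Kset_star (w x : W) : Kset cs w x = {y | BruhatLE cs y (star cs w x)} := by
  obtain ⟨hred, hπ⟩ := Classical.choose_spec (cs.exists_reduced_word' x)
  have h := demazure_main cs (Classical.choose (cs.exists_reduced_word' x)) hred w
  rw [← hπ] at h
  exact h

lemma star_isBrMax (w x : W) : IsBrMax cs (Kset cs w x) (star cs w x) := by
  constructor
  · rw [Kset_star]
    exact brle_refl cs _
  · intro y hy
    rw [Kset_star] at hy
    exact hy

lemma brmax_unique {K : Set W} {m m' : W} (h : IsBrMax cs K m) (h' : IsBrMax cs K m') :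
    m = m' :=
  brle_antisymm cs (h'.2 m h.1) (h.2 m' h'.1)

lemma isBrMax_one (w : W) : IsBrMax cs (Kset cs w 1) w := by
  constructor
  · exact ⟨w, brle_refl cs w, 1, brle_refl cs 1, (mul_one w).symm⟩
  · rintro y ⟨a, ha, b, hb, rfl⟩
    rw [brle_le_one cs hb, mul_one]
    exact ha

lemma star_one (w : W) : star cs w 1 = w :=
  brmax_unique cs (star_isBrMax cs w 1) (isBrMax_one cs w)

lemma isBrMax_simple (w : W) (i : B) : IsBrMax cs (Kset cs w (s i)) (dsimple cs w i) := by
  constructor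
  · rcases dsimple_cases cs w i with h | h <;> rw [h]
    · exact ⟨w, brle_refl cs w, 1, brle_one cs _, (mul_one w).symm⟩
    · exact ⟨w, brle_refl cs w, s i, brle_refl cs _, rfl⟩
  · rintro y ⟨a, ha, b, hb, rfl⟩
    rcases brle_le_simple cs hb with rfl | rfl
    · rw [mul_one]
      exact (Astar cs w i a).mpr (Or.inl ha)
    · exact (Astar cs w i _).mpr (Or.inr ⟨a, ha, rfl⟩)

lemma star_simple (w : W) (i : B) : star cs w (s i) = dsimple cs w i :=
  brmax_unique cs (star_isBrMax cs w (s i)) (isBrMax_simple cs w i)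

lemma Kset_assoc (w x y : W) : Kset cs (star cs w x) y = Kset cs w (star cs x y) := by
  ext y'
  constructor
  · rintro ⟨p, hp, c, hc, rfl⟩
    have hpK : p ∈ Kset cs w x := by rw [Kset_star]; exact hp
    obtain ⟨a, ha, b, hb, rfl⟩ := hpK
    have hbc : b * c ∈ Kset cs x y := ⟨b, hb, c, hc, rfl⟩
    rw [Kset_star] at hbc
    exact ⟨a, ha, b * c, hbc, by rw [mul_assoc]⟩
  · rintro ⟨a, ha, q, hq, rfl⟩
    have hqK : q ∈ Kset cs x y := by rw [Kset_star]; exact hq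
    obtain ⟨b, hb, c, hc, rfl⟩ := hqK
    have hab : a * b ∈ Kset cs w x := ⟨a, ha, b, hb, rfl⟩
    rw [Kset_star] at hab
    exact ⟨a * b, hab, c, hc, by rw [mul_assoc]⟩

lemma star_assoc (w x y : W) : star cs (star cs w x) y = star cs w (star cs x y) := by
  have h1 := star_isBrMax cs (star cs w x) y
  have h2 := star_isBrMax cs w (star cs x y)
  rw [Kset_assoc] at h1
  exact brmax_unique cs h1 h2

lemma star_le_left (w x : W) : BruhatLE cs w (star cs w x) :=
  (star_isBrMax cs w x).2 w ⟨w, brle_refl cs w, 1, brle_one cs x, (mul_one w).symm⟩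

lemma star_simple_le_right (w : W) (i : B) :
    BruhatLE cs (w * s i) (star cs w (s i)) :=
  (star_isBrMax cs w (s i)).2 (w * s i) ⟨w, brle_refl cs w, s i, brle_refl cs _, rfl⟩

lemma forced_dsimple {g m : W} {i : B} (hm : m = g ∨ m = g * s i)
    (h1 : BruhatLE cs g m) (h2 : BruhatLE cs (g * s i) m) : m = dsimple cs g i := by
  have hne := cs.length_mul_simple_ne g i
  by_cases hd : ℓ (g * s i) ≤ ℓ g
  · rw [dsimple, if_pos hd]
    rcases hm with rfl | rfl
    · rfl
    · exfalso
      have := brle_length_le cs h1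
      omega
  · rw [dsimple, if_neg hd]
    rcases hm with rfl | rfl
    · exfalso
      have := brle_length_le cs h2
      omega
    · rfl

end DemazureAux4

/-- There is a unique associative binary operation `⋆` on `W` with `w ⋆ 1 = w` and
`w ⋆ s = w ∨ ws` (the Bruhat-larger of `w` and `ws`) for all `w ∈ W` and simple
reflections `s`.  Explicitly, `w ⋆ x` is the unique Bruhat-maximal element of
`I(w)I(x) = {a b : a ≤ w, b ≤ x}`, and `I(w)I(x) = I(w ⋆ x)`. -/
theorem stmt_6 (cs : CoxeterSystem M W) :
    ∃ star : W → W → W,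
      ((∀ a b c : W, star (star a b) c = star a (star b c)) ∧
        (∀ w : W, star w 1 = w) ∧
        (∀ (w : W) (i : B),
          (star w (cs.simple i) = w ∨ star w (cs.simple i) = w * cs.simple i) ∧
          BruhatLE cs w (star w (cs.simple i)) ∧
          BruhatLE cs (w * cs.simple i) (star w (cs.simple i)))) ∧
      (∀ w x : W,
        IsBrMax cs {y | ∃ a, BruhatLE cs a w ∧ ∃ b, BruhatLE cs b x ∧ y = a * b}
          (star w x) ∧
        {y | ∃ a, BruhatLE cs a w ∧ ∃ b, BruhatLE cs b x ∧ y = a * b} =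
          {y | BruhatLE cs y (star w x)}) ∧
      (∀ star' : W → W → W,
        ((∀ a b c : W, star' (star' a b) c = star' a (star' b c)) ∧
          (∀ w : W, star' w 1 = w) ∧
          (∀ (w : W) (i : B),
            (star' w (cs.simple i) = w ∨ star' w (cs.simple i) = w * cs.simple i) ∧
            BruhatLE cs w (star' w (cs.simple i)) ∧
            BruhatLE cs (w * cs.simple i) (star' w (cs.simple i)))) →
        star' = star) := by
  classical
  refine ⟨DemazureAux4.star cs, ⟨DemazureAux4.star_assoc cs, DemazureAux4.star_one cs, ?_⟩,
    ?_, ?_⟩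
  · intro w i
    refine ⟨?_, DemazureAux4.star_le_left cs w (cs.simple i),
      DemazureAux4.star_simple_le_right cs w i⟩
    rw [DemazureAux4.star_simple cs w i]
    exact DemazureAux4.dsimple_cases cs w i
  · intro w x
    exact ⟨DemazureAux4.star_isBrMax cs w x, DemazureAux4.Kset_star cs w x⟩
  · rintro star' ⟨ha', h1', hs'⟩
    have forced' : ∀ (g : W) (i : B), star' g (cs.simple i) = DemazureAux4.dsimple cs g i := by
      intro g i
      obtain ⟨hcases, hle1, hle2⟩ := hs' g i
      exact DemazureAux4.forced_dsimple cs hcases hle1 hle2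
    have key : ∀ n : ℕ, ∀ x : W, cs.length x ≤ n → ∀ w, star' w x = DemazureAux4.star cs w x := by
      intro n
      induction n with
      | zero =>
        intro x hx w
        have hx1 : x = 1 := cs.length_eq_zero_iff.mp (by omega)
        subst hx1
        rw [h1' w, DemazureAux4.star_one cs w]
      | succ n ihn =>
        intro x hx w
        by_cases hx1 : x = 1
        · subst hx1
          rw [h1' w, DemazureAux4.star_one cs w]
        · obtain ⟨i, hdesc⟩ := cs.exists_rightDescent_of_ne_one hx1
          have hdesc' : cs.length (x * cs.simple i) < cs.length x := hdesc
          have hx' : (x * cs.simple i) * cs.simple i = x := cs.simple_mul_simple_cancel_right i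
          have hxlen' : cs.length (x * cs.simple i) ≤ n := by omega
          have hascx : cs.length (x * cs.simple i)
              < cs.length ((x * cs.simple i) * cs.simple i) := by rw [hx']; exact hdesc'
          have hd : DemazureAux4.dsimple cs (x * cs.simple i) i = x := by
            rw [DemazureAux4.dsimple, if_neg (by omega), hx']
          calc star' w x = star' w (star' (x * cs.simple i) (cs.simple i)) := by
                rw [forced' _ i, hd]
            _ = star' (star' w (x * cs.simple i)) (cs.simple i) := (ha' w _ _).symm
            _ = star' (DemazureAux4.star cs w (x * cs.simple i)) (cs.simple i) := by
                rw [ihn _ hxlen' w]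
            _ = DemazureAux4.dsimple cs (DemazureAux4.star cs w (x * cs.simple i)) i :=
                forced' _ i
            _ = DemazureAux4.star cs (DemazureAux4.star cs w (x * cs.simple i)) (cs.simple i) :=
                (DemazureAux4.star_simple cs _ i).symm
            _ = DemazureAux4.star cs w
                  (DemazureAux4.star cs (x * cs.simple i) (cs.simple i)) :=
                DemazureAux4.star_assoc cs _ _ _
            _ = DemazureAux4.star cs w x := by rw [DemazureAux4.star_simple cs _ i, hd]
    funext w x
    exact key (cs.length x) x le_rfl w
end

section
/- Let (W,S) be a Coxeter system, W₁ and W₂ standard parabolic subgroups, and u, v ∈ W. Then brmin(W₁uW₂) ≤ brmin(W₁vW₂) in the Bruhat order if and only if there exist u′ ∈ W₁uW₂ and v′ ∈ W₁vW₂ with u′ ≤ v′. In particular, if brmin(W₁uW₂) ≤ v′ for some v′ ∈ W₁vW₂, then brmin(W₁uW₂) ≤ v″ for every v″ ∈ W₁vW₂. -/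
open List




variable {B W : Type*} [Group W] {M : CoxeterMatrix B}

namespace BruhatDev

open CoxeterSystem

variable {B W : Type*} [Group W] {M : CoxeterMatrix B} (cs : CoxeterSystem M W)

local prefix:100 "σ" => cs.simple
local prefix:100 "π" => cs.wordProd
local prefix:100 "ℓ" => cs.length

open scoped Classical

lemma rightInvSeq_append (ω₁ ω₂ : List B) :
    cs.rightInvSeq (ω₁ ++ ω₂) =
      (cs.rightInvSeq ω₁).map (fun t => (π ω₂)⁻¹ * t * π ω₂) ++ cs.rightInvSeq ω₂ := by
  induction ω₁ with
  | nil => simp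
  | cons i ω ih =>
      rw [cons_append]
      dsimp only [rightInvSeq]
      rw [ih]
      simp only [wordProd_append, map_cons, cons_append, mul_inv_rev]
      congr 1
      group

/-- The sign of the reflection `t` in the word `ω`. -/
noncomputable def sgn (t : W) (ω : List B) : ℤˣ :=
  ((cs.rightInvSeq ω).map (fun r => if r = t then (-1 : ℤˣ) else 1)).prod

@[simp] lemma sgn_nil (t : W) : sgn cs t [] = 1 := rfl

lemma sgn_cons (t : W) (i : B) (ω : List B) :
    sgn cs t (i :: ω) = (if (π ω)⁻¹ * σ i * π ω = t then (-1:ℤˣ) else 1) * sgn cs t ω := by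
  dsimp only [sgn, rightInvSeq]
  rw [map_cons, prod_cons]

lemma sgn_singleton (t : W) (i : B) :
    sgn cs t [i] = if σ i = t then (-1:ℤˣ) else 1 := by
  have := sgn_cons cs t i []
  simpa using this

lemma sgn_append (t : W) (ω₁ ω₂ : List B) :
    sgn cs t (ω₁ ++ ω₂) = sgn cs (π ω₂ * t * (π ω₂)⁻¹) ω₁ * sgn cs t ω₂ := by
  dsimp only [sgn]
  rw [rightInvSeq_append, map_append, prod_append, map_map]
  refine congrArg₂ (· * ·) ?_ rfl
  refine congrArg List.prod ?_
  apply List.map_congr_left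
  intro r _
  simp only [Function.comp_apply]
  have : ((π ω₂)⁻¹ * r * π ω₂ = t) ↔ (r = π ω₂ * t * (π ω₂)⁻¹) := by
    constructor
    · rintro rfl; group
    · rintro rfl; group
  simp only [this]

lemma sgn_eq_one_of_not_mem {t : W} {ω : List B} (h : t ∉ cs.rightInvSeq ω) :
    sgn cs t ω = 1 := by
  apply List.prod_eq_one
  intro x hx
  rw [List.mem_map] at hx
  obtain ⟨r, hr, rfl⟩ := hx
  rw [if_neg]
  rintro rfl
  exact h hr

lemma mem_of_sgn_eq_neg_one {t : W} {ω : List B} (h : sgn cs t ω = -1) :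
    t ∈ cs.rightInvSeq ω := by
  by_contra hmem
  rw [sgn_eq_one_of_not_mem cs hmem] at h
  exact absurd h (by decide)

/-- The basic involutions of the sign representation. -/
noncomputable def sigmaFun (i : B) : W × ℤˣ → W × ℤˣ :=
  fun p => (σ i * p.1 * σ i, if p.1 = σ i then -p.2 else p.2)

lemma sigmaFun_involutive (i : B) : Function.Involutive (sigmaFun cs i) := by
  rintro ⟨x, e⟩
  unfold sigmaFun
  by_cases h : x = σ i
  · subst h
    simp [cs.simple_mul_simple_self]
  · have h' : σ i * x * σ i ≠ σ i := by
      intro hc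
      apply h
      have := congrArg (fun z => σ i * z * σ i) hc
      simpa [mul_assoc, cs.simple_mul_simple_self, cs.simple_mul_simple_cancel_left,
        cs.simple_mul_simple_cancel_right] using this
    simp only [h', if_false, h, if_false]
    have : σ i * (σ i * x * σ i) * σ i = x := by
      rw [mul_assoc, mul_assoc, cs.simple_mul_simple_self, mul_one, ← mul_assoc,
        cs.simple_mul_simple_self, one_mul]
    rw [this]

/-- The sign representation permutations. -/
noncomputable def sigmaPerm (i : B) : Equiv.Perm (W × ℤˣ) :=
  (sigmaFun_involutive cs i).toPerm

lemma sigmaPerm_apply (i : B) (p : W × ℤˣ) : sigmaPerm cs i p = sigmaFun cs i p := rfl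

lemma prod_sigmaPerm_apply (ω : List B) (t : W) (ε : ℤˣ) :
    ((ω.map (sigmaPerm cs)).prod) (t, ε) = (π ω * t * (π ω)⁻¹, sgn cs t ω * ε) := by
  induction ω with
  | nil => simp
  | cons i ω ih =>
      rw [map_cons, prod_cons, Equiv.Perm.mul_apply, ih, sigmaPerm_apply]
      unfold sigmaFun
      rw [sgn_cons cs t i ω, wordProd_cons]
      have hiff : π ω * t * (π ω)⁻¹ = σ i ↔ (π ω)⁻¹ * σ i * π ω = t := by
        constructor
        · rintro h; rw [← h]; group
        · rintro h; rw [← h]; group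
      by_cases h : (π ω)⁻¹ * σ i * π ω = t
      · rw [if_pos (hiff.mpr h), if_pos h]
        simp only [Prod.mk.injEq]
        refine ⟨by rw [mul_inv_rev, cs.inv_simple]; group, by rw [neg_one_mul, neg_mul]⟩
      · rw [if_neg (fun hc => h (hiff.mp hc)), if_neg h]
        simp only [Prod.mk.injEq]
        refine ⟨by rw [mul_inv_rev, cs.inv_simple]; group, by rw [one_mul]⟩



lemma simple_conj_pow (i i' : B) (a : ℕ) :
    σ i' * (σ i * σ i')^a = (σ i' * σ i)^a * σ i' := by
  induction a with
  | zero => simp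
  | succ a ih =>
      rw [pow_succ, ← mul_assoc, ih, pow_succ]
      group

lemma rho_formula (i i' : B) (k : ℕ) :
    (π (alternatingWord i i' k))⁻¹ * σ (if Even k then i' else i) * π (alternatingWord i i' k)
      = (σ i' * σ i)^k * σ i' := by
  have hinv : ∀ a : ℕ, ((σ i * σ i')^a)⁻¹ = (σ i' * σ i)^a := by
    intro a
    rw [← inv_pow, mul_inv_rev, cs.inv_simple, cs.inv_simple]
  rcases Nat.even_or_odd k with he | ho
  · obtain ⟨a, rfl⟩ := he
    rw [if_pos ⟨a, rfl⟩]
    rw [cs.prod_alternatingWord_eq_mul_pow, if_pos ⟨a, rfl⟩, one_mul]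
    have hdiv : (a + a) / 2 = a := by omega
    rw [hdiv, hinv, mul_assoc, simple_conj_pow cs i i', ← mul_assoc, ← pow_add]
  · obtain ⟨a, rfl⟩ := ho
    have hodd : ¬ Even (2 * a + 1) := by
      simp [Nat.even_add_one, parity_simps]
    rw [if_neg hodd]
    rw [cs.prod_alternatingWord_eq_mul_pow, if_neg hodd]
    have hdiv : (2 * a + 1) / 2 = a := by omega
    rw [hdiv, mul_inv_rev, hinv, cs.inv_simple]
    have key : σ i' * (σ i * (σ i' * (σ i * σ i')^a)) = (σ i' * σ i)^(a+1) * σ i' := by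
      rw [simple_conj_pow cs i i', pow_succ']
      group
    calc (σ i' * σ i)^a * σ i' * σ i * (σ i' * (σ i * σ i')^a)
        = (σ i' * σ i)^a * (σ i' * (σ i * (σ i' * (σ i * σ i')^a))) := by
          simp only [mul_assoc]
      _ = (σ i' * σ i)^a * ((σ i' * σ i)^(a+1) * σ i') := by rw [key]
      _ = (σ i' * σ i)^(2*a+1) * σ i' := by rw [← mul_assoc, ← pow_add]; ring_nf

lemma ris_alternatingWord (i i' : B) (k : ℕ) :
    cs.rightInvSeq (alternatingWord i i' k)
      = ((List.range k).reverse).map (fun n => (σ i' * σ i)^n * σ i') := by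
  induction k with
  | zero => simp [alternatingWord]
  | succ k ih =>
      rw [alternatingWord_succ' i i' k]
      dsimp only [rightInvSeq]
      rw [ih, List.range_succ, List.reverse_append, List.reverse_singleton, List.singleton_append,
        List.map_cons]
      congr 1
      exact rho_formula cs i i' k

lemma prod_alt_eq_one (i i' : B) :
    π (alternatingWord i i' (2 * M i i')) = 1 := by
  rw [cs.prod_alternatingWord_eq_mul_pow, if_pos (even_two_mul _), one_mul]
  have h2 : 2 * M i i' / 2 = M i i' := by omega
  rw [h2, cs.simple_mul_simple_pow]

lemma sgn_alt_eq_one (i i' : B) (t : W) :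
    sgn cs t (alternatingWord i i' (2 * M i i')) = 1 := by
  unfold sgn
  rw [ris_alternatingWord, List.map_reverse, List.map_reverse, List.prod_reverse, map_map]
  rw [two_mul, List.range_add, map_append, prod_append, map_map]
  have hfun : ((fun r => if r = t then (-1:ℤˣ) else 1) ∘ fun n => (σ i' * σ i)^n * σ i')
      ∘ (M i i' + ·)
      = ((fun r => if r = t then (-1:ℤˣ) else 1) ∘ fun n => (σ i' * σ i)^n * σ i') := by
    funext n
    simp only [Function.comp_apply]
    rw [pow_add, cs.simple_mul_simple_pow', one_mul]
  rw [hfun]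
  exact Int.units_mul_self _

lemma alt_two_step (i i' : B) (m : ℕ) :
    alternatingWord i i' (2 * (m+1)) = i :: i' :: alternatingWord i i' (2 * m) := by
  have h1 : 2 * (m+1) = (2*m+1) + 1 := by ring
  rw [h1, alternatingWord_succ' i i' (2*m+1), alternatingWord_succ' i i' (2*m)]
  rw [if_neg (by simp [Nat.even_add_one, parity_simps]), if_pos (even_two_mul m)]

lemma map_sigmaPerm_alt (i i' : B) (m : ℕ) :
    ((alternatingWord i i' (2 * m)).map (sigmaPerm cs)).prod
      = (sigmaPerm cs i * sigmaPerm cs i')^m := by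
  induction m with
  | zero => simp [alternatingWord]
  | succ m ih =>
      rw [alt_two_step, map_cons, map_cons, prod_cons, prod_cons, ih, pow_succ', mul_assoc]

lemma isLiftable_sigmaPerm : M.IsLiftable (sigmaPerm cs) := by
  intro i i'
  rw [← map_sigmaPerm_alt cs i i' (M i i')]
  apply Equiv.ext
  rintro ⟨t, ε⟩
  rw [prod_sigmaPerm_apply, prod_alt_eq_one, sgn_alt_eq_one]
  simp

/-- The sign representation. -/
noncomputable def rho : W →* Equiv.Perm (W × ℤˣ) := cs.lift ⟨sigmaPerm cs, isLiftable_sigmaPerm cs⟩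

lemma rho_wordProd (ω : List B) : rho cs (π ω) = (ω.map (sigmaPerm cs)).prod := by
  unfold wordProd
  rw [map_list_prod, map_map]
  apply congrArg List.prod
  apply List.map_congr_left
  intro i _
  exact cs.lift_apply_simple (isLiftable_sigmaPerm cs) i

lemma sgn_well_defined {ω ω' : List B} (h : π ω = π ω') (t : W) :
    sgn cs t ω = sgn cs t ω' := by
  have h1 : (ω.map (sigmaPerm cs)).prod (t, 1) = (ω'.map (sigmaPerm cs)).prod (t, 1) := by
    rw [← rho_wordProd, ← rho_wordProd, h]
  rw [prod_sigmaPerm_apply, prod_sigmaPerm_apply] at h1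
  have h2 := congrArg Prod.snd h1
  simpa using h2




lemma exists_eraseIdx_of_mem_ris {t : W} {ω : List B} (h : t ∈ cs.rightInvSeq ω) :
    ∃ j < ω.length, π ω * t = π (ω.eraseIdx j) := by
  obtain ⟨j, hj, rfl⟩ := List.mem_iff_getElem.mp h
  rw [cs.length_rightInvSeq] at hj
  refine ⟨j, hj, ?_⟩
  rw [← List.getD_eq_getElem _ 1 (by rwa [cs.length_rightInvSeq]),
    cs.wordProd_mul_getD_rightInvSeq]

lemma leftInvSeq_eq_map_conj (c : List B) :
    cs.leftInvSeq c = (cs.rightInvSeq c).map (fun r => π c * r * (π c)⁻¹) := by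
  induction c with
  | nil => simp
  | cons i c ih =>
      show CoxeterSystem.simple cs i :: (cs.leftInvSeq c).map (MulAut.conj (σ i)) = _
      dsimp only [rightInvSeq]
      rw [map_cons, ih, map_map]
      congr 1
      · rw [wordProd_cons, mul_inv_rev, cs.inv_simple]
        group
        rw [cs.simple_mul_simple_self, one_mul]
      · apply List.map_congr_left
        intro r _
        simp only [Function.comp_apply, MulAut.conj_apply, wordProd_cons, mul_inv_rev,
          cs.inv_simple]
        group

lemma sgn_reverse (t : W) (c : List B) :
    sgn cs t c.reverse = sgn cs ((π c)⁻¹ * t * π c) c := by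
  unfold sgn
  rw [cs.rightInvSeq_reverse, List.map_reverse, List.prod_reverse, leftInvSeq_eq_map_conj cs,
    map_map]
  apply congrArg List.prod
  apply List.map_congr_left
  intro r _
  simp only [Function.comp_apply]
  have : (π c * r * (π c)⁻¹ = t) ↔ (r = (π c)⁻¹ * t * π c) := by
    constructor
    · rintro rfl; group
    · rintro rfl; group
  simp only [this]

lemma exists_palindrome {t : W} (ht : cs.IsReflection t) :
    ∃ τ : List B, π τ = t ∧ sgn cs t τ = -1 := by
  obtain ⟨w, i, rfl⟩ := ht
  obtain ⟨c, rfl⟩ := cs.wordProd_surjective w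
  refine ⟨c ++ ([i] ++ c.reverse), ?_, ?_⟩
  · rw [wordProd_append, wordProd_append, wordProd_singleton, wordProd_reverse, mul_assoc]
  · rw [sgn_append, sgn_append, sgn_singleton, sgn_reverse]
    have hp : π ([i] ++ c.reverse) = σ i * (π c)⁻¹ := by
      rw [wordProd_append, wordProd_singleton, wordProd_reverse]
    have hc1 : π ([i] ++ c.reverse) * (π c * σ i * (π c)⁻¹) * (π ([i] ++ c.reverse))⁻¹ = σ i := by
      rw [hp, mul_inv_rev, inv_inv, cs.inv_simple]
      calc σ i * (π c)⁻¹ * (π c * σ i * (π c)⁻¹) * (π c * σ i)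
          = σ i * σ i * σ i := by group
        _ = σ i := by rw [cs.simple_mul_simple_self, one_mul]
    have hc2 : π c.reverse * (π c * σ i * (π c)⁻¹) * (π c.reverse)⁻¹ = σ i := by
      rw [wordProd_reverse, inv_inv]
      group
    have hc3 : (π c)⁻¹ * (π c * σ i * (π c)⁻¹) * π c = σ i := by group
    rw [hc1, hc2, hc3, if_pos rfl]
    calc sgn cs (σ i) c * (-1 * sgn cs (σ i) c)
        = -(sgn cs (σ i) c * sgn cs (σ i) c) := by rw [neg_one_mul, mul_neg]
      _ = -1 := by rw [Int.units_mul_self]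

lemma sgn_neg_of_descent {t : W} (ht : cs.IsReflection t) {ω : List B}
    (hlt : ℓ (π ω * t) < ℓ (π ω)) : sgn cs t ω = -1 := by
  rcases Int.units_eq_one_or (sgn cs t ω) with h1 | h1
  · exfalso
    obtain ⟨τ, hτ, hsτ⟩ := exists_palindrome cs ht
    have hconj : π τ * t * (π τ)⁻¹ = t := by
      rw [hτ]
      group
    have hs : sgn cs t (ω ++ τ) = -1 := by
      rw [sgn_append, hconj, h1, one_mul, hsτ]
    obtain ⟨ω₀, hred, hw⟩ := cs.exists_reduced_word' (π ω * t)
    have heq : π (ω ++ τ) = π ω₀ := by rw [wordProd_append, hτ, ← hw]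
    have hs0 : sgn cs t ω₀ = -1 := by rw [← sgn_well_defined cs heq]; exact hs
    obtain ⟨j, hj, hje⟩ := exists_eraseIdx_of_mem_ris cs (mem_of_sgn_eq_neg_one cs hs0)
    have hπ : π ω = π (ω₀.eraseIdx j) := by
      rw [← hje, ← hw, mul_assoc, ht.mul_self, mul_one]
    have hlen1 : ℓ (π ω) ≤ (ω₀.eraseIdx j).length := hπ ▸ cs.length_wordProd_le _
    have hlen2 : (ω₀.eraseIdx j).length + 1 = ω₀.length := List.length_eraseIdx_add_one hj
    have hlen3 : ω₀.length = ℓ (π ω * t) := by rw [hw]; exact hred.symm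
    omega
  · exact h1

lemma strongExchange {t : W} (ht : cs.IsReflection t) {ω : List B}
    (hlt : ℓ (π ω * t) < ℓ (π ω)) : ∃ j < ω.length, π ω * t = π (ω.eraseIdx j) :=
  exists_eraseIdx_of_mem_ris cs (mem_of_sgn_eq_neg_one cs (sgn_neg_of_descent cs ht hlt))


lemma isReduced_take_one (ω : List B) : cs.IsReduced (ω.take 1) := by
  cases ω with
  | nil => simp [CoxeterSystem.IsReduced]
  | cons x l =>
      show cs.IsReduced [x]
      unfold CoxeterSystem.IsReduced
      rw [wordProd_singleton, cs.length_simple, List.length_singleton]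

lemma exists_reduced_sublist : ∀ (n : ℕ) (ω : List B), ω.length ≤ n →
    ∃ ω', ω'.Sublist ω ∧ cs.IsReduced ω' ∧ π ω' = π ω := by
  intro n
  induction n with
  | zero =>
      intro ω h
      have : ω = [] := List.eq_nil_of_length_eq_zero (by omega)
      subst this
      exact ⟨[], List.Sublist.refl _, by simp [CoxeterSystem.IsReduced], rfl⟩
  | succ n ih =>
      intro ω hlen
      by_cases hred : cs.IsReduced ω
      · exact ⟨ω, List.Sublist.refl ω, hred, rfl⟩
      · have hex : ∃ m, ¬ cs.IsReduced (ω.take m) := ⟨ω.length, by rwa [List.take_length]⟩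
        have hk0 : ¬ cs.IsReduced (ω.take (Nat.find hex)) := Nat.find_spec hex
        have hk0min : ∀ m < Nat.find hex, cs.IsReduced (ω.take m) :=
          fun m hm => not_not.mp (Nat.find_min hex hm)
        have hk0le : Nat.find hex ≤ ω.length := Nat.find_le (by rwa [List.take_length])
        have hk00 : Nat.find hex ≠ 0 := by
          intro h0
          rw [h0] at hk0
          exact hk0 (by simp [CoxeterSystem.IsReduced])
        have hk01 : Nat.find hex ≠ 1 := by
          intro h0
          rw [h0] at hk0
          exact hk0 (isReduced_take_one cs ω)
        set k := Nat.find hex - 1 with hkdef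
        have hk1 : k + 1 = Nat.find hex := by omega
        have hk : k < ω.length := by omega
        have hkpos : 1 ≤ k := by omega
        have hkred : cs.IsReduced (ω.take k) := hk0min k (by omega)
        have hknred : ¬ cs.IsReduced (ω.take (k+1)) := by rw [hk1]; exact hk0
        have htake : ω.take (k+1) = ω.take k ++ [ω[k]] := by
          rw [List.take_succ, List.getElem?_eq_getElem hk]
          rfl
        have hlenk : (ω.take k).length = k := by
          rw [List.length_take]; omega
        have hlπ : ℓ (π (ω.take k)) = k := by rw [hkred]; exact hlenk
        have hπsucc : π (ω.take (k+1)) = π (ω.take k) * σ (ω[k]) := by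
          rw [htake, wordProd_append, wordProd_singleton]
        have hlt : ℓ (π (ω.take k) * σ (ω[k])) < ℓ (π (ω.take k)) := by
          rcases cs.length_mul_simple (π (ω.take k)) (ω[k]) with h | h
          · exfalso
            apply hknred
            unfold CoxeterSystem.IsReduced
            rw [hπsucc, h, hlπ, List.length_take]
            omega
          · omega
        obtain ⟨j, hj, hje⟩ :=
          strongExchange cs (cs.isReflection_simple (ω[k])) hlt
        rw [hlenk] at hj
        have hπ' : π ((ω.take k).eraseIdx j ++ ω.drop (k+1)) = π ω := by
          rw [wordProd_append, ← hje, ← hπsucc, ← wordProd_append, List.take_append_drop]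
        have hsub : ((ω.take k).eraseIdx j ++ ω.drop (k+1)).Sublist ω := by
          have h1 : ((ω.take k).eraseIdx j).Sublist (ω.take k) := List.eraseIdx_sublist _ j
          have h2 : (ω.take k).Sublist (ω.take (k+1)) := by
            rw [htake]; exact List.sublist_append_left _ _
          have h3 := (h1.trans h2).append (List.Sublist.refl (ω.drop (k+1)))
          rwa [List.take_append_drop] at h3
        have hlen' : ((ω.take k).eraseIdx j ++ ω.drop (k+1)).length ≤ n := by
          rw [List.length_append]
          have e1 : ((ω.take k).eraseIdx j).length + 1 = (ω.take k).length :=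
            List.length_eraseIdx_add_one (by omega)
          have e2 : (ω.drop (k+1)).length = ω.length - (k+1) := List.length_drop
          omega
        obtain ⟨ω'', hsub'', hred'', hπ''⟩ := ih _ hlen'
        exact ⟨ω'', hsub''.trans hsub, hred'', by rw [hπ'', hπ']⟩

lemma exists_reduced_sublist' (ω : List B) :
    ∃ ω', ω'.Sublist ω ∧ cs.IsReduced ω' ∧ π ω' = π ω :=
  exists_reduced_sublist cs ω.length ω le_rfl

/-- One step of the Bruhat order: multiply by a reflection, increasing length. -/
def BrStep (u v : W) : Prop := ∃ t : W, cs.IsReflection t ∧ v = u * t ∧ ℓ u < ℓ v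

/-- The chain form of the Bruhat order. -/
def BrLE : W → W → Prop := Relation.ReflTransGen (BrStep cs)

lemma brStep_simple {w : W} (i : B) (h : ℓ w < ℓ (w * σ i)) : BrStep cs w (w * σ i) :=
  ⟨σ i, cs.isReflection_simple i, rfl, h⟩

lemma exists_reduced_sublist_of_brStep {u v : W} (h : BrStep cs u v) {ρ : List B}
    (hρ : cs.IsReduced ρ) (hπ : π ρ = v) :
    ∃ σl, σl.Sublist ρ ∧ cs.IsReduced σl ∧ π σl = u := by
  obtain ⟨t, ht, rfl, hlt⟩ := h
  have h1 : π ρ * t = u := by rw [hπ, mul_assoc, ht.mul_self, mul_one]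
  have hlt' : ℓ (π ρ * t) < ℓ (π ρ) := by rw [h1, hπ]; exact hlt
  obtain ⟨j, hj, hje⟩ := strongExchange cs ht hlt'
  obtain ⟨σl, hs, hr, hp⟩ := exists_reduced_sublist' cs (ρ.eraseIdx j)
  exact ⟨σl, hs.trans (List.eraseIdx_sublist ρ j), hr, by rw [hp, ← hje, h1]⟩

lemma exists_reduced_sublist_of_brLE {u v : W} (h : BrLE cs u v) {ρ : List B}
    (hρ : cs.IsReduced ρ) (hπ : π ρ = v) :
    ∃ σl, σl.Sublist ρ ∧ cs.IsReduced σl ∧ π σl = u := by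
  induction h using Relation.ReflTransGen.head_induction_on with
  | refl => exact ⟨ρ, List.Sublist.refl _, hρ, hπ⟩
  | head hstep _ ih =>
      obtain ⟨σ₁, hs1, hr1, hp1⟩ := ih
      obtain ⟨σ₂, hs2, hr2, hp2⟩ := exists_reduced_sublist_of_brStep cs hstep hr1 hp1
      exact ⟨σ₂, hs2.trans hs1, hr2, hp2⟩

lemma descent_word {w : W} {i : B} (h : ℓ (w * σ i) < ℓ w) :
    ∃ ρ₀ : List B, cs.IsReduced (ρ₀ ++ [i]) ∧ π (ρ₀ ++ [i]) = w ∧ π ρ₀ = w * σ i := by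
  obtain ⟨ρ₀, hr, hp⟩ := cs.exists_reduced_word' (w * σ i)
  have hπ : π (ρ₀ ++ [i]) = w := by
    rw [wordProd_append, wordProd_singleton, ← hp, cs.simple_mul_simple_cancel_right]
  refine ⟨ρ₀, ?_, hπ, hp.symm⟩
  unfold CoxeterSystem.IsReduced
  rw [hπ, List.length_append, List.length_singleton]
  have e1 : ℓ (w * σ i) = ρ₀.length := by rw [hp]; exact hr
  rcases cs.length_mul_simple w i with h' | h' <;> omega

lemma brStep_of_eraseIdx {ρ₀ : List B} (hρ₀ : cs.IsReduced ρ₀) {j : ℕ} (hj : j < ρ₀.length) :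
    BrLE cs (π (ρ₀.eraseIdx j)) (π ρ₀) := by
  rcases eq_or_ne (π (ρ₀.eraseIdx j)) (π ρ₀) with he | hne
  · rw [he]
    exact Relation.ReflTransGen.refl
  have hz : π (ρ₀.eraseIdx j) = π ρ₀ * ((cs.rightInvSeq ρ₀).getD j 1) :=
    (cs.wordProd_mul_getD_rightInvSeq ρ₀ j).symm
  have hmem : (cs.rightInvSeq ρ₀).getD j 1 ∈ cs.rightInvSeq ρ₀ := by
    rw [List.getD_eq_getElem _ 1 (by rwa [cs.length_rightInvSeq])]
    exact List.getElem_mem _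
  have ht : cs.IsReflection ((cs.rightInvSeq ρ₀).getD j 1) :=
    cs.isReflection_of_mem_rightInvSeq ρ₀ hmem
  have hback : π ρ₀ = π (ρ₀.eraseIdx j) * ((cs.rightInvSeq ρ₀).getD j 1) := by
    rw [hz, mul_assoc, ht.mul_self, mul_one]
  have hlen : ℓ (π (ρ₀.eraseIdx j)) < ℓ (π ρ₀) := by
    have h1 : ℓ (π (ρ₀.eraseIdx j)) ≤ (ρ₀.eraseIdx j).length := cs.length_wordProd_le _
    have h2 : (ρ₀.eraseIdx j).length + 1 = ρ₀.length := List.length_eraseIdx_add_one hj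
    have h3 : ℓ (π ρ₀) = ρ₀.length := hρ₀
    omega
  exact Relation.ReflTransGen.single ⟨_, ht, hback, hlen⟩

lemma isReduced_append_left {ρ₀ : List B} {l : List B} (h : cs.IsReduced (ρ₀ ++ l)) :
    cs.IsReduced ρ₀ := by
  have := h.take ρ₀.length
  rwa [List.take_left] at this

lemma chain_aux1 {w w' t : W} {i : B} (ht : cs.IsReflection t) (hw : w = w' * t)
    (hl : ℓ w' < ℓ w) (hd : ℓ (w * σ i) < ℓ w) : BrLE cs (w' * σ i) w := by
  obtain ⟨ρ₀, hred, hπρ, hπ₀⟩ := descent_word cs hd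
  have hρ₀red : cs.IsReduced ρ₀ := isReduced_append_left cs hred
  have hw't : π (ρ₀ ++ [i]) * t = w' := by rw [hπρ, hw, mul_assoc, ht.mul_self, mul_one]
  have hlt : ℓ (π (ρ₀ ++ [i]) * t) < ℓ (π (ρ₀ ++ [i])) := by rw [hw't, hπρ]; exact hl
  obtain ⟨j, hj, hje⟩ := strongExchange cs ht hlt
  rw [List.length_append, List.length_singleton] at hj
  by_cases hjlast : j = ρ₀.length
  · have hlast : (ρ₀ ++ [i]).eraseIdx j = ρ₀ := by
      rw [hjlast, List.eraseIdx_append_of_length_le le_rfl, Nat.sub_self]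
      simp
    have hw'e : w' = w * σ i := by rw [← hw't, hje, hlast, hπ₀]
    rw [hw'e, cs.simple_mul_simple_cancel_right]
    exact Relation.ReflTransGen.refl
  · have hjlt : j < ρ₀.length := by omega
    have herase : (ρ₀ ++ [i]).eraseIdx j = ρ₀.eraseIdx j ++ [i] :=
      List.eraseIdx_append_of_lt_length hjlt _
    have hw'z : w' = π (ρ₀.eraseIdx j) * σ i := by
      rw [← hw't, hje, herase, wordProd_append, wordProd_singleton]
    have h1 : BrLE cs (π (ρ₀.eraseIdx j)) (π ρ₀) := brStep_of_eraseIdx cs hρ₀red hjlt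
    have h2 : BrStep cs (π ρ₀) w := by
      refine ⟨σ i, cs.isReflection_simple i, ?_, ?_⟩
      · rw [hπ₀, cs.simple_mul_simple_cancel_right]
      · rw [hπ₀]; exact hd
    have h3 : w' * σ i = π (ρ₀.eraseIdx j) := by
      rw [hw'z, cs.simple_mul_simple_cancel_right]
    rw [h3]
    exact h1.tail h2

lemma chain_aux2 {w x t : W} {i : B} (ht : cs.IsReflection t) (hx : x = w * t)
    (hl : ℓ w < ℓ x) (hd : ℓ (x * σ i) < ℓ x) (hw : ℓ w < ℓ (w * σ i)) :
    BrLE cs w (x * σ i) := by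
  obtain ⟨ρ₀, hred, hπρ, hπ₀⟩ := descent_word cs hd
  have hρ₀red : cs.IsReduced ρ₀ := isReduced_append_left cs hred
  have hwt : π (ρ₀ ++ [i]) * t = w := by rw [hπρ, hx, mul_assoc, ht.mul_self, mul_one]
  have hlt : ℓ (π (ρ₀ ++ [i]) * t) < ℓ (π (ρ₀ ++ [i])) := by rw [hwt, hπρ]; exact hl
  obtain ⟨j, hj, hje⟩ := strongExchange cs ht hlt
  rw [List.length_append, List.length_singleton] at hj
  by_cases hjlast : j = ρ₀.length
  · have hlast : (ρ₀ ++ [i]).eraseIdx j = ρ₀ := by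
      rw [hjlast, List.eraseIdx_append_of_length_le le_rfl, Nat.sub_self]
      simp
    have hwe : w = x * σ i := by rw [← hwt, hje, hlast, hπ₀]
    rw [hwe]
    exact Relation.ReflTransGen.refl
  · have hjlt : j < ρ₀.length := by omega
    have herase : (ρ₀ ++ [i]).eraseIdx j = ρ₀.eraseIdx j ++ [i] :=
      List.eraseIdx_append_of_lt_length hjlt _
    have hwz : w = π (ρ₀.eraseIdx j) * σ i := by
      rw [← hwt, hje, herase, wordProd_append, wordProd_singleton]
    have hz : w * σ i = π (ρ₀.eraseIdx j) := by
      rw [hwz, cs.simple_mul_simple_cancel_right]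
    have h1 : BrStep cs w (w * σ i) := brStep_simple cs i hw
    have h2 : BrLE cs (w * σ i) (π ρ₀) := hz ▸ brStep_of_eraseIdx cs hρ₀red hjlt
    rw [← hπ₀]
    exact (Relation.ReflTransGen.single h1).trans h2

lemma length_mul_simple_cases (w : W) (i : B) :
    (ℓ (w * σ i) = ℓ w + 1 ∧ ℓ w < ℓ (w * σ i)) ∨
    (ℓ (w * σ i) + 1 = ℓ w ∧ ℓ (w * σ i) < ℓ w) := by
  rcases cs.length_mul_simple w i with h | h
  · left; omega
  · right; omega

lemma Z12 (n : ℕ) :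
    (∀ u v : W, ∀ i : B, ℓ v = n → ℓ v < ℓ (v * σ i) → BrLE cs u v →
      BrLE cs (u * σ i) (v * σ i)) ∧
    (∀ u v : W, ∀ i : B, ℓ v = n → ℓ (v * σ i) < ℓ v → BrLE cs u v →
      BrLE cs (u * σ i) v) := by
  induction n using Nat.strong_induction_on with
  | _ n ih =>
  constructor
  · intro u v i hn hup hle
    rcases Relation.ReflTransGen.cases_tail hle with heq | ⟨w, huw, hwv⟩
    · rw [heq]
      exact Relation.ReflTransGen.refl
    · obtain ⟨t, ht, hv, hlwv⟩ := hwv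
      rcases length_mul_simple_cases cs w i with ⟨h1, h2⟩ | ⟨h1, h2⟩
      · have ha : BrLE cs (u * σ i) (w * σ i) :=
          (ih (ℓ w) (by omega)).1 u w i rfl h2 huw
        have hb : BrStep cs (w * σ i) (v * σ i) := by
          refine ⟨σ i * t * σ i, ?_, ?_, ?_⟩
          · have := ht.conj (σ i)
            rwa [cs.inv_simple] at this
          · rw [hv]
            simp only [mul_assoc, cs.simple_mul_simple_cancel_left]
          · rcases length_mul_simple_cases cs v i with ⟨h3, h4⟩ | ⟨h3, h4⟩ <;> omega
        exact ha.tail hb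
      · have ha : BrLE cs (u * σ i) w := (ih (ℓ w) (by omega)).2 u w i rfl h2 huw
        have hb : BrStep cs w v := ⟨t, ht, hv, hlwv⟩
        have hc : BrStep cs v (v * σ i) := brStep_simple cs i hup
        exact (ha.tail hb).tail hc
  · intro u v i hn hdown hle
    rcases Relation.ReflTransGen.cases_tail hle with heq | ⟨w, huw, hwv⟩
    · subst heq
      refine Relation.ReflTransGen.single ⟨σ i, cs.isReflection_simple i, ?_, hdown⟩
      rw [cs.simple_mul_simple_cancel_right]
    · obtain ⟨t, ht, hv, hlwv⟩ := hwv
      rcases length_mul_simple_cases cs w i with ⟨h1, h2⟩ | ⟨h1, h2⟩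
      · have ha : BrLE cs (u * σ i) (w * σ i) :=
          (ih (ℓ w) (by omega)).1 u w i rfl h2 huw
        have hb : BrLE cs (w * σ i) v := chain_aux1 cs ht hv hlwv hdown
        exact ha.trans hb
      · have ha : BrLE cs (u * σ i) w := (ih (ℓ w) (by omega)).2 u w i rfl h2 huw
        exact ha.tail ⟨t, ht, hv, hlwv⟩

lemma Z1 {u v : W} {i : B} (hup : ℓ v < ℓ (v * σ i)) (hle : BrLE cs u v) :
    BrLE cs (u * σ i) (v * σ i) :=
  (Z12 cs (ℓ v)).1 u v i rfl hup hle

lemma Z3 (n : ℕ) : ∀ u x : W, ∀ i : B, ℓ x = n → ℓ (x * σ i) < ℓ x → ℓ u < ℓ (u * σ i) →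
    BrLE cs u x → BrLE cs u (x * σ i) := by
  induction n using Nat.strong_induction_on with
  | _ n ih =>
  intro u x i hn hxd hud hle
  rcases Relation.ReflTransGen.cases_tail hle with heq | ⟨w, huw, hwx⟩
  · exfalso
    rw [heq] at hxd
    omega
  · obtain ⟨t, ht, hx, hlwx⟩ := hwx
    rcases length_mul_simple_cases cs w i with ⟨h1, h2⟩ | ⟨h1, h2⟩
    · exact huw.trans (chain_aux2 cs ht hx hlwx hxd h2)
    · have ha : BrLE cs u (w * σ i) := ih (ℓ w) (by omega) u w i rfl h2 hud huw
      have hb : BrStep cs (w * σ i) (x * σ i) := by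
        refine ⟨σ i * t * σ i, ?_, ?_, ?_⟩
        · have := ht.conj (σ i)
          rwa [cs.inv_simple] at this
        · rw [hx]
          simp only [mul_assoc, cs.simple_mul_simple_cancel_left]
        · rcases length_mul_simple_cases cs x i with ⟨h3, h4⟩ | ⟨h3, h4⟩ <;> omega
      exact ha.tail hb

lemma brLE_of_sublist {ρ : List B} (hρ : cs.IsReduced ρ) :
    ∀ {σl : List B}, σl.Sublist ρ → BrLE cs (π σl) (π ρ) := by
  induction ρ using List.reverseRecOn with
  | nil =>
      intro σl hs
      rw [List.sublist_nil.mp hs]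
      exact Relation.ReflTransGen.refl
  | append_singleton ρ₀ x ih =>
      intro σl hs
      have hρ₀ : cs.IsReduced ρ₀ := isReduced_append_left cs hρ
      have hup : ℓ (π ρ₀) < ℓ (π ρ₀ * σ x) := by
        have h1 : ℓ (π (ρ₀ ++ [x])) = ρ₀.length + 1 := by
          rw [hρ, List.length_append, List.length_singleton]
        rw [wordProd_append, wordProd_singleton] at h1
        have h2 : ℓ (π ρ₀) = ρ₀.length := hρ₀
        omega
      obtain ⟨σ₁, σ₂, rfl, hs1, hs2⟩ := List.sublist_append_iff.mp hs
      rcases List.sublist_singleton.mp hs2 with rfl | rfl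
      · have h3 := ih hρ₀ hs1
        rw [List.append_nil, wordProd_append, wordProd_singleton]
        exact h3.tail (brStep_simple cs x hup)
      · have h3 := ih hρ₀ hs1
        rw [wordProd_append, wordProd_singleton, wordProd_append, wordProd_singleton]
        exact Z1 cs hup h3

lemma bruhatLE_iff_brLE {u v : W} : BruhatLE cs u v ↔ BrLE cs u v := by
  constructor
  · rintro ⟨ω, hred, rfl, ω', hsub, rfl⟩
    exact brLE_of_sublist cs hred hsub
  · intro h
    obtain ⟨ρ, hρ, hv⟩ := cs.exists_reduced_word' v
    obtain ⟨σl, hsub, _, hπ⟩ := exists_reduced_sublist_of_brLE cs h hρ hv.symm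
    exact ⟨ρ, hρ, hv.symm, σl, hsub, hπ⟩

lemma bruhatLE_trans {u v w : W} (h1 : BruhatLE cs u v) (h2 : BruhatLE cs v w) :
    BruhatLE cs u w := by
  rw [bruhatLE_iff_brLE] at h1 h2 ⊢
  exact h1.trans h2

lemma bruhatLE_length_lt {u v : W} (h : BruhatLE cs u v) (hne : u ≠ v) : ℓ u < ℓ v := by
  obtain ⟨ω, hred, rfl, ω', hsub, rfl⟩ := h
  have h1 : ℓ (π ω') ≤ ω'.length := cs.length_wordProd_le ω'
  have h2 : ω'.length ≤ ω.length := hsub.length_le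
  have h3 : ℓ (π ω) = ω.length := hred
  rcases lt_or_eq_of_le (h1.trans (h2.trans_eq h3.symm)) with hlt | heqq
  · exact hlt
  · exfalso
    have h4 : ω'.length = ω.length := by omega
    rw [hsub.eq_of_length h4] at hne
    exact hne rfl

lemma bruhatLE_mul_simple_right {u x : W} (i : B) (h : BruhatLE cs u x)
    (hu : ℓ u < ℓ (u * σ i)) : BruhatLE cs u (x * σ i) := by
  rw [bruhatLE_iff_brLE] at h ⊢
  rcases length_mul_simple_cases cs x i with ⟨h1, h2⟩ | ⟨h1, h2⟩
  · exact h.tail (brStep_simple cs i h2)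
  · exact Z3 cs (ℓ x) u x i rfl h2 hu h

lemma brLE_inv {u v : W} (h : BrLE cs u v) : BrLE cs u⁻¹ v⁻¹ := by
  refine Relation.ReflTransGen.lift (fun w => w⁻¹) ?_ _ _ h
  rintro a b ⟨t, ht, rfl, hl⟩
  show BrStep cs a⁻¹ (a * t)⁻¹
  refine ⟨a * t * a⁻¹, ht.conj a, ?_, ?_⟩
  · show (a * t)⁻¹ = a⁻¹ * (a * t * a⁻¹)
    rw [mul_inv_rev, ht.inv]
    group
  · rw [cs.length_inv, cs.length_inv]
    exact hl

lemma bruhatLE_mul_simple_left {u x : W} (i : B) (h : BruhatLE cs u x)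
    (hu : ℓ u < ℓ (σ i * u)) : BruhatLE cs u (σ i * x) := by
  rw [bruhatLE_iff_brLE] at h ⊢
  have h' := brLE_inv cs h
  have hiu : u⁻¹ * σ i = (σ i * u)⁻¹ := by rw [mul_inv_rev, cs.inv_simple]
  have hu' : ℓ u⁻¹ < ℓ (u⁻¹ * σ i) := by
    rw [hiu, cs.length_inv, cs.length_inv]
    exact hu
  have h2 : BrLE cs u⁻¹ (x⁻¹ * σ i) := by
    rcases length_mul_simple_cases cs x⁻¹ i with ⟨h1, h2⟩ | ⟨h1, h2⟩
    · exact h'.tail (brStep_simple cs i h2)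
    · exact Z3 cs (ℓ x⁻¹) u⁻¹ x⁻¹ i rfl h2 hu' h'
  have h3 := brLE_inv cs h2
  rwa [mul_inv_rev, inv_inv, inv_inv, cs.inv_simple] at h3

lemma exists_word_of_mem_closure {X : Set B} {g : W}
    (hg : g ∈ Subgroup.closure (cs.simple '' X)) :
    ∃ ω : List B, (∀ i ∈ ω, i ∈ X) ∧ π ω = g := by
  induction hg using Subgroup.closure_induction with
  | mem x hx =>
      obtain ⟨i, hi, rfl⟩ := hx
      exact ⟨[i], by simpa using hi, cs.wordProd_singleton i⟩
  | one => exact ⟨[], by simp, rfl⟩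
  | mul a b ha hb iha ihb =>
      obtain ⟨ω₁, hm1, rfl⟩ := iha
      obtain ⟨ω₂, hm2, rfl⟩ := ihb
      refine ⟨ω₁ ++ ω₂, ?_, cs.wordProd_append ω₁ ω₂⟩
      intro i hi
      rcases List.mem_append.mp hi with h | h
      · exact hm1 i h
      · exact hm2 i h
  | inv a ha iha =>
      obtain ⟨ω, hm, rfl⟩ := iha
      exact ⟨ω.reverse, fun i hi => hm i (List.mem_reverse.mp hi), cs.wordProd_reverse ω⟩

end BruhatDev

open BruhatDev in
/-- Given standard parabolic subgroups `W₁, W₂` and `u, v ∈ W`, with `m₁ = brmin(W₁uW₂)`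
and `m₂ = brmin(W₁vW₂)`: one has `m₁ ≤ m₂` if and only if there exist `u' ∈ W₁uW₂` and
`v' ∈ W₁vW₂` with `u' ≤ v'`.  In particular, if `m₁ ≤ v'` for some `v' ∈ W₁vW₂`, then
`m₁ ≤ v''` for every `v'' ∈ W₁vW₂`. -/
theorem stmt_7 (cs : CoxeterSystem M W) (W₁ W₂ : Subgroup W)
    (h₁ : IsStdParabolic cs W₁) (h₂ : IsStdParabolic cs W₂) (u v m₁ m₂ : W)
    (hm₁ : IsBrMin cs (dblCoset W₁ W₂ u) m₁)
    (hm₂ : IsBrMin cs (dblCoset W₁ W₂ v) m₂) :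
    (BruhatLE cs m₁ m₂ ↔
      ∃ u' ∈ dblCoset W₁ W₂ u, ∃ v' ∈ dblCoset W₁ W₂ v, BruhatLE cs u' v') ∧
    ((∃ v' ∈ dblCoset W₁ W₂ v, BruhatLE cs m₁ v') →
      ∀ v'' ∈ dblCoset W₁ W₂ v, BruhatLE cs m₁ v'') := by
  obtain ⟨X₁, hX₁⟩ := h₁
  obtain ⟨X₂, hX₂⟩ := h₂
  obtain ⟨a₀, ha₀, b₀, hb₀, hm₁u⟩ := hm₁.1
  have hstepR : ∀ (i : B), i ∈ X₂ → ∀ x : W, BruhatLE cs m₁ x →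
      BruhatLE cs m₁ (x * cs.simple i) := by
    intro i hi x hx
    have hsi : cs.simple i ∈ W₂ := by
      rw [hX₂]
      exact Subgroup.subset_closure ⟨i, hi, rfl⟩
    have hmem : m₁ * cs.simple i ∈ dblCoset W₁ W₂ u := by
      refine ⟨a₀, ha₀, b₀ * cs.simple i, mul_mem hb₀ hsi, ?_⟩
      rw [hm₁u]
      simp only [mul_assoc]
    have hle := hm₁.2 _ hmem
    have hne : m₁ ≠ m₁ * cs.simple i := by
      intro hc
      have hs1 : cs.simple i = 1 := by
        have := left_eq_mul.mp hc
        exact this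
      have hl1 := cs.length_simple i
      rw [hs1, cs.length_one] at hl1
      exact absurd hl1 (by omega)
    have hlen : cs.length m₁ < cs.length (m₁ * cs.simple i) :=
      bruhatLE_length_lt cs hle hne
    exact bruhatLE_mul_simple_right cs i hx hlen
  have hstepL : ∀ (i : B), i ∈ X₁ → ∀ x : W, BruhatLE cs m₁ x →
      BruhatLE cs m₁ (cs.simple i * x) := by
    intro i hi x hx
    have hsi : cs.simple i ∈ W₁ := by
      rw [hX₁]
      exact Subgroup.subset_closure ⟨i, hi, rfl⟩
    have hmem : cs.simple i * m₁ ∈ dblCoset W₁ W₂ u := by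
      refine ⟨cs.simple i * a₀, mul_mem hsi ha₀, b₀, hb₀, ?_⟩
      rw [hm₁u]
      simp only [mul_assoc]
    have hle := hm₁.2 _ hmem
    have hne : m₁ ≠ cs.simple i * m₁ := by
      intro hc
      have hs1 : cs.simple i = 1 := right_eq_mul.mp hc
      have hl1 := cs.length_simple i
      rw [hs1, cs.length_one] at hl1
      exact absurd hl1 (by omega)
    have hlen : cs.length m₁ < cs.length (cs.simple i * m₁) :=
      bruhatLE_length_lt cs hle hne
    exact bruhatLE_mul_simple_left cs i hx hlen
  have hmulR : ∀ (ω : List B), (∀ j ∈ ω, j ∈ X₂) → ∀ x, BruhatLE cs m₁ x →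
      BruhatLE cs m₁ (x * cs.wordProd ω) := by
    intro ω
    induction ω using List.reverseRecOn with
    | nil =>
        intro _ x hx
        simpa using hx
    | append_singleton ω₀ i ih =>
        intro hmem x hx
        have h0 := ih (fun j hj => hmem j (List.mem_append_left _ hj)) x hx
        have he : x * cs.wordProd (ω₀ ++ [i]) = (x * cs.wordProd ω₀) * cs.simple i := by
          rw [cs.wordProd_append, cs.wordProd_singleton, mul_assoc]
        rw [he]
        exact hstepR i (hmem i (by simp)) _ h0
  have hmulL : ∀ (ω : List B), (∀ j ∈ ω, j ∈ X₁) → ∀ x, BruhatLE cs m₁ x →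
      BruhatLE cs m₁ (cs.wordProd ω * x) := by
    intro ω
    induction ω with
    | nil =>
        intro _ x hx
        simpa using hx
    | cons i ω₀ ih =>
        intro hmem x hx
        have h0 := ih (fun j hj => hmem j (List.mem_cons_of_mem _ hj)) x hx
        rw [cs.wordProd_cons, mul_assoc]
        exact hstepL i (hmem i (by simp)) _ h0
  have part2 : (∃ v' ∈ dblCoset W₁ W₂ v, BruhatLE cs m₁ v') →
      ∀ v'' ∈ dblCoset W₁ W₂ v, BruhatLE cs m₁ v'' := by
    rintro ⟨v', ⟨a, ha, b, hb, rfl⟩, hlev⟩ v'' ⟨a', ha', b', hb', rfl⟩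
    have hbmem : b⁻¹ * b' ∈ Subgroup.closure (cs.simple '' X₂) := by
      rw [← hX₂]
      exact mul_mem (inv_mem hb) hb'
    obtain ⟨ω, hω, hπ⟩ := exists_word_of_mem_closure cs hbmem
    have h1 : BruhatLE cs m₁ ((a * v * b) * (b⁻¹ * b')) := by
      rw [← hπ]
      exact hmulR ω hω _ hlev
    have hamem : a' * a⁻¹ ∈ Subgroup.closure (cs.simple '' X₁) := by
      rw [← hX₁]
      exact mul_mem ha' (inv_mem ha)
    obtain ⟨ω', hω', hπ'⟩ := exists_word_of_mem_closure cs hamem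
    have h2 : BruhatLE cs m₁ ((a' * a⁻¹) * ((a * v * b) * (b⁻¹ * b'))) := by
      rw [← hπ']
      exact hmulL ω' hω' _ h1
    have he : (a' * a⁻¹) * ((a * v * b) * (b⁻¹ * b')) = a' * v * b' := by group
    rwa [he] at h2
  refine ⟨⟨fun h => ⟨m₁, hm₁.1, m₂, hm₂.1, h⟩, ?_⟩, part2⟩
  rintro ⟨u', hu', v', hv', huv⟩
  have h1 : BruhatLE cs m₁ v' := bruhatLE_trans cs (hm₁.2 u' hu') huv
  exact part2 ⟨v', hv', h1⟩ m₂ hm₂.1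
end

section
/- Let (W,S) be a Coxeter system, W₁ and W₂ standard parabolic subgroups, and u, v ∈ W with brmin(W₁uW₂) ≤ brmin(W₁vW₂) in the Bruhat order. Then, for any u′ ∈ W₁uW₂, there exists v′ ∈ W₁vW₂ with u′ ≤ v′. -/
variable {B W : Type*} [Group W] {M : CoxeterMatrix B}

open CoxeterSystem List
open scoped Classical

namespace BruhatAux

variable (cs : CoxeterSystem M W)

local prefix:100 "s" => cs.simple
local prefix:100 "π" => cs.wordProd
local prefix:100 "ℓ" => cs.length
local prefix:100 "ris" => cs.rightInvSeq

/-- underlying function of the sign permutation -/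
noncomputable def sigmaFun (i : B) : W × ℤˣ → W × ℤˣ :=
  fun x => (s i * x.1 * s i, x.2 * (if x.1 = s i then -1 else 1))

lemma sigmaFun_invol (i : B) : Function.Involutive (sigmaFun cs i) := by
  rintro ⟨t, ε⟩
  simp only [sigmaFun]
  have h1 : s i * (s i * t * s i) * s i = t := by
    simp [mul_assoc, cs.simple_mul_simple_cancel_left, cs.simple_mul_simple_cancel_right]
  have h2 : (s i * t * s i = s i) ↔ (t = s i) := by
    constructor
    · intro h
      have := congrArg (fun z => s i * z * s i) h
      simpa [mul_assoc, cs.simple_mul_simple_cancel_left,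
        cs.simple_mul_simple_cancel_right] using this
    · rintro rfl; simp [cs.simple_mul_simple_cancel_right, cs.simple_mul_simple_self]
  refine Prod.ext h1 ?_
  by_cases h : t = s i
  · simp [h, h2]
  · simp [h, h2]

/-- the sign permutation associated to a simple reflection -/
noncomputable def sigma (i : B) : Equiv.Perm (W × ℤˣ) := (sigmaFun_invol cs i).toPerm

lemma sigma_apply (i : B) (t : W) (ε : ℤˣ) :
    sigma cs i (t, ε) = (s i * t * s i, ε * (if t = s i then -1 else 1)) := rfl

end BruhatAux

namespace BruhatAux2

open BruhatAux Finset

variable (cs : CoxeterSystem M W)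

local prefix:100 "s" => cs.simple
local prefix:100 "π" => cs.wordProd
local prefix:100 "ℓ" => cs.length

lemma conj_pow (i j : B) (r : ℤ) :
    s j * (s i * s j) ^ r = (s i * s j) ^ (-r) * s j := by
  have key : MulAut.conj (s j) (s i * s j) = (s i * s j)⁻¹ := by
    simp only [MulAut.conj_apply, cs.inv_simple, mul_inv_rev]
    rw [← mul_assoc, mul_assoc _ (s j) (s j), cs.simple_mul_simple_self, mul_one]
  have h2 : MulAut.conj (s j) ((s i * s j) ^ r) = (s i * s j) ^ (-r) := by
    rw [map_zpow, key, inv_zpow, ← zpow_neg]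
  simp only [MulAut.conj_apply, cs.inv_simple] at h2
  calc s j * (s i * s j) ^ r = s j * (s i * s j) ^ r * s j * s j := by
        rw [cs.simple_mul_simple_cancel_right]
    _ = (s i * s j) ^ (-r) * s j := by rw [h2]

/-- the sign multiplier of one application of `sigma i * sigma j` -/
noncomputable def nu (i j : B) (x : W) : ℤˣ :=
  (if x = s j then -1 else 1) * (if s j * x * s j = s i then -1 else 1)

lemma conj_eq_iff (a x y : W) : a * x * a⁻¹ = y ↔ x = a⁻¹ * y * a := by
  constructor
  · intro h; rw [← h]; group
  · intro h; rw [h]; group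

lemma sigma_mul_apply (i j : B) (t : W) (ε : ℤˣ) :
    (sigma cs i * sigma cs j) (t, ε) =
      ((s i * s j) * t * (s i * s j)⁻¹, ε * nu cs i j t) := by
  show sigma cs i (sigma cs j (t, ε)) = _
  rw [sigma_apply, sigma_apply, nu]
  refine Prod.ext ?_ ?_
  · show s i * (s j * t * s j) * s i = (s i * s j) * t * (s i * s j)⁻¹
    simp [mul_assoc]
  · show ε * _ * _ = ε * _
    rw [mul_assoc]

lemma sigma_pow_apply (i j : B) (k : ℕ) (t : W) (ε : ℤˣ) :
    ((sigma cs i * sigma cs j) ^ k) (t, ε) =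
      ((s i * s j) ^ k * t * ((s i * s j) ^ k)⁻¹,
        ε * ∏ r ∈ Finset.range k,
          nu cs i j ((s i * s j) ^ r * t * ((s i * s j) ^ r)⁻¹)) := by
  induction k generalizing t ε with
  | zero => simp
  | succ k ih =>
      rw [pow_succ, Equiv.Perm.mul_apply, sigma_mul_apply, ih]
      refine Prod.ext ?_ ?_
      · show (s i * s j) ^ k * ((s i * s j) * t * (s i * s j)⁻¹) * ((s i * s j) ^ k)⁻¹ = _
        rw [pow_succ]
        group
      · show ε * nu cs i j t * ∏ r ∈ Finset.range k,
            nu cs i j ((s i * s j) ^ r * ((s i * s j) * t * (s i * s j)⁻¹) * ((s i * s j) ^ r)⁻¹)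
          = ε * ∏ r ∈ Finset.range (k + 1),
              nu cs i j ((s i * s j) ^ r * t * ((s i * s j) ^ r)⁻¹)
        rw [Finset.prod_range_succ']
        have hr : ∀ r : ℕ, nu cs i j ((s i * s j) ^ (r + 1) * t * ((s i * s j) ^ (r + 1))⁻¹)
            = nu cs i j
                ((s i * s j) ^ r * ((s i * s j) * t * (s i * s j)⁻¹) * ((s i * s j) ^ r)⁻¹) := by
          intro r; congr 1; simp [pow_succ, mul_assoc, mul_inv_rev]
        rw [Finset.prod_congr rfl fun r _ => hr r]
        have h0 : (s i * s j) ^ 0 * t * ((s i * s j) ^ 0)⁻¹ = t := by norm_num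
        rw [h0, mul_assoc, mul_comm (nu cs i j t)]

lemma double_prod (f : ℕ → ℤˣ) (m : ℕ) :
    ∏ r ∈ Finset.range m, (f (2 * r) * f (2 * r + 1)) = ∏ e ∈ Finset.range (2 * m), f e := by
  induction m with
  | zero => simp
  | succ m ih =>
      rw [Finset.prod_range_succ, ih]
      have : 2 * (m + 1) = (2 * m + 1) + 1 := by ring
      rw [this, Finset.prod_range_succ, Finset.prod_range_succ, mul_assoc]

lemma sigma_liftable : M.IsLiftable (sigma cs) := by
  intro i j
  have hpm : (s i * s j) ^ M i j = 1 := cs.simple_mul_simple_pow i j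
  apply Equiv.ext
  rintro ⟨t, ε⟩
  rw [sigma_pow_apply, hpm]
  set χ : ℕ → ℤˣ := fun e => if t = (s i * s j) ^ (-(e : ℤ)) * s j then -1 else 1 with hχ
  have hnu : ∀ r : ℕ, nu cs i j ((s i * s j) ^ r * t * ((s i * s j) ^ r)⁻¹)
      = χ (2 * r) * χ (2 * r + 1) := by
    intro r
    have hconj : ∀ z : ℤ, ((s i * s j) ^ z)⁻¹ * s j * (s i * s j) ^ z
        = (s i * s j) ^ (-(2 * z)) * s j := by
      intro z
      rw [mul_assoc, conj_pow cs i j z, ← mul_assoc, ← zpow_neg, ← zpow_add]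
      ring_nf
    have hc1 : ((s i * s j) ^ r * t * ((s i * s j) ^ r)⁻¹ = s j)
        ↔ (t = (s i * s j) ^ (-(2 * r : ℕ) : ℤ) * s j) := by
      rw [conj_eq_iff, ← zpow_natCast (s i * s j) r, hconj]
      push_cast
      norm_num
    have hc2 : (s j * ((s i * s j) ^ r * t * ((s i * s j) ^ r)⁻¹) * s j = s i) ↔
        (t = (s i * s j) ^ (-(2 * r + 1 : ℕ) : ℤ) * s j) := by
      have e1 : (s j * ((s i * s j) ^ r * t * ((s i * s j) ^ r)⁻¹) * s j = s i) ↔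
          ((s i * s j) ^ r * t * ((s i * s j) ^ r)⁻¹ = s j * s i * s j) := by
        rw [show s j * ((s i * s j) ^ r * t * ((s i * s j) ^ r)⁻¹) * s j
              = s j * ((s i * s j) ^ r * t * ((s i * s j) ^ r)⁻¹) * (s j)⁻¹ by
            rw [cs.inv_simple],
          conj_eq_iff, cs.inv_simple]
      rw [e1, conj_eq_iff, ← zpow_natCast (s i * s j) r]
      have e3 : s j * s i * s j = (s i * s j) ^ (-1 : ℤ) * s j := by
        rw [zpow_neg_one]
        simp [mul_assoc]
      have e2 : ((s i * s j) ^ (r : ℤ))⁻¹ * (s j * s i * s j) * (s i * s j) ^ (r : ℤ)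
          = (s i * s j) ^ (-(2 * r + 1 : ℕ) : ℤ) * s j := by
        rw [e3, ← mul_assoc, mul_assoc _ (s j) _, conj_pow cs i j ((r : ℤ)), ← zpow_neg,
          ← zpow_add, ← mul_assoc, ← zpow_add]
        congr 2
        push_cast
        ring
      rw [e2]
    rw [nu, hχ]
    simp only [hc1, hc2]
  have key : (ε * ∏ r ∈ Finset.range (M i j),
      nu cs i j ((s i * s j) ^ r * t * ((s i * s j) ^ r)⁻¹)) = ε := by
    rw [Finset.prod_congr rfl fun r _ => hnu r, double_prod, two_mul, Finset.prod_range_add]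
    have hper : ∀ e, χ (M i j + e) = χ e := by
      intro e
      have heq : ((s i * s j) : W) ^ (-(↑(M i j + e) : ℤ)) = (s i * s j) ^ (-(e : ℤ)) := by
        have h9 : (-(↑(M i j + e) : ℤ)) = (-(e : ℤ)) + (-((M i j : ℕ) : ℤ)) := by
          push_cast; ring
        have hm1 : ((s i * s j) : W) ^ (-((M i j : ℕ) : ℤ)) = 1 := by
          rw [zpow_neg, zpow_natCast, hpm, inv_one]
        rw [h9, zpow_add, hm1, mul_one]
      rw [hχ]
      simp only [heq]
    rw [Finset.prod_congr rfl fun e _ => hper e, Int.units_mul_self, mul_one]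
  rw [key]
  simp

end BruhatAux2

namespace StrongExchange

open BruhatAux BruhatAux2

variable (cs : CoxeterSystem M W)

local prefix:100 "s" => cs.simple
local prefix:100 "π" => cs.wordProd
local prefix:100 "ℓ" => cs.length
local prefix:100 "ris" => cs.rightInvSeq

/-- the sign representation homomorphism -/
noncomputable def Phi : W →* Equiv.Perm (W × ℤˣ) :=
  cs.lift ⟨sigma cs, sigma_liftable cs⟩

lemma Phi_simple (i : B) : Phi cs (s i) = sigma cs i :=
  cs.lift_apply_simple (sigma_liftable cs) i

lemma ris_cons (i : B) (ω : List B) :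
    cs.rightInvSeq (i :: ω) = ((π ω)⁻¹ * (s i) * (π ω)) :: cs.rightInvSeq ω := rfl

lemma Phi_wordProd (ω : List B) (t : W) (ε : ℤˣ) :
    Phi cs (π ω) (t, ε) =
      (π ω * t * (π ω)⁻¹,
        ε * ((ris ω).map (fun x => if x = t then (-1 : ℤˣ) else 1)).prod) := by
  induction ω generalizing ε with
  | nil => simp [wordProd_nil]
  | cons i ω ih =>
      rw [cs.wordProd_cons, map_mul, Equiv.Perm.mul_apply, ih, Phi_simple, sigma_apply,
        ris_cons]
      refine Prod.ext ?_ ?_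
      · show s i * (π ω * t * (π ω)⁻¹) * s i = (s i * π ω) * t * (s i * π ω)⁻¹
        simp [mul_assoc, mul_inv_rev]
      · show (ε * _) * _ = ε * _
        rw [List.map_cons, List.prod_cons]
        have hcond : (π ω * t * (π ω)⁻¹ = s i) ↔ ((π ω)⁻¹ * s i * π ω = t) := by
          rw [conj_eq_iff]
          constructor
          · intro h; exact h.symm
          · intro h; exact h.symm
        have units_aux : ∀ a b c : ℤˣ, a * b * c = a * (c * b) := by
          intro a b c; rw [mul_assoc, mul_comm b c]
        by_cases h : π ω * t * (π ω)⁻¹ = s i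
        · rw [if_pos h, if_pos (hcond.mp h)]
          exact units_aux _ _ _
        · rw [if_neg h, if_neg (fun hc => h (hcond.mpr hc))]
          exact units_aux _ _ _

lemma Phi_eval (w t : W) (ε : ℤˣ) :
    Phi cs w (t, ε) = (w * t * w⁻¹, ε * (Phi cs w (t, 1)).2) := by
  obtain ⟨ω, _, rfl⟩ := cs.exists_reduced_word' w
  rw [Phi_wordProd, Phi_wordProd]
  simp

lemma Phi_refl_sign_word (θ : List B) (k : B) (ε : ℤˣ) :
    Phi cs (π θ * s k * (π θ)⁻¹) ((π θ * s k * (π θ)⁻¹), ε)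
      = (π θ * s k * (π θ)⁻¹, -ε) := by
  induction θ generalizing ε with
  | nil =>
      simp only [wordProd_nil, one_mul, inv_one, mul_one, Phi_simple, sigma_apply]
      rw [cs.simple_mul_simple_cancel_right]
      simp
  | cons i θ ih =>
      have hw : π (i :: θ) * s k * (π (i :: θ))⁻¹
          = s i * (π θ * s k * (π θ)⁻¹) * s i := by
        rw [cs.wordProd_cons, mul_inv_rev, cs.inv_simple]
        group
      set a := π θ * s k * (π θ)⁻¹ with ha
      rw [hw]
      have hsplit : Phi cs (s i * a * s i) = Phi cs (s i) * Phi cs a * Phi cs (s i) := by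
        rw [← map_mul, ← map_mul]
      rw [hsplit, Phi_simple]
      show (sigma cs i) ((Phi cs a) ((sigma cs i) (s i * a * s i, ε))) = _
      have h1 : s i * (s i * a * s i) * s i = a := by
        simp [mul_assoc, cs.simple_mul_simple_cancel_left, cs.simple_mul_simple_cancel_right]
      have hinner : (sigma cs i) (s i * a * s i, ε)
          = (a, ε * (if s i * a * s i = s i then -1 else 1)) := by
        rw [sigma_apply, h1]
      rw [hinner, ih, sigma_apply]
      have hcond : (s i * a * s i = s i) ↔ (a = s i) := by
        constructor
        · intro h
          have := congrArg (fun z => s i * z * s i) h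
          simpa [mul_assoc, cs.simple_mul_simple_cancel_left,
            cs.simple_mul_simple_cancel_right] using this
        · rintro h; rw [h, cs.simple_mul_simple_cancel_right]
      refine Prod.ext rfl ?_
      show -(ε * _) * _ = -ε
      by_cases h : a = s i
      · rw [if_pos h, if_pos (hcond.mpr h)]
        simp
      · rw [if_neg (fun hc => h (hcond.mp hc)), if_neg h]
        simp

lemma Phi_refl_sign {t : W} (ht : cs.IsReflection t) (ε : ℤˣ) :
    Phi cs t (t, ε) = (t, -ε) := by
  obtain ⟨w, k, rfl⟩ := ht
  obtain ⟨θ, _, rfl⟩ := cs.exists_reduced_word' w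
  exact Phi_refl_sign_word cs θ k ε

/-- Strong exchange property: membership in the right inversion sequence. -/
lemma mem_rightInvSeq_of_isRightInversion {ω : List B} (hω : cs.IsReduced ω) {t : W}
    (ht : cs.IsRightInversion (π ω) t) : t ∈ ris ω := by
  by_contra hmem
  -- the sign of t under Phi (π ω) is 1 since t does not occur in ris ω
  have hsign1 : (Phi cs (π ω) (t, 1)).2 = 1 := by
    rw [Phi_wordProd]
    show (1 : ℤˣ) * _ = 1
    rw [one_mul]
    apply List.prod_eq_one
    intro x hx
    simp only [List.mem_map] at hx
    obtain ⟨y, hy, rfl⟩ := hx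
    rw [if_neg]
    rintro rfl
    exact hmem hy
  -- but the sign of t under Phi (π ω * t) is -1
  obtain ⟨ρ, hρ, hv⟩ := cs.exists_reduced_word' (π ω * t)
  have hsign2 : (Phi cs (π ω * t) (t, 1)).2 = -1 := by
    rw [map_mul, Equiv.Perm.mul_apply, Phi_refl_sign cs ht.1, Phi_eval, hsign1]
    simp
  -- hence t occurs in ris ρ, so it is a right inversion of π ω * t
  have hmem2 : t ∈ cs.rightInvSeq ρ := by
    by_contra hmem2
    have : (Phi cs (π ω * t) (t, 1)).2 = 1 := by
      rw [hv, Phi_wordProd]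
      show (1 : ℤˣ) * _ = 1
      rw [one_mul]
      apply List.prod_eq_one
      intro x hx
      simp only [List.mem_map] at hx
      obtain ⟨y, hy, rfl⟩ := hx
      rw [if_neg]
      rintro rfl
      exact hmem2 hy
    rw [this] at hsign2
    exact absurd hsign2 (by decide)
  have hinv2 : cs.IsRightInversion (π ρ) t := cs.isRightInversion_of_mem_rightInvSeq hρ hmem2
  rw [← hv] at hinv2
  have h3 : π ω * t * t = π ω := by
    rw [mul_assoc, ht.1.mul_self, mul_one]
  have h4 := hinv2.2
  rw [h3] at h4
  exact Nat.lt_asymm ht.2 h4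

/-- Strong exchange, eraseIdx form. -/
lemma exists_eraseIdx_of_isRightInversion {ω : List B} (hω : cs.IsReduced ω) {t : W}
    (ht : cs.IsRightInversion (π ω) t) :
    ∃ j, j < ω.length ∧ π (ω.eraseIdx j) = π ω * t := by
  have hmem := mem_rightInvSeq_of_isRightInversion cs hω ht
  obtain ⟨j, hj, hget⟩ := List.getElem_of_mem hmem
  rw [cs.length_rightInvSeq] at hj
  refine ⟨j, hj, ?_⟩
  rw [← cs.wordProd_mul_getD_rightInvSeq ω j]
  congr 1
  rw [List.getD_eq_getElem _ _ (by rwa [cs.length_rightInvSeq])]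
  exact hget

end StrongExchange

namespace BruhatOrder

open BruhatAux BruhatAux2 StrongExchange

variable (cs : CoxeterSystem M W)

local prefix:100 "s" => cs.simple
local prefix:100 "π" => cs.wordProd
local prefix:100 "ℓ" => cs.length

/-- Any word contains a reduced sublist with the same product. -/
lemma exists_reduced_sublist : ∀ (n : ℕ) (τ : List B), τ.length ≤ n →
    ∃ τ', τ' <+ τ ∧ cs.IsReduced τ' ∧ π τ' = π τ := by
  intro n
  induction n using Nat.strong_induction_on with
  | _ n ih =>
    intro τ hlen
    by_cases hred : cs.IsReduced τ
    · exact ⟨τ, List.Sublist.refl τ, hred, rfl⟩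
    have hτne : τ.length ≠ 0 := by
      intro h0
      rw [List.length_eq_zero_iff] at h0
      subst h0
      exact hred (by simp [CoxeterSystem.IsReduced])
    have hP : ¬ cs.IsReduced (τ.take (τ.length - 1 + 1)) := by
      rw [Nat.sub_add_cancel (Nat.one_le_iff_ne_zero.mpr hτne), List.take_length]
      exact hred
    have hex : ∃ m, ¬ cs.IsReduced (τ.take (m + 1)) := ⟨τ.length - 1, hP⟩
    classical
    set k := Nat.find hex with hk
    have hkspec : ¬ cs.IsReduced (τ.take (k + 1)) := Nat.find_spec hex
    have hkmin : ∀ m, m < k → cs.IsReduced (τ.take (m + 1)) := by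
      intro m hm
      by_contra hcon
      exact Nat.find_min hex hm hcon
    have hkred : cs.IsReduced (τ.take k) := by
      rcases Nat.eq_zero_or_pos k with h0 | hpos
      · rw [h0]
        simp [CoxeterSystem.IsReduced]
      · have := hkmin (k - 1) (by omega)
        rwa [Nat.sub_add_cancel hpos] at this
    have hklt : k < τ.length := by
      have := Nat.find_le (h := hex) hP
      omega
    -- decompose τ
    have hτdec : τ = τ.take k ++ τ[k] :: τ.drop (k + 1) := by
      conv_lhs => rw [← List.take_append_drop (k + 1) τ]
      rw [List.take_succ, List.getElem?_eq_getElem hklt]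
      simp
    have htake : τ.take (k + 1) = τ.take k ++ [τ[k]] := by
      rw [List.take_succ, List.getElem?_eq_getElem hklt]
      simp
    -- the letter at position k is a right inversion of π (take k)
    have hlen_take : (τ.take k).length = k := by
      rw [List.length_take]
      omega
    have hdescent : ℓ (π (τ.take k) * s τ[k]) < ℓ (π (τ.take k)) := by
      have hne := cs.length_mul_simple (π (τ.take k)) τ[k]
      have hprod : π (τ.take (k + 1)) = π (τ.take k) * s τ[k] := by
        rw [htake, cs.wordProd_append]
        simp [CoxeterSystem.wordProd_cons, CoxeterSystem.wordProd_nil]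
      have hnotred : ℓ (π (τ.take k) * s τ[k]) ≠ k + 1 := by
        intro heq
        apply hkspec
        rw [CoxeterSystem.IsReduced, hprod, heq, List.length_take]
        omega
      have hzk : ℓ (π (τ.take k)) = k := by
        rw [CoxeterSystem.IsReduced] at hkred
        rw [hkred, hlen_take]
      rcases hne with h | h
      · omega
      · omega
    have hinv : cs.IsRightInversion (π (τ.take k)) (s τ[k]) :=
      ⟨cs.isReflection_simple τ[k], hdescent⟩
    obtain ⟨j, hj, hjprod⟩ := exists_eraseIdx_of_isRightInversion cs hkred hinv
    -- the shorter word
    set τ₂ := (τ.take k).eraseIdx j ++ τ.drop (k + 1) with hτ₂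
    have hsub2 : τ₂ <+ τ := by
      conv_rhs => rw [hτdec]
      exact List.Sublist.append (List.Sublist.trans (List.eraseIdx_sublist _ j)
        (List.Sublist.refl _)) (List.sublist_cons_self _ _)
    have hprod2 : π τ₂ = π τ := by
      rw [hτ₂, cs.wordProd_append, hjprod]
      conv_rhs => rw [hτdec]
      rw [cs.wordProd_append, CoxeterSystem.wordProd_cons]
      group
    have hlen2 : τ₂.length < n := by
      have h1 : ((τ.take k).eraseIdx j).length = k - 1 := by
        rw [List.length_eraseIdx_of_lt (by omega), hlen_take]
      have h2 : (τ.drop (k + 1)).length = τ.length - (k + 1) := by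
        rw [List.length_drop]
      rw [hτ₂, List.length_append, h1, h2]
      omega
    obtain ⟨τ', hs, hr, hp⟩ := ih τ₂.length hlen2 τ₂ le_rfl
    exact ⟨τ', hs.trans hsub2, hr, hp.trans hprod2⟩

/-- The Bruhat order defined via reflection covers. -/
def Rle (u w : W) : Prop :=
  Relation.ReflTransGen (fun a b => ∃ t, cs.IsReflection t ∧ b = a * t ∧ ℓ a < ℓ b) u w

lemma Rle.refl (u : W) : Rle cs u u := Relation.ReflTransGen.refl

lemma Rle.trans {u v w : W} (h1 : Rle cs u v) (h2 : Rle cs v w) : Rle cs u w :=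
  Relation.ReflTransGen.trans h1 h2

lemma Rle_single {x w : W} {t : W} (ht : cs.IsReflection t) (he : w = x * t)
    (hl : ℓ x < ℓ w) : Rle cs x w :=
  Relation.ReflTransGen.single ⟨t, ht, he, hl⟩

lemma Rle_simple_left {w : W} (i : B) (h : ℓ w < ℓ (s i * w)) : Rle cs w (s i * w) := by
  refine Rle_single cs (t := w⁻¹ * s i * w) ?_ ?_ h
  · have := (cs.isReflection_simple i).conj w⁻¹
    rwa [inv_inv] at this
  · group

lemma Rle_simple_left' {w : W} (i : B) (h : ℓ (s i * w) < ℓ w) : Rle cs (s i * w) w := by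
  have h2 : ℓ (s i * (s i * w)) = ℓ w := by
    rw [cs.simple_mul_simple_cancel_left]
  refine Rle_single cs (t := (s i * w)⁻¹ * s i * (s i * w)) ?_ ?_ (by omega)
  · have := (cs.isReflection_simple i).conj (s i * w)⁻¹
    rwa [inv_inv] at this
  · group
    rw [mul_assoc, cs.simple_mul_simple_cancel_left]

/-- Subword property, easy direction: if `u ≤R w` then every reduced word for `w`
contains a subword representing `u`. -/
lemma subword_of_Rle : ∀ (n : ℕ) (w : W), ℓ w ≤ n → ∀ u, Rle cs u w →
    ∀ ω₂ : List B, cs.IsReduced ω₂ → π ω₂ = w → ∃ a, a <+ ω₂ ∧ π a = u := by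
  intro n
  induction n using Nat.strong_induction_on with
  | _ n ih =>
    intro w hw u hRle ω₂ hred hprod
    rcases Relation.ReflTransGen.cases_tail hRle with heq | ⟨x, hux, t, ht, hxt, hlt⟩
    · exact ⟨ω₂, List.Sublist.refl _, hprod.trans heq⟩
    · have hwt : w * t = x := by
        rw [hxt, mul_assoc, ht.mul_self, mul_one]
      have hinv : cs.IsRightInversion (π ω₂) t := by
        rw [hprod]
        exact ⟨ht, by rw [hwt]; exact hlt⟩
      obtain ⟨j, hj, hjprod⟩ := exists_eraseIdx_of_isRightInversion cs hred hinv
      rw [hprod, hwt] at hjprod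
      obtain ⟨τ', hs', hr', hp'⟩ :=
        exists_reduced_sublist cs (ω₂.eraseIdx j).length (ω₂.eraseIdx j) le_rfl
      rw [hjprod] at hp'
      have hx : ℓ x ≤ n - 1 := by omega
      obtain ⟨a, ha, hap⟩ := ih (n - 1) (by omega) x hx u hux τ' hr' hp'
      exact ⟨a, ha.trans (hs'.trans (List.eraseIdx_sublist _ j)), hap⟩

lemma master : ∀ n : ℕ,
    (∀ ω : List B, cs.IsReduced ω → ω.length ≤ n →
      ∀ ω', ω' <+ ω → Rle cs (π ω') (π ω)) ∧
    (∀ w : W, ℓ w ≤ n → ∀ u (i : B), Rle cs u w →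
      ℓ u < ℓ (s i * u) → ℓ w < ℓ (s i * w) → Rle cs (s i * u) (s i * w)) := by
  intro n
  induction n using Nat.strong_induction_on with
  | _ n ih =>
    constructor
    · -- subword implies Rle
      intro ω hred hlen ω' hsub
      obtain ⟨ω'', hsub'', hred'', hprod''⟩ := exists_reduced_sublist cs ω'.length ω' le_rfl
      rw [← hprod'']
      have hss : ω'' <+ ω := hsub''.trans hsub
      clear hsub hsub'' hprod''
      cases ω with
      | nil =>
          have : ω'' = [] := List.sublist_nil.mp hss
          subst this
          exact Rle.refl cs _
      | cons i ρ =>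
          have hρred : cs.IsReduced ρ := by
            have := hred.drop 1
            simpa using this
          have hlen1 : ρ.length + 1 ≤ n := by
            simpa using hlen
          have hlcons : ℓ (π (i :: ρ)) = ρ.length + 1 := by
            rw [hred]
            simp
          have hlρ : ℓ (π ρ) = ρ.length := hρred
          have hstep : ℓ (π ρ) < ℓ (s i * π ρ) := by
            rw [← cs.wordProd_cons, hlcons, hlρ]
            omega
          have hcov : Rle cs (π ρ) (π (i :: ρ)) := by
            rw [cs.wordProd_cons]
            exact Rle_simple_left cs i hstep
          rcases List.sublist_cons_iff.mp hss with hcase | ⟨c, rfl, hc⟩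
          · exact Rle.trans cs ((ih (n - 1) (by omega)).1 ρ hρred (by omega) ω'' hcase) hcov
          · rw [cs.wordProd_cons, cs.wordProd_cons]
            have hcred : cs.IsReduced c := by
              have := hred''.drop 1
              simpa using this
            have hulen : ℓ (s i * π c) = c.length + 1 := by
              have := hred''
              rw [CoxeterSystem.IsReduced, cs.wordProd_cons] at this
              simpa using this
            have hu : ℓ (π c) < ℓ (s i * π c) := by
              have := cs.length_wordProd_le c
              omega
            exact (ih (n - 1) (by omega)).2 (π ρ) (by omega) (π c) i
              ((ih (n - 1) (by omega)).1 ρ hρred (by omega) c hc) hu hstep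
    · -- special lifting
      intro w hw u i hRle hu hwi
      rcases Relation.ReflTransGen.cases_tail hRle with heq | ⟨x, hux, t, ht, hxt, hlt⟩
      · rw [heq]
        exact Rle.refl cs _
      · have hn1 : 1 ≤ n := by omega
        have hsiw : ℓ (s i * w) = ℓ w + 1 := by
          rcases cs.length_simple_mul w i with h | h <;> omega
        by_cases hx : ℓ x < ℓ (s i * x)
        · have hsx : ℓ (s i * x) = ℓ x + 1 := by
            rcases cs.length_simple_mul x i with h | h <;> omega
          have h1 : Rle cs (s i * u) (s i * x) :=
            (ih (n - 1) (by omega)).2 x (by omega) u i hux hu hx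
          have h2 : Rle cs (s i * x) (s i * w) := by
            refine Rle_single cs ht ?_ (by omega)
            rw [hxt, mul_assoc]
          exact Rle.trans cs h1 h2
        · push_neg at hx
          have hsx : ℓ (s i * x) + 1 = ℓ x := by
            rcases cs.length_simple_mul x i with h | h <;> omega
          obtain ⟨ρ', hρ'red, hρ'prod⟩ := cs.exists_reduced_word' (s i * x)
          have hρ'len : ρ'.length = ℓ (s i * x) := by rw [hρ'prod]; exact hρ'red.symm
          have hxprod : π (i :: ρ') = x := by
            rw [cs.wordProd_cons, ← hρ'prod, cs.simple_mul_simple_cancel_left]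
          have hconsred : cs.IsReduced (i :: ρ') := by
            rw [CoxeterSystem.IsReduced, hxprod]
            simp only [List.length_cons]
            omega
          obtain ⟨a, ha, hap⟩ := subword_of_Rle cs (ℓ x) x le_rfl u hux (i :: ρ') hconsred hxprod
          obtain ⟨a', hsa', hra', hpa'⟩ := exists_reduced_sublist cs a.length a le_rfl
          have hpa'u : π a' = u := hpa'.trans hap
          have ha' : a' <+ i :: ρ' := hsa'.trans ha
          rcases List.sublist_cons_iff.mp ha' with hcase | ⟨c, rfl, hc⟩
          · have hux' : Rle cs u (s i * x) := by
              have h0 := (ih (n - 1) (by omega)).1 ρ' hρ'red (by omega) a' hcase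
              rwa [hpa'u, ← hρ'prod] at h0
            have h1 : Rle cs (s i * u) (s i * (s i * x)) :=
              (ih (n - 1) (by omega)).2 (s i * x) (by omega) u i hux' hu
                (by rw [cs.simple_mul_simple_cancel_left]; omega)
            rw [cs.simple_mul_simple_cancel_left] at h1
            have h2 : Rle cs x w := Rle_single cs ht hxt hlt
            have h3 : Rle cs w (s i * w) := Rle_simple_left cs i (by omega)
            exact Rle.trans cs (Rle.trans cs h1 h2) h3
          · exfalso
            have h5 : ℓ u = c.length + 1 := by
              rw [← hpa'u, hra']
              simp
            have h6 : s i * u = π c := by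
              rw [← hpa'u, cs.wordProd_cons, cs.simple_mul_simple_cancel_left]
            have h7 := cs.length_wordProd_le c
            rw [← h6] at h7
            omega

/-- The subword definition of Bruhat order coincides with the reflection order. -/
lemma bruhatLE_iff_Rle (u w : W) : BruhatLE cs u w ↔ Rle cs u w := by
  constructor
  · rintro ⟨ω, hred, rfl, ω', hsub, rfl⟩
    exact (master cs ω.length).1 ω hred le_rfl ω' hsub
  · intro h
    obtain ⟨ω₂, hred, hprod⟩ := cs.exists_reduced_word' w
    obtain ⟨a, hsub, hproda⟩ := subword_of_Rle cs (ℓ w) w le_rfl u h ω₂ hred hprod.symm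
    exact ⟨ω₂, hred, hprod.symm, a, hsub, hproda⟩

/-- Left lifting property for the Bruhat order. -/
lemma lift_left (u w : W) (i : B) (h : BruhatLE cs u w) :
    BruhatLE cs (s i * u) w ∨ BruhatLE cs (s i * u) (s i * w) := by
  rw [bruhatLE_iff_Rle] at h ⊢
  rw [bruhatLE_iff_Rle]
  rcases Nat.lt_or_ge (ℓ (s i * u)) (ℓ u) with hlt | hge
  · left
    exact Rle.trans cs (Rle_simple_left' cs i hlt) h
  · have hgt : ℓ u < ℓ (s i * u) :=
      lt_of_le_of_ne (by omega) (cs.length_simple_mul_ne u i).symm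
    by_cases hw : ℓ w < ℓ (s i * w)
    · right
      exact (master cs (ℓ w)).2 w le_rfl u i h hgt hw
    · left
      have hw' : ℓ (s i * w) < ℓ w :=
        lt_of_le_of_ne (by omega) (cs.length_simple_mul_ne w i)
      obtain ⟨ρ, hρred, hρprod⟩ := cs.exists_reduced_word' (s i * w)
      have hρlen : ρ.length = ℓ (s i * w) := by rw [hρprod]; exact hρred.symm
      have hwprod : π (i :: ρ) = w := by
        rw [cs.wordProd_cons, ← hρprod, cs.simple_mul_simple_cancel_left]
      have hconsred : cs.IsReduced (i :: ρ) := by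
        rw [CoxeterSystem.IsReduced, hwprod]
        simp only [List.length_cons]
        have h2 : ℓ (s i * (s i * w)) = ℓ w := by rw [cs.simple_mul_simple_cancel_left]
        rcases cs.length_simple_mul (s i * w) i with hh | hh <;> omega
      obtain ⟨a, ha, hap⟩ := subword_of_Rle cs (ℓ w) w le_rfl u h (i :: ρ) hconsred hwprod
      obtain ⟨a', hsa', hra', hpa'⟩ := exists_reduced_sublist cs a.length a le_rfl
      have hpa'u : π a' = u := hpa'.trans hap
      have ha' : a' <+ i :: ρ := hsa'.trans ha
      rcases List.sublist_cons_iff.mp ha' with hcase | ⟨c, rfl, hc⟩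
      · have huw' : Rle cs u (s i * w) := by
          have h0 := (master cs ρ.length).1 ρ hρred le_rfl a' hcase
          rwa [hpa'u, ← hρprod] at h0
        have h1 : Rle cs (s i * u) (s i * (s i * w)) :=
          (master cs (ℓ (s i * w))).2 (s i * w) le_rfl u i huw' hgt
            (by rw [cs.simple_mul_simple_cancel_left]; omega)
        rwa [cs.simple_mul_simple_cancel_left] at h1
      · exfalso
        have h5 : ℓ u = c.length + 1 := by
          rw [← hpa'u, hra']
          simp
        have h6 : s i * u = π c := by
          rw [← hpa'u, cs.wordProd_cons, cs.simple_mul_simple_cancel_left]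
        have h7 := cs.length_wordProd_le c
        rw [← h6] at h7
        omega

lemma bruhatLE_inv {u w : W} (h : BruhatLE cs u w) : BruhatLE cs u⁻¹ w⁻¹ := by
  obtain ⟨ω, hred, rfl, ω', hsub, rfl⟩ := h
  exact ⟨ω.reverse, (cs.isReduced_reverse_iff ω).mpr hred, cs.wordProd_reverse ω,
    ω'.reverse, hsub.reverse, cs.wordProd_reverse ω'⟩

/-- Right lifting property for the Bruhat order. -/
lemma lift_right (u w : W) (i : B) (h : BruhatLE cs u w) :
    BruhatLE cs (u * s i) w ∨ BruhatLE cs (u * s i) (w * s i) := by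
  have h' := bruhatLE_inv cs h
  rcases lift_left cs u⁻¹ w⁻¹ i h' with hc | hc
  · left
    have := bruhatLE_inv cs hc
    simpa [mul_inv_rev] using this
  · right
    have := bruhatLE_inv cs hc
    simpa [mul_inv_rev] using this

lemma exists_word_of_mem_closure {X : Set B} {g : W}
    (hg : g ∈ Subgroup.closure (cs.simple '' X)) :
    ∃ α : List B, (∀ b ∈ α, b ∈ X) ∧ π α = g := by
  induction hg using Subgroup.closure_induction with
  | mem x hx =>
      obtain ⟨b, hb, rfl⟩ := hx
      exact ⟨[b], by simpa using hb, by simp⟩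
  | one => exact ⟨[], by simp, by simp⟩
  | mul x y hx hy ihx ihy =>
      obtain ⟨α, hα, rfl⟩ := ihx
      obtain ⟨β, hβ, rfl⟩ := ihy
      refine ⟨α ++ β, ?_, cs.wordProd_append α β⟩
      intro b hb
      rcases List.mem_append.mp hb with h | h
      · exact hα b h
      · exact hβ b h
  | inv x hx ihx =>
      obtain ⟨α, hα, rfl⟩ := ihx
      refine ⟨α.reverse, ?_, cs.wordProd_reverse α⟩
      intro b hb
      exact hα b (List.mem_reverse.mp hb)

lemma chain_right {X : Set B} (D : Set W)
    (hD : ∀ y ∈ D, ∀ i : B, i ∈ X → y * s i ∈ D)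
    (c y₀ : W) (hy₀ : y₀ ∈ D) (hc : BruhatLE cs c y₀) :
    ∀ β : List B, (∀ b ∈ β, b ∈ X) → ∃ y ∈ D, BruhatLE cs (c * π β) y := by
  intro β
  induction β using List.reverseRecOn with
  | nil =>
      intro _
      exact ⟨y₀, hy₀, by simpa using hc⟩
  | append_singleton γ i ih =>
      intro hmem
      obtain ⟨y, hy, hle⟩ := ih (fun b hb => hmem b (List.mem_append_left _ hb))
      have hprod : c * π (γ ++ [i]) = (c * π γ) * s i := by
        rw [cs.wordProd_append]
        simp [mul_assoc]
      have hi : i ∈ X := hmem i (List.mem_append_right _ (List.mem_singleton_self i))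
      rcases lift_right cs (c * π γ) y i hle with hcase | hcase
      · exact ⟨y, hy, by rwa [hprod]⟩
      · exact ⟨y * s i, hD y hy i hi, by rwa [hprod]⟩

lemma chain_left {X : Set B} (D : Set W)
    (hD : ∀ y ∈ D, ∀ i : B, i ∈ X → s i * y ∈ D) (c : W)
    (hbase : ∃ y ∈ D, BruhatLE cs c y) :
    ∀ α : List B, (∀ b ∈ α, b ∈ X) → ∃ y ∈ D, BruhatLE cs (π α * c) y := by
  intro α
  induction α with
  | nil =>
      intro _
      obtain ⟨y, hy, hle⟩ := hbase
      exact ⟨y, hy, by simpa using hle⟩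
  | cons i α' ih =>
      intro hmem
      obtain ⟨y, hy, hle⟩ := ih (fun b hb => hmem b (List.mem_cons_of_mem _ hb))
      have hprod : π (i :: α') * c = s i * (π α' * c) := by
        rw [cs.wordProd_cons, mul_assoc]
      have hi : i ∈ X := hmem i List.mem_cons_self
      rcases lift_left cs (π α' * c) y i hle with hcase | hcase
      · exact ⟨y, hy, by rwa [hprod]⟩
      · exact ⟨s i * y, hD y hy i hi, by rwa [hprod]⟩

end BruhatOrder


/-- Let `W₁, W₂` be standard parabolic subgroups and `u, v ∈ W` with
`brmin(W₁uW₂) ≤ brmin(W₁vW₂)`.  Then for any `u' ∈ W₁uW₂` there exists `v' ∈ W₁vW₂`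
with `u' ≤ v'`. -/
theorem stmt_9 (cs : CoxeterSystem M W) (W₁ W₂ : Subgroup W)
    (h₁ : IsStdParabolic cs W₁) (h₂ : IsStdParabolic cs W₂) (u v m₁ m₂ : W)
    (hm₁ : IsBrMin cs (dblCoset W₁ W₂ u) m₁)
    (hm₂ : IsBrMin cs (dblCoset W₁ W₂ v) m₂)
    (hle : BruhatLE cs m₁ m₂) :
    ∀ u' ∈ dblCoset W₁ W₂ u, ∃ v' ∈ dblCoset W₁ W₂ v, BruhatLE cs u' v' := by
  obtain ⟨X₁, rfl⟩ := h₁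
  obtain ⟨X₂, rfl⟩ := h₂
  set W₁ : Subgroup W := Subgroup.closure (cs.simple '' X₁) with hW₁
  set W₂ : Subgroup W := Subgroup.closure (cs.simple '' X₂) with hW₂
  rintro u' ⟨a, ha, b, hb, rfl⟩
  obtain ⟨a₀, ha₀, b₀, hb₀, hm₁eq⟩ := hm₁.1
  -- rewrite a * u * b in terms of m₁
  have hueq : u = a₀⁻¹ * m₁ * b₀⁻¹ := by
    rw [hm₁eq]
    group
  have hkey : a * u * b = (a * a₀⁻¹) * m₁ * (b₀⁻¹ * b) := by
    rw [hueq]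
    group
  have hA : a * a₀⁻¹ ∈ W₁ := mul_mem ha (inv_mem ha₀)
  have hBb : b₀⁻¹ * b ∈ W₂ := mul_mem (inv_mem hb₀) hb
  obtain ⟨α, hα, hαprod⟩ := BruhatOrder.exists_word_of_mem_closure cs hA
  obtain ⟨β, hβ, hβprod⟩ := BruhatOrder.exists_word_of_mem_closure cs hBb
  set D : Set W := dblCoset W₁ W₂ v with hD
  have hDr : ∀ y ∈ D, ∀ i : B, i ∈ X₂ → y * cs.simple i ∈ D := by
    rintro y ⟨ay, hay, by', hby', rfl⟩ i hi
    exact ⟨ay, hay, by' * cs.simple i,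
      mul_mem hby' (Subgroup.subset_closure (Set.mem_image_of_mem _ hi)), by group⟩
  have hDl : ∀ y ∈ D, ∀ i : B, i ∈ X₁ → cs.simple i * y ∈ D := by
    rintro y ⟨ay, hay, by', hby', rfl⟩ i hi
    exact ⟨cs.simple i * ay,
      mul_mem (Subgroup.subset_closure (Set.mem_image_of_mem _ hi)) hay, by', hby', by group⟩
  have step1 : ∃ y ∈ D, BruhatLE cs (m₁ * cs.wordProd β) y :=
    BruhatOrder.chain_right cs D hDr m₁ m₂ hm₂.1 hle β hβ
  have step2 : ∃ y ∈ D, BruhatLE cs (cs.wordProd α * (m₁ * cs.wordProd β)) y :=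
    BruhatOrder.chain_left cs D hDl (m₁ * cs.wordProd β) step1 α hα
  obtain ⟨y, hy, hley⟩ := step2
  refine ⟨y, hy, ?_⟩
  rwa [hαprod, hβprod, show a * a₀⁻¹ * (m₁ * (b₀⁻¹ * b)) = a * a₀⁻¹ * m₁ * (b₀⁻¹ * b) from
    by group, ← hkey] at hley
end

section
/- Let (W,S) be a Coxeter system, W₁ a standard parabolic subgroup, and σ, w ∈ W. Set J_{σW₁}(w) = { v ∈ σW₁ : w ≤ v }. Then: (1) J_{σW₁}(w) ⊇ J_{σW₁}(w′) whenever w ≤ w′; (2) for any s ∈ S, J_{σW₁}(w) ⊆ s·J_{sσW₁}(w ∧ sw); and (3) J_{σW₁}(w) is nonempty if and only if brmin(wW₁) ≤ brmin(σW₁) in the Bruhat order. -/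
variable {B W : Type*} [Group W] {M : CoxeterMatrix B}

/-- `J_{σW₁}(w) = { v ∈ σW₁ : w ≤ v }`. -/
def Jset (cs : CoxeterSystem M W) (W₁ : Subgroup W) (σ w : W) : Set W :=
  {v | v ∈ lCoset W₁ σ ∧ BruhatLE cs w v}

open List
open scoped Classical

namespace BruhatAux
variable {B W : Type*} [Group W] {M : CoxeterMatrix B} (cs : CoxeterSystem M W)

local prefix:100 "s" => cs.simple
local prefix:100 "π" => cs.wordProd
local prefix:100 "ℓ" => cs.length
local prefix:100 "ris" => cs.rightInvSeq
local prefix:100 "lis" => cs.leftInvSeq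

theorem ris_append (a b : List B) :
    ris (a ++ b) = (ris a).map (fun x => (π b)⁻¹ * x * π b) ++ ris b := by
  induction a with
  | nil => simp
  | cons i a ih =>
    show ris (i :: (a ++ b)) = _
    rw [CoxeterSystem.rightInvSeq, ih, CoxeterSystem.rightInvSeq]
    simp only [cs.wordProd_append, map_cons, mul_inv_rev, cons_append, cons.injEq, and_true]
    group

theorem lis_eq_map_conj (a : List B) :
    lis a = (ris a).map (fun x => π a * x * (π a)⁻¹) := by
  induction a with
  | nil => simp
  | cons i a ih =>
    show lis (i :: a) = _
    rw [CoxeterSystem.leftInvSeq, CoxeterSystem.rightInvSeq, ih, map_cons, map_map]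
    congr 1
    · rw [cs.wordProd_cons]; simp [mul_assoc]
    · apply List.map_congr_left
      intro x _
      simp [cs.wordProd_cons, MulAut.conj]
      group

/-- The basic "flip" endomorphism of `W × ZMod 2`. -/
noncomputable def eta (i : B) : Function.End (W × ZMod 2) :=
  fun p => (s i * p.1 * s i, p.2 + if p.1 = s i then 1 else 0)

theorem eta_word_prod (ω : List B) (p : W × ZMod 2) :
    ((ω.map (eta cs)).prod : Function.End (W × ZMod 2)) p =
      (π ω * p.1 * (π ω)⁻¹, p.2 + ((ris ω).count p.1 : ZMod 2)) := by
  induction ω with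
  | nil => simp [Function.End]; rfl
  | cons i ω ih =>
    have : ((i :: ω).map (eta cs)).prod = eta cs i * (ω.map (eta cs)).prod := by
      simp
    rw [this]
    show eta cs i (((ω.map (eta cs)).prod : Function.End (W × ZMod 2)) p) = _
    rw [ih]
    show (s i * (π ω * p.1 * (π ω)⁻¹) * s i, _) = _
    rw [CoxeterSystem.rightInvSeq]
    refine Prod.ext ?_ ?_
    · show s i * (π ω * p.1 * (π ω)⁻¹) * s i = π (i :: ω) * p.1 * (π (i :: ω))⁻¹
      rw [cs.wordProd_cons, mul_inv_rev, cs.inv_simple]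
      group
    · show _ + (if π ω * p.1 * (π ω)⁻¹ = s i then 1 else 0) = _
      rw [List.count_cons]
      have hiff : ((π ω)⁻¹ * s i * π ω = p.1) ↔ (π ω * p.1 * (π ω)⁻¹ = s i) := by
        constructor
        · intro h; rw [← h]; group
        · intro h; rw [← h]; group
      push_cast
      rw [if_congr (by simpa using hiff.symm) rfl rfl]
      simp only [beq_iff_eq]
      ring

theorem pow_flip (i j : B) (k : ℕ) : s i * (s i * s j) ^ k = (s j * s i) ^ k * s i := by
  induction k with
  | zero => simp
  | succ k ih =>
    rw [pow_succ, ← mul_assoc, ih, pow_succ]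
    simp [mul_assoc, cs.simple_mul_simple_cancel_left, cs.simple_mul_simple_self]

theorem pow_flip2 (i j : B) (k : ℕ) : s i * (s j * s i) ^ k = (s i * s j) ^ k * s i := by
  induction k with
  | zero => simp
  | succ k ih =>
    rw [pow_succ, ← mul_assoc, ih, pow_succ]
    simp [mul_assoc, cs.simple_mul_simple_cancel_left, cs.simple_mul_simple_self]

theorem conj_alt (i j : B) (n : ℕ) :
    (π (CoxeterSystem.alternatingWord i j n))⁻¹ * (if Even n then s j else s i)
      * π (CoxeterSystem.alternatingWord i j n) = (s j * s i) ^ n * s j := by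
  have hinv : ∀ c : ℕ, (((s i * s j) : W) ^ c)⁻¹ = (s j * s i) ^ c := by
    intro c
    rw [← inv_pow, mul_inv_rev, cs.inv_simple, cs.inv_simple]
  rcases Nat.even_or_odd n with he | ho
  · have hn : Even n := he
    obtain ⟨c, rfl⟩ := he
    rw [if_pos hn, cs.prod_alternatingWord_eq_mul_pow, if_pos hn, one_mul,
      (by omega : (c+c)/2 = c), hinv]
    calc (s j * s i) ^ c * s j * (s i * s j) ^ c
        = (s j * s i) ^ c * (s j * (s i * s j) ^ c) := by rw [mul_assoc]
      _ = (s j * s i) ^ c * ((s j * s i) ^ c * s j) := by rw [pow_flip2 cs j i c]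
      _ = (s j * s i) ^ (c + c) * s j := by rw [pow_add, mul_assoc]
  · have hn : ¬ Even n := Nat.not_even_iff_odd.symm.mp ho
    obtain ⟨c, rfl⟩ := ho
    rw [if_neg hn, cs.prod_alternatingWord_eq_mul_pow, if_neg hn,
      (by omega : (2*c+1)/2 = c), mul_inv_rev, hinv, cs.inv_simple]
    calc (s j * s i) ^ c * s j * s i * (s j * (s i * s j) ^ c)
        = (s j * s i) ^ c * s j * s i * ((s j * s i) ^ c * s j) := by rw [pow_flip2 cs j i c]
      _ = (s j * s i) ^ c * ((s j * s i) * (s j * s i) ^ c) * s j := by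
          simp only [mul_assoc]
      _ = (s j * s i) ^ c * (s j * s i) ^ (c + 1) * s j := by rw [pow_succ']
      _ = (s j * s i) ^ (2 * c + 1) * s j := by rw [← pow_add]; congr 2; omega

open CoxeterSystem in
theorem drop_alt (i j : B) (k n : ℕ) (h : k ≤ n) :
    (alternatingWord i j n).drop k = alternatingWord i j (n - k) := by
  induction k with
  | zero => simp
  | succ k ih =>
    have hk : k ≤ n := by omega
    rcases Nat.exists_eq_add_of_le (by omega : k + 1 ≤ n) with ⟨d, hd⟩
    have h2 : n - k = d + 1 := by omega
    rw [← List.drop_drop, ih hk, h2, alternatingWord_succ']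
    simp only [List.drop_succ_cons, List.drop_zero]
    congr 1
    omega

open CoxeterSystem in
theorem getElem?_alt (i j : B) (k n : ℕ) (h : k < n) :
    (alternatingWord i j n)[k]? = some (if Even (n - k - 1) then j else i) := by
  have h1 : (alternatingWord i j n)[k]? = ((alternatingWord i j n).drop k)[0]? := by
    rw [List.getElem?_drop]; norm_num
  rw [h1, drop_alt i j k n (by omega)]
  have h2 : n - k = (n - k - 1) + 1 := by omega
  rw [h2, alternatingWord_succ']
  simp

open CoxeterSystem in
theorem ris_alt_getD (i j : B) (k n : ℕ) (h : k < n) :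
    (ris (alternatingWord i j n)).getD k 1 = (s j * s i) ^ (n - k - 1) * s j := by
  rw [cs.getD_rightInvSeq, drop_alt i j (k+1) n (by omega)]
  rw [getElem?_alt i j k n h]
  have h2 : n - (k + 1) = n - k - 1 := by omega
  rw [h2]
  simp only [Option.map_some, Option.getD_some]
  rw [apply_ite cs.simple]
  exact conj_alt cs i j (n - k - 1)

open CoxeterSystem in
theorem count_ris_alt_even (i j : B) (t : W) :
    ∃ c, (ris (alternatingWord i j (2 * M i j))).count t = 2 * c := by
  set m := M i j with hm
  set l : List W := ris (alternatingWord i j (2 * m)) with hl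
  have hlen : l.length = 2 * m := by
    rw [hl, cs.length_rightInvSeq, length_alternatingWord]
  have heq : l.take m = l.drop m := by
    apply List.ext_getElem
    · rw [List.length_take, List.length_drop, hlen]; omega
    · intro k h1 h2
      rw [List.length_take, hlen] at h1
      have hk : k < m := by omega
      rw [List.getElem_take, List.getElem_drop]
      have e1 : l[k] = l.getD k 1 := by rw [List.getD_eq_getElem l 1 (by omega)]
      have e2 : l[m + k] = l.getD (m + k) 1 := by rw [List.getD_eq_getElem l 1 (by omega)]
      rw [e1, e2, hl, ris_alt_getD cs i j k (2*m) (by omega),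
        ris_alt_getD cs i j (m + k) (2*m) (by omega)]
      have e4 : 2 * m - (m + k) - 1 = m - k - 1 := by omega
      have e3 : 2 * m - k - 1 = m + (m - k - 1) := by omega
      rw [e4, e3, pow_add, cs.simple_mul_simple_pow' i j, one_mul]
  refine ⟨(l.take m).count t, ?_⟩
  conv_lhs => rw [← List.take_append_drop m l]
  rw [List.count_append, ← heq, two_mul]

open CoxeterSystem in
theorem eta_liftable : M.IsLiftable (eta cs) := by
  intro i j
  have key : ∀ mm : ℕ, (eta cs i * eta cs j) ^ mm
      = ((alternatingWord i j (2 * mm)).map (eta cs)).prod := by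
    intro mm
    induction mm with
    | zero => simp [alternatingWord]
    | succ mm ih =>
      have h1 : 2 * (mm + 1) = (2 * mm + 1) + 1 := by omega
      rw [h1, alternatingWord_succ', alternatingWord_succ']
      rw [if_neg (by simp [Nat.even_add_one, Nat.even_mul]), if_pos (by simp [Nat.even_mul])]
      rw [List.map_cons, List.map_cons, List.prod_cons, List.prod_cons, ← ih,
        pow_succ', mul_assoc]
  funext p
  rw [key (M i j)]
  show (((alternatingWord i j (2 * M i j)).map (eta cs)).prod : Function.End (W × ZMod 2)) p = p
  rw [eta_word_prod]
  have h1 : π (alternatingWord i j (2 * M i j)) = 1 := by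
    rw [cs.prod_alternatingWord_eq_mul_pow, if_pos (by simp [Nat.even_mul]),
      (by omega : 2 * M i j / 2 = M i j), one_mul, cs.simple_mul_simple_pow]
  obtain ⟨c, hc⟩ := count_ris_alt_even cs i j p.1
  rw [h1, hc]
  push_cast
  have h2 : (2 : ZMod 2) = 0 := rfl
  rw [h2]
  simp

/-- The parity homomorphism. -/
noncomputable def phi : W →* Function.End (W × ZMod 2) := cs.lift ⟨eta cs, eta_liftable cs⟩

theorem phi_wordProd (ω : List B) :
    phi cs (π ω) = (ω.map (eta cs)).prod := by
  rw [CoxeterSystem.wordProd, map_list_prod, List.map_map]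
  congr 1
  apply List.map_congr_left
  intro x _
  exact cs.lift_apply_simple (eta_liftable cs) x

/-- Parity invariance: the parity of the number of occurrences of `t` in the right
inversion sequence of a word depends only on the product of the word. -/
theorem count_ris_parity_invariant {ω ω' : List B} (h : π ω = π ω') (t : W) :
    ((ris ω).count t : ZMod 2) = ((ris ω').count t : ZMod 2) := by
  have h2 : ((ω.map (eta cs)).prod : Function.End (W × ZMod 2)) (t, 0)
      = ((ω'.map (eta cs)).prod : Function.End (W × ZMod 2)) (t, 0) := by
    rw [← phi_wordProd, ← phi_wordProd, h]
  rw [eta_word_prod, eta_word_prod] at h2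
  simpa using congrArg Prod.snd h2

theorem count_ris_refl_odd {t : W} (ht : cs.IsReflection t) :
    ∀ ω : List B, π ω = t → ((ris ω).count t : ZMod 2) = 1 := by
  obtain ⟨u, i, rfl⟩ := ht
  obtain ⟨α, hαred, hα⟩ := cs.exists_reduced_word' u
  set t := u * s i * u⁻¹ with hts
  -- the palindrome word for t
  set β : List B := α ++ ([i] ++ α.reverse) with hβ
  have hβprod : π β = t := by
    rw [hβ, cs.wordProd_append, cs.wordProd_append, cs.wordProd_reverse, ← hα]
    simp [hts, mul_assoc]
  intro ω hω
  rw [count_ris_parity_invariant cs (ω' := β) (by rw [hω, hβprod]) t]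
  -- now compute the count in β
  rw [hβ, ris_append, ris_append]
  have hπ2 : π ([i] ++ α.reverse) = s i * u⁻¹ := by
    rw [cs.wordProd_append, cs.wordProd_reverse, ← hα]; simp [CoxeterSystem.wordProd]
  rw [List.count_append, List.count_append]
  have hc1 : List.count t ((ris α).map
      (fun x => (π ([i] ++ reverse α))⁻¹ * x * π ([i] ++ reverse α)))
      = (ris α).count (s i) := by
    rw [hπ2]
    have hinj : Function.Injective (fun x : W => (s i * u⁻¹)⁻¹ * x * (s i * u⁻¹)) := by
      intro a b hab
      simpa using hab
    have : t = (fun x : W => (s i * u⁻¹)⁻¹ * x * (s i * u⁻¹)) (s i) := by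
      simp [hts, mul_assoc]
    rw [this, List.count_map_of_injective _ _ hinj]
  rw [hc1]
  have hrisi : ris ([i] : List B) = [s i] := by simp
  have hc2 : List.count t ((ris ([i] : List B)).map
      (fun x => (π (reverse α))⁻¹ * x * π (reverse α))) = 1 := by
    rw [hrisi, cs.wordProd_reverse, ← hα]
    simp only [List.map_cons, List.map_nil]
    have : u⁻¹⁻¹ * s i * u⁻¹ = t := by simp [hts, mul_assoc]
    rw [this]; simp
  rw [hc2]
  have hc3 : (ris α.reverse).count t = (ris α).count (s i) := by
    rw [cs.rightInvSeq_reverse, List.count_reverse, lis_eq_map_conj, ← hα]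
    have hinj : Function.Injective (fun x : W => u * x * u⁻¹) := by
      intro a b hab; simpa using hab
    have : t = (fun x : W => u * x * u⁻¹) (s i) := by simp [hts]
    rw [this, List.count_map_of_injective _ _ hinj]
  rw [hc3]
  push_cast
  ring_nf
  have h2 : (2 : ZMod 2) = 0 := rfl
  rw [mul_comm, h2]
  simp

theorem count_ris_rightInversion_odd {w t : W} (hwt : cs.IsRightInversion w t) :
    ∀ ω : List B, π ω = w → ((ris ω).count t : ZMod 2) = 1 := by
  obtain ⟨τ, hτred, hτ⟩ := cs.exists_reduced_word' (w * t)
  have ht := hwt.1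
  have htinv : t⁻¹ = t := ht.inv
  obtain ⟨β, _, hβ⟩ := cs.exists_reduced_word' t
  have hw : π (τ ++ β) = w := by
    rw [cs.wordProd_append, ← hτ, ← hβ, mul_assoc, ht.mul_self, mul_one]
  intro ω hω
  rw [count_ris_parity_invariant cs (ω' := τ ++ β) (by rw [hω, hw]) t]
  rw [ris_append, List.count_append]
  have hc1 : List.count t ((ris τ).map (fun x => (π β)⁻¹ * x * π β)) = List.count t (ris τ) := by
    have hinj : Function.Injective (fun x : W => (π β)⁻¹ * x * π β) := by
      intro a b hab; simpa using hab
    have : t = (fun x : W => (π β)⁻¹ * x * π β) t := by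
      rw [← hβ]
      simp only []
      rw [htinv, ht.mul_self, one_mul]
    conv_lhs => rw [this]
    rw [List.count_map_of_injective _ _ hinj]
  rw [hc1]
  have hc2 : List.count t (ris τ) = 0 := by
    apply List.count_eq_zero_of_not_mem
    intro hmem
    have := cs.isRightInversion_of_mem_rightInvSeq hτred hmem
    rw [← hτ] at this
    have h2 := this.2
    rw [mul_assoc, ht.mul_self, mul_one] at h2
    have h3 := hwt.2
    omega
  rw [hc2]
  push_cast
  rw [zero_add]
  exact count_ris_refl_odd cs ht β hβ.symm

theorem strong_exchange {t : W} (ω : List B) (hwt : cs.IsRightInversion (π ω) t) :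
    ∃ j < ω.length, π ω * t = π (ω.eraseIdx j) := by
  have hodd := count_ris_rightInversion_odd cs hwt ω rfl
  have hmem : t ∈ ris ω := by
    by_contra hmem
    rw [List.count_eq_zero_of_not_mem hmem] at hodd
    simpa using hodd
  obtain ⟨j, hj, hgt⟩ := List.mem_iff_getElem.mp hmem
  rw [cs.length_rightInvSeq] at hj
  refine ⟨j, hj, ?_⟩
  have := cs.wordProd_mul_getD_rightInvSeq ω j
  rw [List.getD_eq_getElem _ 1 (by rw [cs.length_rightInvSeq]; exact hj), hgt] at this
  exact this

theorem isReduced_nil' : cs.IsReduced ([] : List B) := by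
  simp [CoxeterSystem.IsReduced]

/-- Any word has a reduced sublist with the same product. -/
theorem exists_reduced_sublist : ∀ n (ω' : List B), ω'.length ≤ n →
    ∃ ρ, ρ.Sublist ω' ∧ cs.IsReduced ρ ∧ π ρ = π ω' := by
  intro n
  induction n using Nat.strong_induction_on with
  | _ n IH =>
  intro ω' hlen
  by_cases hred : cs.IsReduced ω'
  · exact ⟨ω', List.Sublist.refl _, hred, rfl⟩
  have hne : ω' ≠ [] := by rintro rfl; exact hred (isReduced_nil' cs)
  have hlenpos : 0 < ω'.length := List.length_pos_iff.mpr hne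
  have hP : ¬ cs.IsReduced (ω'.take ((ω'.length - 1) + 1)) := by
    rwa [(by omega : ω'.length - 1 + 1 = ω'.length), List.take_length]
  classical
  have hex : ∃ m, ¬ cs.IsReduced (ω'.take (m + 1)) := ⟨ω'.length - 1, hP⟩
  obtain ⟨k, hk, hkmin⟩ : ∃ k, (¬ cs.IsReduced (ω'.take (k+1)))
      ∧ ∀ k' < k, cs.IsReduced (ω'.take (k'+1)) := by
    refine ⟨Nat.find hex, Nat.find_spec hex, ?_⟩
    intro k' hk'
    by_contra hcon
    exact absurd hk' (not_lt.mpr (Nat.find_le hcon))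
  have hkle : k < ω'.length := by
    by_contra hcon
    have h1 := hkmin (ω'.length - 1) (by omega)
    rw [(by omega : ω'.length - 1 + 1 = ω'.length), List.take_length] at h1
    exact hred h1
  have htake_red : cs.IsReduced (ω'.take k) := by
    rcases Nat.eq_zero_or_pos k with rfl | hpos
    · simpa using isReduced_nil' cs
    · have := hkmin (k - 1) (by omega)
      rwa [(by omega : k - 1 + 1 = k)] at this
  have hsucc : ω'.take (k + 1) = ω'.take k ++ [ω'[k]] := by
    rw [List.take_succ, List.getElem?_eq_getElem hkle]
    rfl
  have hprod : π (ω'.take (k+1)) = π (ω'.take k) * s (ω'[k]) := by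
    rw [hsucc, cs.wordProd_append]
    congr 1
    simp [CoxeterSystem.wordProd]
  have hlentk : ℓ (π (ω'.take k)) = k := by
    have := htake_red
    rw [CoxeterSystem.IsReduced] at this
    rw [this, List.length_take]
    omega
  have hdown : ℓ (π (ω'.take k) * s (ω'[k])) < ℓ (π (ω'.take k)) := by
    rcases cs.length_mul_simple (π (ω'.take k)) (ω'[k]) with h | h
    · exfalso
      apply hk
      rw [CoxeterSystem.IsReduced, hprod, h, hlentk, List.length_take]
      omega
    · omega
  have hinv : cs.IsRightInversion (π (ω'.take k)) (s (ω'[k])) :=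
    ⟨cs.isReflection_simple _, hdown⟩
  obtain ⟨j, hj, hej⟩ := strong_exchange cs (ω'.take k) hinv
  rw [List.length_take] at hj
  set σ' := (ω'.take k).eraseIdx j ++ ω'.drop (k+1) with hσ'
  have hσ'len : σ'.length < ω'.length := by
    rw [hσ', List.length_append, List.length_eraseIdx, if_pos (by rw [List.length_take]; omega),
      List.length_take, List.length_drop]
    omega
  have hσ'prod : π σ' = π ω' := by
    conv_rhs => rw [← List.take_append_drop (k+1) ω']
    rw [hσ', cs.wordProd_append, cs.wordProd_append, ← hej, ← hprod]
  have hσ'sub : σ'.Sublist ω' := by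
    have h1 : σ'.Sublist (ω'.take k ++ ω'.drop (k+1)) :=
      List.Sublist.append (List.eraseIdx_sublist _ _) (List.Sublist.refl _)
    have h2 : ω'.take k ++ ω'.drop (k+1) = ω'.eraseIdx k := (List.eraseIdx_eq_take_drop_succ _ _).symm
    rw [h2] at h1
    exact h1.trans (List.eraseIdx_sublist _ _)
  obtain ⟨ρ, hρ1, hρ2, hρ3⟩ := IH σ'.length (by omega) σ' le_rfl
  exact ⟨ρ, hρ1.trans hσ'sub, hρ2, by rw [hρ3, hσ'prod]⟩

/-- One step of the Bruhat chain relation. -/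
def brS (a b : W) : Prop := ∃ t, cs.IsReflection t ∧ b = a * t ∧ ℓ a < ℓ b

/-- Bruhat order as chains of reflection steps. -/
def brle (a b : W) : Prop := Relation.ReflTransGen (brS cs) a b

theorem brle_of_lt_mul {a : W} {t : W} (ht : cs.IsReflection t) (h : ℓ a < ℓ (a * t)) :
    brle cs a (a * t) :=
  Relation.ReflTransGen.single ⟨t, ht, rfl, h⟩

theorem brle_mul_simple_of_lt {a : W} {i : B} (h : ℓ (a * s i) < ℓ a) :
    brle cs (a * s i) a := by
  refine Relation.ReflTransGen.single ⟨s i, cs.isReflection_simple i, ?_, ?_⟩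
  · rw [cs.simple_mul_simple_cancel_right]
  · exact h

theorem brle_lift : ∀ (n : ℕ) (y x : W), ℓ y = n → brle cs x y → ∀ i : B,
    brle cs (x * s i) y ∨ brle cs (x * s i) (y * s i) := by
  intro n
  induction n using Nat.strong_induction_on with
  | _ n IH =>
  intro y x hy hxy i
  rcases Relation.ReflTransGen.cases_tail hxy with heq | ⟨y', hxy', t, ht, rfl, hlt⟩
  · -- x = y
    rcases cs.length_mul_simple x i with h | h
    · right; rw [heq]; exact Relation.ReflTransGen.refl
    · left; rw [heq]; exact brle_mul_simple_of_lt cs (by omega)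
  · -- y = y' * t
    have hy'lt : ℓ y' < n := by omega
    rcases IH (ℓ y') hy'lt y' x rfl hxy' i with ha | hb
    · -- x * s i ≤ y'
      exact Or.inl (ha.trans (brle_of_lt_mul cs ht hlt))
    · -- x * s i ≤ y' * s i
      rcases cs.length_mul_simple y' i with hup | hdown
      swap
      · -- ℓ (y' * s i) < ℓ y'
        refine Or.inl (hb.trans ((brle_mul_simple_of_lt cs (by omega)).trans
          (brle_of_lt_mul cs ht hlt)))
      -- ℓ (y' * s i) = ℓ y' + 1
      have ht' : cs.IsReflection (s i * t * s i) := by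
        have := ht.conj (s i)
        rwa [cs.inv_simple] at this
      have hkey : y' * t * s i = (y' * s i) * (s i * t * s i) := by
        simp only [mul_assoc, cs.simple_mul_simple_cancel_left]
      have hne : ℓ ((y' * s i) * (s i * t * s i)) ≠ ℓ (y' * s i) :=
        ht'.length_mul_left_ne (y' * s i)
      rcases lt_or_gt_of_ne hne with hcase | hcase
      swap
      · -- ℓ (y' * s i) < ℓ (y' * t * s i)
        refine Or.inr (hb.trans ?_)
        rw [hkey]
        exact brle_of_lt_mul cs ht' (by omega)
      · -- hard case: ℓ (y' * t * s i) < ℓ (y' * s i)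
        obtain ⟨ρ, hρred, hρ⟩ := cs.exists_reduced_word' y'
        have hρlen : ρ.length = ℓ y' := by
          rw [CoxeterSystem.IsReduced] at hρred
          rw [hρ]; exact hρred.symm
        have hword : π (ρ ++ [i]) = y' * s i := by
          rw [cs.wordProd_append, ← hρ]
          congr 1
          simp [CoxeterSystem.wordProd]
        have hrinv : cs.IsRightInversion (π (ρ ++ [i])) (s i * t * s i) := by
          refine ⟨ht', ?_⟩
          rw [hword]
          exact hcase
        obtain ⟨j, hj, hej⟩ := strong_exchange cs (ρ ++ [i]) hrinv
        rw [List.length_append, List.length_singleton] at hj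
        rcases Nat.lt_or_ge j ρ.length with hjlt | hjge
        · -- erase inside ρ : contradiction
          exfalso
          rw [List.eraseIdx_append_of_lt_length hjlt] at hej
          have h1 : y' * t = π (ρ.eraseIdx j) := by
            have h2 : π (ρ.eraseIdx j ++ [i]) = π (ρ.eraseIdx j) * s i := by
              rw [cs.wordProd_append]
              congr 1
              simp [CoxeterSystem.wordProd]
            rw [h2] at hej
            rw [hword, ← hkey] at hej
            have := congrArg (fun z => z * s i) hej
            simpa [mul_assoc, cs.simple_mul_simple_cancel_right] using this
          have h3 : ℓ (y' * t) ≤ (ρ.eraseIdx j).length := by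
            rw [h1]; exact cs.length_wordProd_le _
          rw [List.length_eraseIdx, if_pos hjlt] at h3
          omega
        · -- erase the last letter : y' * t * s i = y' , i.e. y = y' * s i
          have hjeq : j = ρ.length := by omega
          have herase : (ρ ++ [i]).eraseIdx j = ρ := by
            rw [hjeq, List.eraseIdx_append_of_length_le le_rfl]
            simp
          rw [herase, hword, ← hkey, ← hρ] at hej
          -- hej : y' * t * s i = y'
          have hy'eq : y' * t = y' * s i := by
            have := congrArg (fun z => z * s i) hej
            simpa [mul_assoc, cs.simple_mul_simple_cancel_right,
              cs.simple_mul_simple_cancel_left] using this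
          rw [hy'eq]
          exact Or.inl hb

theorem brle_of_sublist_of_reduced : ∀ (τ : List B), cs.IsReduced τ →
    ∀ τ', τ'.Sublist τ → brle cs (π τ') (π τ) := by
  intro τ
  induction τ using List.reverseRecOn with
  | nil =>
    intro _ τ' hsub
    rw [List.sublist_nil.mp hsub]
    exact Relation.ReflTransGen.refl
  | append_singleton κ i IHκ =>
    intro hred τ' hsub
    have hκred : cs.IsReduced κ := by
      have := CoxeterSystem.IsReduced.take hred κ.length
      rwa [List.take_left] at this
    have hκlen : ℓ (π κ) = κ.length := hκred
    have hlenfull : ℓ (π (κ ++ [i])) = κ.length + 1 := by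
      have := hred
      rw [CoxeterSystem.IsReduced] at this
      rw [this, List.length_append, List.length_singleton]
    have hsplitword : π (κ ++ [i]) = π κ * s i := by
      rw [cs.wordProd_append]
      congr 1
      simp [CoxeterSystem.wordProd]
    have hstepup : brle cs (π κ) (π (κ ++ [i])) := by
      rw [hsplitword]
      exact brle_of_lt_mul cs (cs.isReflection_simple i) (by rw [← hsplitword]; omega)
    obtain ⟨x₁, x₂, rfl, hx₁, hx₂⟩ := List.sublist_append_iff.mp hsub
    rcases List.sublist_cons_iff.mp hx₂ with h2 | ⟨r, rfl, hr⟩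
    · -- x₂ = []
      rw [List.sublist_nil.mp h2, List.append_nil]
      exact (IHκ hκred x₁ hx₁).trans hstepup
    · -- x₂ = [i] (r = [])
      rw [List.sublist_nil.mp hr]
      have hprod : π (x₁ ++ [i]) = π x₁ * s i := by
        rw [cs.wordProd_append]
        congr 1
        simp [CoxeterSystem.wordProd]
      rw [hprod]
      have hIH := IHκ hκred x₁ hx₁
      rcases brle_lift cs (ℓ (π κ)) (π κ) (π x₁) rfl hIH i with hc | hc
      · exact hc.trans hstepup
      · rw [hsplitword]
        exact hc

theorem brle_subword : ∀ {u v : W}, brle cs u v →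
    ∀ ω : List B, cs.IsReduced ω → π ω = v →
    ∃ ω', ω'.Sublist ω ∧ cs.IsReduced ω' ∧ π ω' = u := by
  intro u v h
  induction h with
  | refl =>
    intro ω hred hπ
    exact ⟨ω, List.Sublist.refl _, hred, hπ⟩
  | tail _ hstep ih =>
    rename_i b c _
    obtain ⟨t, ht, rfl, hlt⟩ := hstep
    intro ω hred hπ
    have hrinv : cs.IsRightInversion (π ω) t := by
      refine ⟨ht, ?_⟩
      rw [hπ, mul_assoc, ht.mul_self, mul_one]
      omega
    obtain ⟨j, hj, hej⟩ := strong_exchange cs ω hrinv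
    rw [hπ, mul_assoc, ht.mul_self, mul_one] at hej
    obtain ⟨ρ, hρsub, hρred, hρπ⟩ := exists_reduced_sublist cs (ω.eraseIdx j).length
      (ω.eraseIdx j) le_rfl
    obtain ⟨ω', hω'sub, hω'red, hω'π⟩ := ih ρ hρred (by rw [hρπ, ← hej])
    exact ⟨ω', hω'sub.trans (hρsub.trans (List.eraseIdx_sublist _ _)), hω'red, hω'π⟩

/-- `BruhatLE` (local copy) in terms of chains. -/
theorem brle_iff_exists {u v : W} :
    brle cs u v ↔ ∃ ω : List B, cs.IsReduced ω ∧ π ω = v ∧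
      ∃ ω', ω'.Sublist ω ∧ π ω' = u := by
  constructor
  · intro h
    obtain ⟨ω, hred, hπ⟩ := cs.exists_reduced_word' v
    obtain ⟨ω', h1, h2, h3⟩ := brle_subword cs h ω hred hπ.symm
    exact ⟨ω, hred, hπ.symm, ω', h1, h3⟩
  · rintro ⟨ω, hred, hπ, ω', hsub, hπ'⟩
    rw [← hπ, ← hπ']
    exact brle_of_sublist_of_reduced cs ω hred ω' hsub

theorem brle_refl (w : W) : brle cs w w := Relation.ReflTransGen.refl

theorem brle_trans {a b c : W} (h1 : brle cs a b) (h2 : brle cs b c) : brle cs a c :=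
  Relation.ReflTransGen.trans h1 h2

theorem brle_length_le {u v : W} (h : brle cs u v) : ℓ u ≤ ℓ v := by
  obtain ⟨ω, hred, hπ⟩ := cs.exists_reduced_word' v
  obtain ⟨ω', hsub, hred', hπ'⟩ := brle_subword cs h ω hred hπ.symm
  calc ℓ u = ω'.length := by rw [← hπ']; exact hred'
    _ ≤ ω.length := hsub.length_le
    _ = ℓ v := by rw [hπ]; exact hred.symm

/-- left lifting: if `w ≤ v`, `m ≤ w`, `m ≤ s i * w`, `m ∈ {w, s i * w}`,
then `m ≤ s i * v`. -/
theorem brle_left_lift {w v m : W} (hwv : brle cs w v) (i : B)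
    (hm : m = w ∨ m = s i * w) (hmw : brle cs m w) (hmsw : brle cs m (s i * w)) :
    brle cs m (s i * v) := by
  clear hm
  rcases cs.length_simple_mul v i with hup | hdown
  · -- ℓ (s i * v) = ℓ v + 1
    have hstep : brle cs v (s i * v) := by
      have ht : cs.IsReflection (v⁻¹ * s i * v) := ⟨v⁻¹, i, by group⟩
      have h2 : s i * v = v * (v⁻¹ * s i * v) := by group
      rw [h2]
      exact brle_of_lt_mul cs ht (by rw [← h2]; omega)
    exact brle_trans cs hmw (brle_trans cs hwv hstep)
  · -- ℓ (s i * v) < ℓ v ; get a reduced word of v starting with i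
    obtain ⟨ρ, hρred, hρπ⟩ := cs.exists_reduced_word' (s i * v)
    have hρlen : ρ.length = ℓ (s i * v) := by rw [hρπ]; exact hρred.symm
    have hvword : π (i :: ρ) = v := by
      rw [cs.wordProd_cons, ← hρπ, cs.simple_mul_simple_cancel_left]
    have hvred : cs.IsReduced (i :: ρ) := by
      rw [CoxeterSystem.IsReduced, hvword, List.length_cons]
      omega
    obtain ⟨ω', hsub, hω'red, hω'π⟩ := brle_subword cs hwv (i :: ρ) hvred hvword
    rcases List.sublist_cons_iff.mp hsub with hcase | ⟨κ, rfl, hκ⟩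
    · -- w itself is below s i * v
      have : brle cs w (s i * v) := by
        rw [← hω'π, hρπ]
        exact brle_of_sublist_of_reduced cs ρ hρred ω' hcase
      exact brle_trans cs hmw this
    · -- s i * w  is below s i * v
      have hκπ : π κ = s i * w := by
        rw [cs.wordProd_cons] at hω'π
        rw [← hω'π, cs.simple_mul_simple_cancel_left]
      have : brle cs (s i * w) (s i * v) := by
        rw [← hκπ, hρπ]
        exact brle_of_sublist_of_reduced cs ρ hρred κ hκ
      exact brle_trans cs hmsw this

section Parabolic

variable (X : Set B)

theorem wordProd_mem_closure {α : List B} (hα : ∀ x ∈ α, x ∈ X) :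
    π α ∈ Subgroup.closure (cs.simple '' X) := by
  induction α with
  | nil => simp [Subgroup.one_mem]
  | cons a α ih =>
    rw [cs.wordProd_cons]
    exact Subgroup.mul_mem _
      (Subgroup.subset_closure ⟨a, hα a List.mem_cons_self, rfl⟩)
      (ih (fun x hx => hα x (List.mem_cons_of_mem a hx)))

theorem exists_word_of_mem_closure {c : W} (hc : c ∈ Subgroup.closure (cs.simple '' X)) :
    ∃ α : List B, (∀ x ∈ α, x ∈ X) ∧ π α = c := by
  induction hc using Subgroup.closure_induction with
  | mem g hg =>
    obtain ⟨x, hx, rfl⟩ := hg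
    exact ⟨[x], by simpa using hx, by simp [CoxeterSystem.wordProd]⟩
  | one => exact ⟨[], by simp, by simp⟩
  | mul g h _ _ ihg ihh =>
    obtain ⟨α, hα1, hα2⟩ := ihg
    obtain ⟨β, hβ1, hβ2⟩ := ihh
    refine ⟨α ++ β, ?_, by rw [cs.wordProd_append, hα2, hβ2]⟩
    intro x hx
    rcases List.mem_append.mp hx with h | h
    · exact hα1 x h
    · exact hβ1 x h
  | inv g _ ihg =>
    obtain ⟨α, hα1, hα2⟩ := ihg
    exact ⟨α.reverse, fun x hx => hα1 x (List.mem_reverse.mp hx),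
      by rw [cs.wordProd_reverse, hα2]⟩

theorem exists_reduced_word_of_mem_closure {c : W}
    (hc : c ∈ Subgroup.closure (cs.simple '' X)) :
    ∃ κ : List B, (∀ x ∈ κ, x ∈ X) ∧ cs.IsReduced κ ∧ π κ = c := by
  obtain ⟨α, hα1, hα2⟩ := exists_word_of_mem_closure cs X hc
  obtain ⟨κ, hκsub, hκred, hκπ⟩ := exists_reduced_sublist cs α.length α le_rfl
  exact ⟨κ, fun x hx => hα1 x (hκsub.mem hx), hκred, by rw [hκπ, hα2]⟩

/-- Additivity of lengths for a Bruhat-minimal coset representative. -/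
theorem length_minRep_mul (m : W)
    (hmin : ∀ x, (∃ b ∈ Subgroup.closure (cs.simple '' X), x = m * b) → brle cs m x) :
    ∀ n (c : W), ℓ c = n → c ∈ Subgroup.closure (cs.simple '' X) →
      ℓ (m * c) = ℓ m + ℓ c := by
  intro n
  induction n using Nat.strong_induction_on with
  | _ n IH =>
  intro c hc hcmem
  rcases Nat.eq_zero_or_pos n with rfl | hpos
  · have : c = 1 := cs.length_eq_zero_iff.mp hc
    rw [this, mul_one, cs.length_one]
    omega
  obtain ⟨κ, hκX, hκred, hκπ⟩ := exists_reduced_word_of_mem_closure cs X hcmem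
  have hκlen : κ.length = n := by rw [← hc, ← hκπ]; exact hκred.symm
  have hκne : κ ≠ [] := by
    intro hnil
    rw [hnil] at hκlen
    simp at hκlen
    omega
  obtain ⟨κ', x, rfl⟩ :=
    (List.eq_nil_or_concat κ).resolve_left hκne
  simp only [List.concat_eq_append] at hκX hκred hκπ hκlen
  have hκ'red : cs.IsReduced κ' := by
    have := CoxeterSystem.IsReduced.take hκred κ'.length
    rwa [List.take_left] at this
  set c' := π κ' with hc'
  have hc'len : ℓ c' = κ'.length := hκ'red
  have hc'mem : c' ∈ Subgroup.closure (cs.simple '' X) := by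
    apply wordProd_mem_closure cs X
    intro y hy
    exact hκX y (List.mem_append.mpr (Or.inl hy))
  have hceq : c = c' * s x := by
    rw [← hκπ, cs.wordProd_append, hc']
    congr 1
    simp [CoxeterSystem.wordProd]
  have hκ'len : κ'.length = n - 1 := by
    have := hκlen
    rw [List.length_append, List.length_singleton] at this
    omega
  have hIH : ℓ (m * c') = ℓ m + ℓ c' := by
    refine IH (n-1) (by omega) c' (by omega) hc'mem
  -- main claim: length goes up when multiplying by s x
  obtain ⟨ωm, hωmred, hωmπ⟩ := cs.exists_reduced_word' m
  have hωmlen : ωm.length = ℓ m := by rw [hωmπ]; exact hωmred.symm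
  have hbig : cs.IsReduced (ωm ++ κ') ∧ π (ωm ++ κ') = m * c' := by
    constructor
    · rw [CoxeterSystem.IsReduced, cs.wordProd_append, ← hωmπ, ← hc', hIH,
        List.length_append]
      omega
    · rw [cs.wordProd_append, ← hωmπ, ← hc']
  rcases cs.length_mul_simple (m * c') x with hup | hdown
  · rw [hceq, ← mul_assoc, hup, hIH]
    have : ℓ (c' * s x) = ℓ c' + 1 := by
      rw [← hceq, hc, hc'len, hκ'len]
      omega
    rw [← hceq, hc, hc'len, hκ'len]
    omega
  · exfalso
    have hrinv : cs.IsRightInversion (π (ωm ++ κ')) (s x) := by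
      rw [hbig.2]
      exact ⟨cs.isReflection_simple x, by omega⟩
    obtain ⟨j, hj, hej⟩ := strong_exchange cs (ωm ++ κ') hrinv
    rw [hbig.2] at hej
    rw [List.length_append] at hj
    rcases Nat.lt_or_ge j ωm.length with hjlt | hjge
    · -- erase in the ωm part: contradicts minimality of m
      rw [List.eraseIdx_append_of_lt_length hjlt] at hej
      set y := π (ωm.eraseIdx j) with hy
      have h1 : m * c' * s x = y * c' := by
        rw [hej, cs.wordProd_append, hy]
      have h2 : y = m * (c' * s x * c'⁻¹) := by
        have := congrArg (fun z => z * c'⁻¹) h1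
        simp only [mul_assoc, mul_inv_cancel, mul_one] at this
        rw [← this]
        group
      have h3 : brle cs m y := by
        apply hmin
        refine ⟨c' * s x * c'⁻¹, ?_, h2⟩
        exact Subgroup.mul_mem _ (Subgroup.mul_mem _ hc'mem
          (Subgroup.subset_closure ⟨x, hκX x (by simp), rfl⟩)) (Subgroup.inv_mem _ hc'mem)
      have h4 : ℓ y ≤ (ωm.eraseIdx j).length := by rw [hy]; exact cs.length_wordProd_le _
      have h5 := brle_length_le cs h3
      rw [List.length_eraseIdx, if_pos hjlt] at h4
      omega
    · -- erase in the κ' part: contradicts reducedness of κ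
      rw [List.eraseIdx_append_of_length_le hjge] at hej
      have h1 : m * c' * s x = m * π (κ'.eraseIdx (j - ωm.length)) := by
        rw [hej, cs.wordProd_append, ← hωmπ]
      have h2 : c = π (κ'.eraseIdx (j - ωm.length)) := by
        rw [hceq, ← mul_left_cancel_iff (a := m), ← mul_assoc, h1]
      have h3 : ℓ c ≤ (κ'.eraseIdx (j - ωm.length)).length := by
        rw [h2]; exact cs.length_wordProd_le _
      have h4 : j - ωm.length < κ'.length := by omega
      rw [List.length_eraseIdx, if_pos h4] at h3
      omega

end Parabolic

end BruhatAux

/-- Properties of `J_{σW₁}(w) = {v ∈ σW₁ : w ≤ v}`: (1) it is antitone in `w`;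
(2) for any simple reflection `s`, `J_{σW₁}(w) ⊆ s·J_{sσW₁}(w ∧ sw)` (where `w ∧ sw`
denotes the Bruhat-smaller of `w` and `sw`); (3) `J_{σW₁}(w)` is nonempty if and only
if `brmin(wW₁) ≤ brmin(σW₁)`. -/
theorem stmt_10 (cs : CoxeterSystem M W) (W₁ : Subgroup W)
    (h₁ : IsStdParabolic cs W₁) (σ w : W) :
    (∀ w' : W, BruhatLE cs w w' → Jset cs W₁ σ w' ⊆ Jset cs W₁ σ w) ∧
    (∀ (i : B) (m : W),
      (m = w ∨ m = cs.simple i * w) →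
      BruhatLE cs m w → BruhatLE cs m (cs.simple i * w) →
      Jset cs W₁ σ w ⊆ (fun x => cs.simple i * x) '' Jset cs W₁ (cs.simple i * σ) m) ∧
    (∀ mw mσ : W,
      IsBrMin cs (lCoset W₁ w) mw → IsBrMin cs (lCoset W₁ σ) mσ →
      ((Jset cs W₁ σ w).Nonempty ↔ BruhatLE cs mw mσ)) := by
  classical
  obtain ⟨X, rfl⟩ := h₁
  set W₁ : Subgroup W := Subgroup.closure (cs.simple '' X) with hW₁
  have hBL : ∀ u v : W, BruhatLE cs u v ↔ BruhatAux.brle cs u v := by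
    intro u v
    exact (BruhatAux.brle_iff_exists cs).symm
  refine ⟨?_, ?_, ?_⟩
  · -- (1) antitone in w
    intro w' hww' v hv
    obtain ⟨hv1, hv2⟩ := hv
    refine ⟨hv1, ?_⟩
    rw [hBL] at hww' hv2 ⊢
    exact BruhatAux.brle_trans cs hww' hv2
  · -- (2) lifting
    intro i m hm hmw hmsw v hv
    obtain ⟨⟨b, hb, rfl⟩, hwv⟩ := hv
    refine ⟨cs.simple i * (σ * b), ⟨⟨b, hb, by rw [mul_assoc]⟩, ?_⟩, ?_⟩
    · rw [hBL] at *
      exact BruhatAux.brle_left_lift cs hwv i hm hmw hmsw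
    · simp only [cs.simple_mul_simple_cancel_left]
  · -- (3) nonemptiness criterion
    intro mw mσ hmw hmσ
    obtain ⟨⟨bw, hbw, hmweq⟩, hmwmin⟩ := hmw
    obtain ⟨⟨bσ, hbσ, hmσeq⟩, hmσmin⟩ := hmσ
    have hminσ : ∀ x : W, (∃ b ∈ W₁, x = mσ * b) → BruhatAux.brle cs mσ x := by
      rintro x ⟨b, hbmem, rfl⟩
      rw [← hBL]
      exact hmσmin _ ⟨bσ * b, Subgroup.mul_mem _ hbσ hbmem, by rw [hmσeq, mul_assoc]⟩
    obtain ⟨ωσ, hωσred, hωσπ⟩ := cs.exists_reduced_word' mσ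
    have hωσlen : ωσ.length = cs.length mσ := by rw [hωσπ]; exact hωσred.symm
    constructor
    · -- forward direction
      rintro ⟨v, ⟨bv, hbv, rfl⟩, hwv⟩
      set v := σ * bv with hv
      have hcmem : mσ⁻¹ * v ∈ W₁ := by
        have hrw : mσ⁻¹ * v = bσ⁻¹ * bv := by rw [hv, hmσeq]; group
        rw [hrw]
        exact Subgroup.mul_mem _ (Subgroup.inv_mem _ hbσ) hbv
      obtain ⟨κ, hκX, hκred, hκπ⟩ := BruhatAux.exists_reduced_word_of_mem_closure cs X hcmem
      have hκlen : κ.length = cs.length (mσ⁻¹ * v) := by rw [← hκπ]; exact hκred.symm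
      have hadd : cs.length (mσ * (mσ⁻¹ * v)) = cs.length mσ + cs.length (mσ⁻¹ * v) :=
        BruhatAux.length_minRep_mul cs X mσ hminσ (cs.length (mσ⁻¹ * v)) _ rfl hcmem
      have hbigπ : cs.wordProd (ωσ ++ κ) = v := by
        rw [cs.wordProd_append, ← hωσπ, hκπ]
        group
      have hbigred : cs.IsReduced (ωσ ++ κ) := by
        rw [CoxeterSystem.IsReduced, hbigπ, List.length_append]
        have : mσ * (mσ⁻¹ * v) = v := by group
        rw [this] at hadd
        omega
      have hmwv : BruhatAux.brle cs mw v := by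
        have h1 : BruhatAux.brle cs mw w := by
          rw [← hBL]
          exact hmwmin w ⟨1, Subgroup.one_mem _, (mul_one w).symm⟩
        rw [hBL] at hwv
        exact BruhatAux.brle_trans cs h1 hwv
      obtain ⟨δ, hδsub, hδred, hδπ⟩ := BruhatAux.brle_subword cs hmwv (ωσ ++ κ) hbigred hbigπ
      obtain ⟨δ₁, δ₂, rfl, hδ₁, hδ₂⟩ := List.sublist_append_iff.mp hδsub
      have hδ₂mem : cs.wordProd δ₂ ∈ W₁ :=
        BruhatAux.wordProd_mem_closure cs X (fun y hy => hκX y (hδ₂.mem hy))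
      have hδ₁coset : cs.wordProd δ₁ ∈ lCoset W₁ w := by
        refine ⟨bw * (cs.wordProd δ₂)⁻¹,
          Subgroup.mul_mem _ hbw (Subgroup.inv_mem _ hδ₂mem), ?_⟩
        rw [cs.wordProd_append] at hδπ
        have : cs.wordProd δ₁ = mw * (cs.wordProd δ₂)⁻¹ := by
          rw [← hδπ]; group
        rw [this, hmweq]
        group
      have h2 : BruhatAux.brle cs mw (cs.wordProd δ₁) := by
        rw [← hBL]
        exact hmwmin _ hδ₁coset
      have h3 : BruhatAux.brle cs (cs.wordProd δ₁) mσ := by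
        rw [hωσπ]
        exact BruhatAux.brle_of_sublist_of_reduced cs ωσ hωσred δ₁ hδ₁
      rw [hBL]
      exact BruhatAux.brle_trans cs h2 h3
    · -- backward direction
      intro hle
      have hw : w = mw * bw⁻¹ := by rw [hmweq]; group
      have hcmem : (bw⁻¹ : W) ∈ W₁ := Subgroup.inv_mem _ hbw
      obtain ⟨κ, hκX, hκred, hκπ⟩ := BruhatAux.exists_reduced_word_of_mem_closure cs X hcmem
      have hadd : cs.length (mσ * bw⁻¹) = cs.length mσ + cs.length (bw⁻¹ : W) :=
        BruhatAux.length_minRep_mul cs X mσ hminσ (cs.length (bw⁻¹ : W)) _ rfl hcmem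
      have hκlen : κ.length = cs.length (bw⁻¹ : W) := by rw [← hκπ]; exact hκred.symm
      have hbigπ : cs.wordProd (ωσ ++ κ) = mσ * bw⁻¹ := by
        rw [cs.wordProd_append, ← hωσπ, hκπ]
      have hbigred : cs.IsReduced (ωσ ++ κ) := by
        rw [CoxeterSystem.IsReduced, hbigπ, List.length_append]
        omega
      rw [hBL] at hle
      obtain ⟨δ, hδsub, hδred, hδπ⟩ := BruhatAux.brle_subword cs hle ωσ hωσred hωσπ.symm
      refine ⟨mσ * bw⁻¹, ⟨⟨bσ * bw⁻¹, Subgroup.mul_mem _ hbσ hcmem, by rw [hmσeq, mul_assoc]⟩, ?_⟩⟩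
      refine ⟨ωσ ++ κ, hbigred, hbigπ, δ ++ κ, hδsub.append (List.Sublist.refl κ), ?_⟩
      rw [cs.wordProd_append, hδπ, hκπ, ← hw]
end
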